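/- arXiv:1403.0359 — 5 statements merged into one kernel-verified Lean document; each statement's English description precedes it below -/
import Mathlib

section
/- Let G be a claw-free graph and I a non-maximum independent set of G. Then I is not a dominating set, or there exists an I-augmenting path in G (an I-alternating chordless path of length at least 2 both of whose endpoints are free vertices). -/
open SimpleGraph

/-- A graph is claw-free if no vertex has three pairwise nonadjacent neighbors. -/
def ClawFree {V : Type} (G : SimpleGraph V) : Prop :=
  ¬ ∃ v a b c : V, G.Adj v a ∧ G.Adj v b ∧ G.Adj v c ∧
    a ≠ b ∧ a ≠ c ∧ b ≠ c ∧ ¬G.Adj a b ∧ ¬G.Adj a c ∧ ¬G.Adj b c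

/-- `s` is an independent set of `G`. -/
def Indep {V : Type} (G : SimpleGraph V) (s : Set V) : Prop :=
  ∀ u ∈ s, ∀ v ∈ s, ¬G.Adj u v

/-- Token sliding step between independent sets. -/
def TSStep {V : Type} (G : SimpleGraph V) (I J : Set V) : Prop :=
  Indep G I ∧ Indep G J ∧ ∃ u v : V, G.Adj u v ∧ I \ J = {u} ∧ J \ I = {v}

/-- Token jumping step between independent sets. -/
def TJStep {V : Type} (G : SimpleGraph V) (I J : Set V) : Prop :=
  Indep G I ∧ Indep G J ∧ ∃ u v : V, I \ J = {u} ∧ J \ I = {v}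

/-- Reachability under token sliding. -/
def TSReach {V : Type} (G : SimpleGraph V) : Set V → Set V → Prop :=
  Relation.ReflTransGen (TSStep G)

/-- Reachability under token jumping. -/
def TJReach {V : Type} (G : SimpleGraph V) : Set V → Set V → Prop :=
  Relation.ReflTransGen (TJStep G)

/-- The neighbors of `v` inside the set `B`. -/
def nbrsIn {V : Type} (G : SimpleGraph V) (B : Set V) (v : V) : Set V :=
  {u ∈ B | G.Adj v u}

/-- `Nset G B i` is the set `N_i(B)` of vertices outside `B` with exactly `i` neighbors in `B`. -/
def Nset {V : Type} (G : SimpleGraph V) (B : Set V) (i : ℕ) : Set V :=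
  {v | v ∉ B ∧ (nbrsIn G B v).ncard = i}

/-- The neighborhood of a set. -/
def Nbhd {V : Type} (G : SimpleGraph V) (S : Set V) : Set V :=
  {w | ∃ u ∈ S, G.Adj w u}

/-- An `I`-bad cycle: a chordless `I`-alternating cycle `c 0, c 1, …, c (2n-1), c 0`
with `c j ∈ I` exactly for even `j`. -/
def IsBadCycle {V : Type} (G : SimpleGraph V) (I : Set V) (n : ℕ) (c : ZMod (2*n) → V) : Prop :=
  2 ≤ n ∧ Function.Injective c ∧
  (∀ j : ZMod (2*n), G.Adj (c j) (c (j + 1))) ∧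
  (∀ i j : ZMod (2*n), G.Adj (c i) (c j) → j = i + 1 ∨ i = j + 1) ∧
  (∀ j : ZMod (2*n), c j ∈ I ↔ Even (ZMod.val j))

/-- The part `A = V(C) ∩ I` of the `I`-bipartition of a bad cycle. -/
def cycA {V : Type} {n : ℕ} (c : ZMod (2*n) → V) : Set V :=
  c '' {j | Even (ZMod.val j)}

/-- The part `B = V(C) \ I` of the `I`-bipartition of a bad cycle. -/
def cycB {V : Type} {n : ℕ} (c : ZMod (2*n) → V) : Set V :=
  c '' {j | ¬ Even (ZMod.val j)}

/-- The bad cycle `c` is resolvable with respect to `I`. -/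
def Resolvable {V : Type} (G : SimpleGraph V) (I : Set V) {n : ℕ} (c : ZMod (2*n) → V) : Prop :=
  ∃ I' : Set V, TSReach G I I' ∧ (G.induce (I' ∪ cycB c)).IsAcyclic

/-- A vertex is free w.r.t. `I` if it is outside `I` and has at most one neighbor in `I`. -/
def FreeVert {V : Type} (G : SimpleGraph V) (I : Set V) (v : V) : Prop :=
  v ∉ I ∧ (nbrsIn G I v).ncard ≤ 1

/-- An `I`-augmenting path `x 0, x 1, …, x (2k)`: an `I`-alternating chordless path of
length `2k ≥ 2` whose endpoints are free vertices. -/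
def IsAugPath {V : Type} (G : SimpleGraph V) (I : Set V) (k : ℕ) (x : Fin (2*k+1) → V) : Prop :=
  1 ≤ k ∧ Function.Injective x ∧
  (∀ j : Fin (2*k), G.Adj (x j.castSucc) (x j.succ)) ∧
  (∀ i j : Fin (2*k+1), G.Adj (x i) (x j) → i.val + 1 = j.val ∨ j.val + 1 = i.val) ∧
  (∀ j : Fin (2*k+1), x j ∈ I ↔ Odd j.val) ∧
  FreeVert G I (x 0) ∧ FreeVert G I (x (Fin.last (2*k)))

section BergeAux

variable {V : Type} [Fintype V] [DecidableEq V] {G : SimpleGraph V} {I S : Set V}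

lemma mem_nbrsIn' {B : Set V} {v u : V} : u ∈ nbrsIn G B v ↔ u ∈ B ∧ G.Adj v u := Iff.rfl

lemma indep_nbr_bound (hcf : ClawFree G) {J : Set V} (hJ : Indep G J)
    {v : V} (hv : v ∉ J) : (nbrsIn G J v).ncard ≤ 2 := by
  by_contra h
  push_neg at h
  rw [Set.two_lt_ncard (Set.toFinite _)] at h
  obtain ⟨a, ha, b, hb, c, hc, hab, hac, hbc⟩ := h
  exact hcf ⟨v, a, b, c, ha.2, hb.2, hc.2, hab, hac, hbc,
    hJ a ha.1 b hb.1, hJ a ha.1 c hc.1, hJ b hb.1 c hc.1⟩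

/-- Neighbors in the auxiliary bipartite graph between `S \ I` and `I \ S`. -/
def pstar (G : SimpleGraph V) (I S : Set V) (v : V) : Set V :=
  {u | (v ∈ I ∧ u ∈ nbrsIn G S v) ∨ (v ∉ I ∧ u ∈ nbrsIn G I v)}

lemma pstar_of_mem {v : V} (h : v ∈ I) : pstar G I S v = nbrsIn G S v := by
  ext u; simp [pstar, h]

lemma pstar_of_not_mem {v : V} (h : v ∉ I) : pstar G I S v = nbrsIn G I v := by
  ext u; simp [pstar, h]

/-- Alternating chordless path predicate. -/
def PathPred (G : SimpleGraph V) (I S : Set V) (n : ℕ) (x : ℕ → V) : Prop :=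
  (∀ i j, i ≤ n → j ≤ n → x i = x j → i = j) ∧
  (∀ j, j < n → G.Adj (x j) (x (j+1))) ∧
  (∀ i j, i ≤ n → j ≤ n → G.Adj (x i) (x j) → i + 1 = j ∨ j + 1 = i) ∧
  (∀ j, j ≤ n → (Even j → x j ∈ S \ I) ∧ (¬ Even j → x j ∈ I \ S)) ∧
  (nbrsIn G I (x 0)).ncard ≤ 1

lemma path_side {n : ℕ} {x : ℕ → V} (hp : PathPred G I S n x) {j : ℕ} (hj : j ≤ n) :
    x j ∈ S \ I ∨ x j ∈ I \ S := by
  have h := hp.2.2.2.1 j hj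
  by_cases hev : Even j
  · exact Or.inl (h.1 hev)
  · exact Or.inr (h.2 hev)

lemma path_nbr (hI : Indep G I) (hS : Indep G S) {n : ℕ} {x : ℕ → V}
    (hp : PathPred G I S n x) {j : ℕ} (hj : j < n) :
    x (j+1) ∈ pstar G I S (x j) ∧ x j ∈ pstar G I S (x (j+1)) := by
  have hadj := hp.2.1 j hj
  by_cases hev : Even j
  · have h1 := (hp.2.2.2.1 j (le_of_lt hj)).1 hev
    have h2 := (hp.2.2.2.1 (j+1) hj).2 (by simpa [Nat.even_add_one] using hev)
    rw [pstar_of_not_mem h1.2, pstar_of_mem h2.1]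
    exact ⟨mem_nbrsIn'.2 ⟨h2.1, hadj⟩, mem_nbrsIn'.2 ⟨h1.1, hadj.symm⟩⟩
  · have h1 := (hp.2.2.2.1 j (le_of_lt hj)).2 hev
    have h2 := (hp.2.2.2.1 (j+1) hj).1 (by simpa [Nat.even_add_one] using hev)
    rw [pstar_of_mem h1.1, pstar_of_not_mem h2.2]
    exact ⟨mem_nbrsIn'.2 ⟨h2.1, hadj⟩, mem_nbrsIn'.2 ⟨h1.1, hadj.symm⟩⟩

lemma pstar_elem (hI : Indep G I) (hS : Indep G S) {v y : V}
    (hv : v ∈ S \ I ∨ v ∈ I \ S) (hy : y ∈ pstar G I S v) :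
    G.Adj v y ∧ (v ∈ S \ I → y ∈ I \ S) ∧ (v ∈ I \ S → y ∈ S \ I) := by
  rcases hv with h | h
  · rw [pstar_of_not_mem h.2, mem_nbrsIn'] at hy
    have hyS : y ∉ S := fun hyS => hS v h.1 y hyS hy.2
    exact ⟨hy.2, fun _ => ⟨hy.1, hyS⟩, fun h' => absurd h'.1 h.2⟩
  · rw [pstar_of_mem h.1, mem_nbrsIn'] at hy
    have hyI : y ∉ I := fun hyI => hI v h.1 y hyI hy.2
    exact ⟨hy.2, fun h' => absurd h.1 h'.2, fun _ => ⟨hy.1, hyI⟩⟩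

lemma pstar_bound (hcf : ClawFree G) (hI : Indep G I) (hS : Indep G S) {v : V}
    (hv : v ∈ S \ I ∨ v ∈ I \ S) : (pstar G I S v).ncard ≤ 2 := by
  rcases hv with h | h
  · rw [pstar_of_not_mem h.2]; exact indep_nbr_bound hcf hI h.2
  · rw [pstar_of_mem h.1]; exact indep_nbr_bound hcf hS h.2

lemma path_sat (hcf : ClawFree G) (hI : Indep G I) (hS : Indep G S) {n : ℕ} {x : ℕ → V}
    (hp : PathPred G I S n x) {i : ℕ} (h0 : 0 < i) (hin : i < n) {v : V}
    (hv : v ∈ pstar G I S (x i)) : v = x (i-1) ∨ v = x (i+1) := by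
  by_contra hcon
  push_neg at hcon
  have ha : x (i+1) ∈ pstar G I S (x i) := (path_nbr hI hS hp hin).1
  have hb : x (i-1) ∈ pstar G I S (x i) := by
    have h := (path_nbr hI hS hp (show i-1 < n by omega)).2
    rwa [show i-1+1 = i by omega] at h
  have hne : x (i-1) ≠ x (i+1) := by
    intro h
    have := hp.1 (i-1) (i+1) (by omega) (by omega) h
    omega
  have h3 : 2 < (pstar G I S (x i)).ncard :=
    (Set.two_lt_ncard (Set.toFinite _)).2
      ⟨x (i-1), hb, x (i+1), ha, v, hv, hne, (Ne.symm hcon.1), (Ne.symm hcon.2)⟩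
  have h4 := pstar_bound hcf hI hS (path_side hp (le_of_lt hin))
  omega

lemma path_start (hI : Indep G I) (hS : Indep G S) {n : ℕ} {x : ℕ → V}
    (hp : PathPred G I S n x) (hn : 1 ≤ n) {v : V}
    (hv : v ∈ pstar G I S (x 0)) : v = x 1 := by
  have h0 : x 0 ∈ S \ I := (hp.2.2.2.1 0 (by omega)).1 (Even.zero)
  have h1 : x 1 ∈ pstar G I S (x 0) := (path_nbr hI hS hp (show 0 < n by omega)).1
  rw [pstar_of_not_mem h0.2] at hv h1
  by_contra hne
  have : 1 < (nbrsIn G I (x 0)).ncard :=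
    (Set.one_lt_ncard (Set.toFinite _)).2 ⟨v, hv, x 1, h1, hne⟩
  have := hp.2.2.2.2
  omega

end BergeAux

section BergeAux2
set_option linter.unusedSectionVars false
set_option linter.unusedVariables false

variable {V : Type} [Fintype V] [DecidableEq V] {G : SimpleGraph V} {I S : Set V}

lemma path_extend (hcf : ClawFree G) (hI : Indep G I) (hS : Indep G S)
    {n : ℕ} {x : ℕ → V} (hn : 1 ≤ n) (hp : PathPred G I S n x) {y : V}
    (hadj : G.Adj (x n) y)
    (hsideE : Even (n+1) → y ∈ S \ I) (hsideO : ¬ Even (n+1) → y ∈ I \ S)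
    (hnew : ∀ i, i ≤ n → y ≠ x i) :
    PathPred G I S (n+1) (Function.update x (n+1) y) := by
  obtain ⟨hinj, hedge, hchord, hside, hdeg⟩ := hp
  have hxe : ∀ i, i ≤ n → Function.update x (n+1) y i = x i := fun i hi =>
    Function.update_of_ne (by omega) _ _
  have hxn : Function.update x (n+1) y (n+1) = y := Function.update_self _ _ _
  have chord_aux : ∀ i, i ≤ n → G.Adj (x i) y → i = n := by
    intro i hi hyadj
    by_contra hne
    have hilt : i < n := lt_of_le_of_ne hi hne
    by_cases hev : Even n
    · have hy : y ∈ I \ S := hsideO (by simpa [Nat.even_add_one] using hev)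
      have hevi : Even i := by
        by_contra hoi
        have hxi := (hside i hi).2 hoi
        exact hI (x i) hxi.1 y hy.1 hyadj
      have hxi := (hside i hi).1 hevi
      have hile : i + 2 ≤ n := by
        rw [Nat.even_iff] at hev hevi; omega
      rcases Nat.eq_zero_or_pos i with h0 | h0
      · subst h0
        have m1 : x 1 ∈ nbrsIn G I (x 0) :=
          mem_nbrsIn'.2 ⟨((hside 1 (by omega)).2 (by simp)).1, hedge 0 (by omega)⟩
        have m2 : y ∈ nbrsIn G I (x 0) := mem_nbrsIn'.2 ⟨hy.1, hyadj⟩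
        have h1 : 1 < (nbrsIn G I (x 0)).ncard :=
          (Set.one_lt_ncard (Set.toFinite _)).2 ⟨y, m2, x 1, m1, (hnew 1 (by omega))⟩
        omega
      · have hoddm : ¬ Even (i-1) := by rw [Nat.even_iff] at hevi ⊢; omega
        have hoddp : ¬ Even (i+1) := by rw [Nat.even_iff] at hevi ⊢; omega
        have madj : G.Adj (x i) (x (i-1)) := by
          have h := hedge (i-1) (by omega)
          rw [show i-1+1 = i by omega] at h
          exact h.symm
        have m1 : x (i-1) ∈ nbrsIn G I (x i) :=
          mem_nbrsIn'.2 ⟨((hside (i-1) (by omega)).2 hoddm).1, madj⟩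
        have m2 : x (i+1) ∈ nbrsIn G I (x i) :=
          mem_nbrsIn'.2 ⟨((hside (i+1) (by omega)).2 hoddp).1, hedge i hilt⟩
        have m3 : y ∈ nbrsIn G I (x i) := mem_nbrsIn'.2 ⟨hy.1, hyadj⟩
        have hne12 : x (i-1) ≠ x (i+1) := by
          intro h
          have := hinj (i-1) (i+1) (by omega) (by omega) h
          omega
        have h3 : 2 < (nbrsIn G I (x i)).ncard :=
          (Set.two_lt_ncard (Set.toFinite _)).2
            ⟨x (i-1), m1, x (i+1), m2, y, m3, hne12,
              Ne.symm (hnew (i-1) (by omega)), Ne.symm (hnew (i+1) (by omega))⟩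
        have h4 := indep_nbr_bound hcf hI hxi.2
        omega
    · have hy : y ∈ S \ I := hsideE (by simpa [Nat.even_add_one] using hev)
      have hoi : ¬ Even i := by
        intro hevi
        have hxi := (hside i hi).1 hevi
        exact hS (x i) hxi.1 y hy.1 hyadj
      have hxi := (hside i hi).2 hoi
      have hile : i + 2 ≤ n := by
        rw [Nat.even_iff] at hev hoi; omega
      have h0 : 0 < i := by
        rcases Nat.eq_zero_or_pos i with h0 | h0
        · exact absurd (h0 ▸ Even.zero) hoi
        · exact h0
      have hevm : Even (i-1) := by rw [Nat.even_iff] at hoi ⊢; omega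
      have hevp : Even (i+1) := by rw [Nat.even_iff] at hoi ⊢; omega
      have madj : G.Adj (x i) (x (i-1)) := by
        have h := hedge (i-1) (by omega)
        rw [show i-1+1 = i by omega] at h
        exact h.symm
      have m1 : x (i-1) ∈ nbrsIn G S (x i) :=
        mem_nbrsIn'.2 ⟨((hside (i-1) (by omega)).1 hevm).1, madj⟩
      have m2 : x (i+1) ∈ nbrsIn G S (x i) :=
        mem_nbrsIn'.2 ⟨((hside (i+1) (by omega)).1 hevp).1, hedge i hilt⟩
      have m3 : y ∈ nbrsIn G S (x i) := mem_nbrsIn'.2 ⟨hy.1, hyadj⟩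
      have hne12 : x (i-1) ≠ x (i+1) := by
        intro h
        have := hinj (i-1) (i+1) (by omega) (by omega) h
        omega
      have h3 : 2 < (nbrsIn G S (x i)).ncard :=
        (Set.two_lt_ncard (Set.toFinite _)).2
          ⟨x (i-1), m1, x (i+1), m2, y, m3, hne12,
            Ne.symm (hnew (i-1) (by omega)), Ne.symm (hnew (i+1) (by omega))⟩
      have h4 := indep_nbr_bound hcf hS hxi.2
      omega
  refine ⟨?_, ?_, ?_, ?_, ?_⟩
  · intro i j hi hj heq
    by_cases hi' : i ≤ n <;> by_cases hj' : j ≤ n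
    · rw [hxe i hi', hxe j hj'] at heq
      exact hinj i j hi' hj' heq
    · have hj2 : j = n+1 := by omega
      rw [hxe i hi', hj2, hxn] at heq
      exact absurd heq.symm (hnew i hi')
    · have hi2 : i = n+1 := by omega
      rw [hxe j hj', hi2, hxn] at heq
      exact absurd heq (hnew j hj')
    · omega
  · intro j hj
    rcases Nat.lt_or_ge j n with h | h
    · rw [hxe j (by omega), hxe (j+1) (by omega)]
      exact hedge j h
    · have hjn : j = n := by omega
      subst hjn
      rw [hxe j le_rfl, hxn]
      exact hadj
  · intro i j hi hj hadj'
    by_cases hi' : i ≤ n <;> by_cases hj' : j ≤ n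
    · rw [hxe i hi', hxe j hj'] at hadj'
      exact hchord i j hi' hj' hadj'
    · have hj2 : j = n+1 := by omega
      rw [hxe i hi', hj2, hxn] at hadj'
      have := chord_aux i hi' hadj'
      omega
    · have hi2 : i = n+1 := by omega
      rw [hxe j hj', hi2, hxn] at hadj'
      have := chord_aux j hj' hadj'.symm
      omega
    · have hi2 : i = n+1 := by omega
      have hj2 : j = n+1 := by omega
      rw [hi2, hj2] at hadj'
      exact absurd hadj' (G.loopless.irrefl _)
  · intro j hj
    by_cases h : j ≤ n
    · rw [hxe j h]
      exact hside j h
    · have hj2 : j = n+1 := by omega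
      subst hj2
      rw [hxn]
      exact ⟨hsideE, hsideO⟩
  · rw [hxe 0 (by omega)]
    exact hdeg

lemma path_card {n : ℕ} {x : ℕ → V} (hp : PathPred G I S n x) :
    n + 1 ≤ Fintype.card V := by
  classical
  have h := Finset.card_le_card_of_injOn (s := Finset.range (n+1))
    (t := (Finset.univ : Finset V)) x (fun a _ => Finset.mem_univ (x a)) ?_
  · simpa using h
  · intro a ha b hb hab
    simp only [Finset.coe_range, Set.mem_Iio] at ha hb
    exact hp.1 a b (by omega) (by omega) hab

end BergeAux2

section BergeAux3
set_option linter.unusedSectionVars false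
set_option linter.unusedVariables false

variable {V : Type} [Fintype V] [DecidableEq V] {G : SimpleGraph V} {I S : Set V}

lemma exists_max_path (hcf : ClawFree G) (hI : Indep G I) (hS : Indep G S)
    (hdom : ∀ v, v ∉ I → ∃ u ∈ I, G.Adj v u)
    {d : V} (hd : d ∈ S \ I) (hdeg : (nbrsIn G I d).ncard ≤ 1) :
    ∃ n x, 1 ≤ n ∧ PathPred G I S n x ∧ x 0 = d ∧
      pstar G I S (x n) = {x (n-1)} := by
  classical
  obtain ⟨e, heI, headj⟩ := hdom d hd.2
  have heS : e ∉ S := fun heS => hS d hd.1 e heS headj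
  set x0 : ℕ → V := fun m => if m = 0 then d else e with hx0
  have hv0 : x0 0 = d := by simp [hx0]
  have hv1 : x0 1 = e := by simp [hx0]
  have hde : d ≠ e := fun h => hd.2 (h ▸ heI)
  have hP1 : PathPred G I S 1 x0 := by
    refine ⟨?_, ?_, ?_, ?_, ?_⟩
    · intro i j hi hj heq
      have hi' : i = 0 ∨ i = 1 := by omega
      have hj' : j = 0 ∨ j = 1 := by omega
      rcases hi' with rfl | rfl <;> rcases hj' with rfl | rfl <;> simp_all
    · intro j hj
      have hj' : j = 0 := by omega
      subst hj'
      show G.Adj (x0 0) (x0 1)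
      rw [hv0, hv1]; exact headj
    · intro i j hi hj ha
      have hi' : i = 0 ∨ i = 1 := by omega
      have hj' : j = 0 ∨ j = 1 := by omega
      rcases hi' with rfl | rfl <;> rcases hj' with rfl | rfl
      · exact absurd ha (G.loopless.irrefl _)
      · left; rfl
      · right; rfl
      · exact absurd ha (G.loopless.irrefl _)
    · intro j hj
      have hj' : j = 0 ∨ j = 1 := by omega
      rcases hj' with rfl | rfl
      · exact ⟨fun _ => by rw [hv0]; exact hd, fun h => absurd Even.zero h⟩
      · exact ⟨fun h => absurd h (by simp), fun _ => by rw [hv1]; exact ⟨heI, heS⟩⟩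
    · rw [hv0]; exact hdeg
  set B := Fintype.card V with hB
  set P : ℕ → Prop := fun n => ∃ x, PathPred G I S n x ∧ x 0 = d with hPdef
  have hP1' : P 1 := ⟨x0, hP1, hv0⟩
  have hbd : ∀ n, P n → n + 1 ≤ B := by
    rintro n ⟨x, hx, -⟩
    exact path_card hx
  have h1B : 1 ≤ B := by have := hbd 1 hP1'; omega
  set N := Nat.findGreatest P B with hN
  have hPN : P N := Nat.findGreatest_spec (m := 1) h1B hP1'
  have hN1 : 1 ≤ N := Nat.le_findGreatest h1B hP1'
  obtain ⟨x, hp, hx0d⟩ := hPN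
  have hNB : N + 1 ≤ B := hbd N ⟨x, hp, hx0d⟩
  have hnext : ¬ P (N+1) := Nat.findGreatest_is_greatest (by omega) hNB
  refine ⟨N, x, hN1, hp, hx0d, ?_⟩
  have hsideN := path_side hp (le_refl N)
  have hmem : x (N-1) ∈ pstar G I S (x N) := by
    have h := (path_nbr hI hS hp (show N-1 < N by omega)).2
    rwa [show N-1+1 = N by omega] at h
  refine Set.eq_of_subset_of_subset ?_ (Set.singleton_subset_iff.2 hmem)
  intro y hy
  have helem := pstar_elem hI hS hsideN hy
  by_cases hyold : ∃ i, i ≤ N ∧ y = x i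
  · obtain ⟨i, hiN, rfl⟩ := hyold
    have hch := hp.2.2.1 N i le_rfl hiN helem.1
    have hiN' : i = N - 1 := by
      rcases hch with h | h
      · exfalso; omega
      · have : i ≠ N := fun h' => G.loopless.irrefl _ (h' ▸ helem.1)
        omega
    rw [hiN']
    exact Set.mem_singleton _
  · push_neg at hyold
    exfalso
    apply hnext
    refine ⟨Function.update x (N+1) y,
      path_extend hcf hI hS hN1 hp helem.1 ?_ ?_ (fun i hi h => hyold i hi h), ?_⟩
    · intro hev
      have hoN : ¬ Even N := by rw [Nat.even_iff] at hev ⊢; omega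
      exact helem.2.2 ((hp.2.2.2.1 N le_rfl).2 hoN)
    · intro hod
      have heN : Even N := by rw [Nat.even_iff] at hod ⊢; omega
      exact helem.2.1 ((hp.2.2.2.1 N le_rfl).1 heN)
    · rw [Function.update_of_ne (by omega)]
      exact hx0d

end BergeAux3

section BergeAux4
set_option linter.unusedSectionVars false
set_option linter.unusedVariables false

variable {V : Type} [Fintype V] [DecidableEq V] {G : SimpleGraph V} {I S : Set V}

lemma term_unique (hcf : ClawFree G) (hI : Indep G I) (hS : Indep G S)
    {n m : ℕ} {x y : ℕ → V} (hn : 1 ≤ n) (hnm : n ≤ m)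
    (hpx : PathPred G I S n x) (hpy : PathPred G I S m y)
    (hterm : (pstar G I S (x n)).ncard ≤ 1) (hend : x n = y m) :
    n = m ∧ x 0 = y 0 := by
  have hm1 : 1 ≤ m := le_trans hn hnm
  have key : ∀ i, i ≤ n → x (n - i) = y (m - i) := by
    intro i
    induction i using Nat.strong_induction_on with
    | _ i ih =>
      intro hi
      rcases Nat.lt_or_ge i 1 with h1 | h1
      · have : i = 0 := by omega
        subst this
        simpa using hend
      rcases Nat.lt_or_ge i 2 with h2 | h2
      · have hi1 : i = 1 := by omega
        subst hi1
        have hx1 : x (n-1) ∈ pstar G I S (x n) := by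
          have h := (path_nbr hI hS hpx (show n-1 < n by omega)).2
          rwa [show n-1+1 = n by omega] at h
        have hy1 : y (m-1) ∈ pstar G I S (x n) := by
          have h := (path_nbr hI hS hpy (show m-1 < m by omega)).2
          rw [show m-1+1 = m by omega, ← hend] at h
          exact h
        by_contra hne
        have : 1 < (pstar G I S (x n)).ncard :=
          (Set.one_lt_ncard (Set.toFinite _)).2 ⟨x (n-1), hx1, y (m-1), hy1, hne⟩
        omega
      · -- i ≥ 2
        have hprev : x (n-(i-1)) = y (m-(i-1)) := ih (i-1) (by omega) (by omega)
        have hprev2 : x (n-(i-2)) = y (m-(i-2)) := ih (i-2) (by omega) (by omega)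
        -- z := x (n-i+1) internal in x
        have hz0 : 0 < n-(i-1) := by omega
        have hzn : n-(i-1) < n := by omega
        have hmemx : x (n-i) ∈ pstar G I S (x (n-(i-1))) := by
          have h := (path_nbr hI hS hpx (show n-i < n by omega)).2
          rwa [show n-i+1 = n-(i-1) by omega] at h
        have hmemy : y (m-i) ∈ pstar G I S (x (n-(i-1))) := by
          have h := (path_nbr hI hS hpy (show m-i < m by omega)).2
          rw [show m-i+1 = m-(i-1) by omega, ← hprev] at h
          exact h
        have hsat := path_sat hcf hI hS hpx hz0 hzn hmemy
        rcases hsat with h | h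
        · rw [show n-(i-1)-1 = n-i by omega] at h
          exact h.symm
        · exfalso
          rw [show n-(i-1)+1 = n-(i-2) by omega, hprev2] at h
          have := hpy.1 (m-i) (m-(i-2)) (by omega) (by omega) h
          omega
  have h0 := key n le_rfl
  by_cases hnm' : n = m
  · subst hnm'
    exact ⟨rfl, by simpa using h0⟩
  · exfalso
    have hlt : n < m := lt_of_le_of_ne hnm hnm'
    have h1 := key (n-1) (by omega)
    rw [show n-(n-1) = 1 by omega] at h1
    have hx0side : x 0 ∈ S \ I := (hpx.2.2.2.1 0 (by omega)).1 Even.zero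
    have hx1 : x 1 ∈ pstar G I S (x 0) := (path_nbr hI hS hpx (show 0 < n by omega)).1
    have hy' : y (m-n-1) ∈ pstar G I S (x 0) := by
      have h := (path_nbr hI hS hpy (show m-n-1 < m by omega)).2
      rw [show m-n-1+1 = m-n by omega] at h
      rw [show n - n = 0 by omega] at h0
      rwa [← h0] at h
    rw [pstar_of_not_mem hx0side.2] at hx1 hy'
    have hne : y (m-n-1) ≠ x 1 := by
      intro h
      rw [h1] at h
      have := hpy.1 (m-n-1) (m-(n-1)) (by omega) (by omega) h
      omega
    have : 1 < (nbrsIn G I (x 0)).ncard :=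
      (Set.one_lt_ncard (Set.toFinite _)).2 ⟨y (m-n-1), hy', x 1, hx1, hne⟩
    have := hpx.2.2.2.2
    omega

lemma aug_of_even {n : ℕ} {x : ℕ → V} (hn1 : 1 ≤ n) (hev : Even n)
    (hp : PathPred G I S n x) (hterm : (pstar G I S (x n)).ncard ≤ 1) :
    ∃ (k : ℕ) (x' : Fin (2*k+1) → V), IsAugPath G I k x' := by
  obtain ⟨k, hk⟩ := hev
  have h2k : 2 * k = n := by omega
  have hk1 : 1 ≤ k := by omega
  refine ⟨k, fun j => x j.val, hk1, ?_, ?_, ?_, ?_, ?_, ?_⟩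
  · intro a b hab
    have ha := a.isLt
    have hb := b.isLt
    exact Fin.ext (hp.1 a.val b.val (by omega) (by omega) hab)
  · intro j
    have hj := j.isLt
    show G.Adj (x (j.castSucc).val) (x (j.succ).val)
    simp only [Fin.coe_castSucc, Fin.val_succ]
    exact hp.2.1 j.val (by omega)
  · intro i j hadj
    have hi := i.isLt
    have hj := j.isLt
    exact hp.2.2.1 i.val j.val (by omega) (by omega) hadj
  · intro j
    have hj := j.isLt
    have hside := hp.2.2.2.1 j.val (by omega)
    constructor
    · intro hmem
      by_cases hev' : Even j.val
      · exact absurd hmem (hside.1 hev').2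
      · rw [Nat.odd_iff]; rw [Nat.even_iff] at hev'; omega
    · intro hodd
      have hnev : ¬ Even j.val := by
        rw [Nat.even_iff]; rw [Nat.odd_iff] at hodd; omega
      exact (hside.2 hnev).1
  · show FreeVert G I (x ((0 : Fin (2*k+1)).val))
    simp only [Fin.val_zero]
    exact ⟨((hp.2.2.2.1 0 (by omega)).1 Even.zero).2, hp.2.2.2.2⟩
  · show FreeVert G I (x ((Fin.last (2*k)).val))
    simp only [Fin.val_last]
    rw [h2k]
    have hside : x n ∈ S \ I := (hp.2.2.2.1 n le_rfl).1 (by rw [Nat.even_iff]; omega)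
    refine ⟨hside.2, ?_⟩
    rw [← pstar_of_not_mem hside.2]
    exact hterm

end BergeAux4


/-- A non-maximum independent set in a claw-free graph is not dominating or admits an
augmenting path. -/
theorem stmt_13 {V : Type} [Fintype V] [DecidableEq V] (G : SimpleGraph V)
    (hcf : ClawFree G) (I : Set V) (hI : Indep G I)
    (hnonmax : ∃ S : Set V, Indep G S ∧ I.ncard < S.ncard) :
    (∃ v : V, v ∉ I ∧ ∀ u ∈ I, ¬ G.Adj v u) ∨
    (∃ (k : ℕ) (x : Fin (2*k+1) → V), IsAugPath G I k x) := by
  classical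
  by_cases hdome : ∃ v : V, v ∉ I ∧ ∀ u ∈ I, ¬ G.Adj v u
  · exact Or.inl hdome
  by_cases haug : ∃ (k : ℕ) (x : Fin (2*k+1) → V), IsAugPath G I k x
  · exact Or.inr haug
  exfalso
  push_neg at hdome
  obtain ⟨S, hS, hcard⟩ := hnonmax
  set Df : Finset V := Finset.univ.filter (fun v => v ∈ S \ I) with hDf
  set Ef : Finset V := Finset.univ.filter (fun v => v ∈ I \ S) with hEf
  have hmemD : ∀ v : V, v ∈ Df ↔ v ∈ S \ I := by intro v; simp [hDf]
  have hmemE : ∀ v : V, v ∈ Ef ↔ v ∈ I \ S := by intro v; simp [hEf]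
  have hDfc : Df.card = (S \ I).ncard := by
    rw [← Set.ncard_coe_finset]; congr 1; ext v; simp [hDf]
  have hEfc : Ef.card = (I \ S).ncard := by
    rw [← Set.ncard_coe_finset]; congr 1; ext v; simp [hEf]
  have hDE : Ef.card < Df.card := by
    have h1 := Set.ncard_inter_add_ncard_diff_eq_ncard S I (Set.toFinite _)
    have h2 := Set.ncard_inter_add_ncard_diff_eq_ncard I S (Set.toFinite _)
    rw [Set.inter_comm I S] at h2
    omega
  have hnbD : ∀ d ∈ Df, nbrsIn G I d = ↑(Ef.filter (fun e => G.Adj d e)) := by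
    intro d hd
    rw [hmemD] at hd
    ext u
    simp only [Finset.coe_filter, Set.mem_setOf_eq, hmemE, mem_nbrsIn']
    constructor
    · rintro ⟨huI, hadj⟩
      exact ⟨⟨huI, fun huS => hS d hd.1 u huS hadj⟩, hadj⟩
    · rintro ⟨⟨huI, -⟩, hadj⟩
      exact ⟨huI, hadj⟩
  have hnbE : ∀ e ∈ Ef, nbrsIn G S e = ↑(Df.filter (fun u => G.Adj e u)) := by
    intro e he
    rw [hmemE] at he
    ext u
    simp only [Finset.coe_filter, Set.mem_setOf_eq, hmemD, mem_nbrsIn']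
    constructor
    · rintro ⟨huS, hadj⟩
      exact ⟨⟨huS, fun huI => hI e he.1 u huI hadj⟩, hadj⟩
    · rintro ⟨⟨huS, -⟩, hadj⟩
      exact ⟨huS, hadj⟩
  have hDsum : ∀ d ∈ Df, (nbrsIn G I d).ncard = (Ef.filter (fun e => G.Adj d e)).card :=
    fun d hd => by rw [hnbD d hd, Set.ncard_coe_finset]
  have hEsum : ∀ e ∈ Ef, (nbrsIn G S e).ncard = (Df.filter (fun u => G.Adj e u)).card :=
    fun e he => by rw [hnbE e he, Set.ncard_coe_finset]
  have hsum : ∑ d ∈ Df, (nbrsIn G I d).ncard = ∑ e ∈ Ef, (nbrsIn G S e).ncard := by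
    calc ∑ d ∈ Df, (nbrsIn G I d).ncard
        = ∑ d ∈ Df, ∑ e ∈ Ef, if G.Adj d e then 1 else 0 := by
          refine Finset.sum_congr rfl fun d hd => ?_
          rw [hDsum d hd, Finset.card_filter]
      _ = ∑ e ∈ Ef, ∑ d ∈ Df, if G.Adj d e then 1 else 0 := Finset.sum_comm
      _ = ∑ e ∈ Ef, (nbrsIn G S e).ncard := by
          refine Finset.sum_congr rfl fun e he => ?_
          rw [hEsum e he, Finset.card_filter]
          refine Finset.sum_congr rfl fun d hd => ?_
          exact if_congr (G.adj_comm d e) rfl rfl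
  set D1 := Df.filter (fun d => (nbrsIn G I d).ncard = 1) with hD1
  set E1 := Ef.filter (fun e => (nbrsIn G S e).ncard = 1) with hE1
  have hdbound : ∀ d ∈ Df, 1 ≤ (nbrsIn G I d).ncard ∧ (nbrsIn G I d).ncard ≤ 2 := by
    intro d hd
    rw [hmemD] at hd
    constructor
    · obtain ⟨u, huI, hadj⟩ := hdome d hd.2
      have hne : (nbrsIn G I d).Nonempty := ⟨u, mem_nbrsIn'.2 ⟨huI, hadj⟩⟩
      have := (Set.ncard_pos (Set.toFinite _)).2 hne
      omega
    · exact indep_nbr_bound hcf hI hd.2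
  have hebound : ∀ e ∈ Ef, (nbrsIn G S e).ncard ≤ 2 := by
    intro e he; rw [hmemE] at he; exact indep_nbr_bound hcf hS he.2
  have hlow : 2 * Df.card ≤ (∑ d ∈ Df, (nbrsIn G I d).ncard) + D1.card := by
    have hc1 : D1.card = ∑ d ∈ Df, (if (nbrsIn G I d).ncard = 1 then 1 else 0) := by
      rw [hD1]; exact Finset.card_filter _ _
    rw [hc1, ← Finset.sum_add_distrib]
    calc 2 * Df.card = ∑ _d ∈ Df, 2 := by rw [Finset.sum_const, smul_eq_mul, mul_comm]
      _ ≤ _ := Finset.sum_le_sum fun d hd => by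
          have := hdbound d hd
          split <;> omega
  have hhigh : (∑ e ∈ Ef, (nbrsIn G S e).ncard) + E1.card ≤ 2 * Ef.card := by
    have hc1 : E1.card = ∑ e ∈ Ef, (if (nbrsIn G S e).ncard = 1 then 1 else 0) := by
      rw [hE1]; exact Finset.card_filter _ _
    rw [hc1, ← Finset.sum_add_distrib]
    calc ∑ e ∈ Ef, ((nbrsIn G S e).ncard + if (nbrsIn G S e).ncard = 1 then 1 else 0)
        ≤ ∑ _e ∈ Ef, 2 := Finset.sum_le_sum fun e he => by
            have := hebound e he
            split <;> omega
      _ = 2 * Ef.card := by rw [Finset.sum_const, smul_eq_mul, mul_comm]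
  have hkey : ∀ d ∈ D1, ∃ e, e ∈ E1 ∧ ∃ n x, 1 ≤ n ∧ PathPred G I S n x ∧ x 0 = d ∧
      x n = e ∧ (pstar G I S e).ncard ≤ 1 := by
    intro d hd
    rw [hD1, Finset.mem_filter] at hd
    obtain ⟨hdD, hd1⟩ := hd
    rw [hmemD] at hdD
    obtain ⟨n, x, hn1, hp, hx0, hpst⟩ := exists_max_path hcf hI hS hdome hdD (le_of_eq hd1)
    have hterm : (pstar G I S (x n)).ncard ≤ 1 := by rw [hpst]; simp
    by_cases hev : Even n
    · exact absurd (aug_of_even hn1 hev hp hterm) haug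
    · refine ⟨x n, ?_, n, x, hn1, hp, hx0, rfl, hterm⟩
      have hsde := (hp.2.2.2.1 n le_rfl).2 hev
      have hnc : (nbrsIn G S (x n)).ncard = 1 := by
        rw [← pstar_of_mem hsde.1, hpst]; simp
      rw [hE1, Finset.mem_filter, hmemE]
      exact ⟨hsde, hnc⟩
  have hD1E1 : D1.card ≤ E1.card := by
    set F : V → V := fun d => if h : d ∈ D1 then Classical.choose (hkey d h) else d with hF
    apply Finset.card_le_card_of_injOn F
    · intro d hd
      simp only [hF, dif_pos (Finset.mem_coe.1 hd), Finset.mem_coe]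
      exact (Classical.choose_spec (hkey d hd)).1
    · intro a ha b hb hab
      simp only [Finset.mem_coe] at ha hb
      simp only [hF, dif_pos ha, dif_pos hb] at hab
      obtain ⟨-, na, xa, hna, hpa, hxa0, hxae, hta⟩ := Classical.choose_spec (hkey a ha)
      obtain ⟨-, nb, xb, hnb, hpb, hxb0, hxbe, htb⟩ := Classical.choose_spec (hkey b hb)
      have hend : xa na = xb nb := by rw [hxae, hxbe, hab]
      rcases le_total na nb with h | h
      · have hu := term_unique hcf hI hS hna h hpa hpb (by rw [hxae]; exact hta) hend
        rw [← hxa0, ← hxb0, hu.2]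
      · have hu := term_unique hcf hI hS hnb h hpb hpa (by rw [hxbe]; exact htb) hend.symm
        rw [← hxa0, ← hxb0, ← hu.2]
  omega
end

section
/- Let G be a claw-free graph, I an independent set, and C an I-bad cycle with I-bipartition [A, B]. Then: (a) no vertex of G has 3 or more neighbors in B; (b) there is no edge between a vertex with exactly 2 neighbors in B and a vertex with 0 neighbors in B; (c) a vertex v satisfies v ∈ N(B) \ A if and only if v ∈ N(A) \ B; (d) N(B) ∩ I = A. -/
open SimpleGraph

/-- Neighborhood structure of an `I`-bad cycle with `I`-bipartition `[A,B]`. -/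
theorem stmt_14 {V : Type} [Fintype V] [DecidableEq V] (G : SimpleGraph V)
    (hcf : ClawFree G) (I : Set V) (hI : Indep G I)
    (n : ℕ) (c : ZMod (2*n) → V) (hc : IsBadCycle G I n c) :
    (∀ v : V, (nbrsIn G (cycB c) v).ncard ≤ 2) ∧
    (∀ u v : V, G.Adj u v → u ∈ Nset G (cycB c) 2 → v ∉ Nset G (cycB c) 0) ∧
    (∀ v : V, v ∈ Nbhd G (cycB c) \ cycA c ↔ v ∈ Nbhd G (cycA c) \ cycB c) ∧
    (Nbhd G (cycB c) ∩ I = cycA c) := by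
  obtain ⟨hn, hinj, hadj, hchord, hIc⟩ := hc
  haveI : NeZero (2*n) := ⟨by omega⟩
  haveI : Fact (1 < 2*n) := ⟨by omega⟩
  -- parity flips along the cycle
  have hpar : ∀ j : ZMod (2*n), Even ((j+1).val) ↔ ¬ Even j.val := by
    intro j
    have h1 : (j+1).val = (j.val + 1) % (2*n) := by
      rw [ZMod.val_add, ZMod.val_one]
    have hlt := ZMod.val_lt j
    rw [h1]
    rcases lt_or_ge (j.val + 1) (2*n) with h | h
    · rw [Nat.mod_eq_of_lt h, Nat.even_add_one]
    · have hj : j.val + 1 = 2*n := by omega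
      rw [hj, Nat.mod_self]
      simp only [Nat.even_iff, true_iff]
      omega
  have hne0 : ∀ k : ℕ, 0 < k → k < 2*n → ((k : ZMod (2*n)) ≠ 0) := by
    intro k hk hk2 h
    rw [ZMod.natCast_eq_zero_iff] at h
    exact absurd (Nat.le_of_dvd hk h) (by omega)
  have hadj' : ∀ j : ZMod (2*n), G.Adj (c (j - 1)) (c j) := by
    intro j; have := hadj (j-1); rwa [sub_add_cancel] at this
  have hAmem : ∀ j, c j ∈ cycA c ↔ Even j.val := by
    intro j; constructor
    · rintro ⟨i, hi, hij⟩; rwa [hinj hij] at hi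
    · intro h; exact ⟨j, h, rfl⟩
  have hBmem : ∀ j, c j ∈ cycB c ↔ ¬ Even j.val := by
    intro j; constructor
    · rintro ⟨i, hi, hij⟩; rwa [hinj hij] at hi
    · intro h; exact ⟨j, h, rfl⟩
  have hsame : ∀ i j : ZMod (2*n), (Even i.val ↔ Even j.val) → ¬ G.Adj (c i) (c j) := by
    intro i j hp hadj2
    rcases hchord i j hadj2 with h | h
    · have := hpar i; rw [← h] at this; tauto
    · have := hpar j; rw [← h] at this; tauto
  have hBind : ∀ b1 ∈ cycB c, ∀ b2 ∈ cycB c, ¬ G.Adj b1 b2 := by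
    rintro b1 ⟨i, hi, rfl⟩ b2 ⟨j, hj, rfl⟩
    exact hsame i j (by tauto)
  -- key claw lemma
  have hkey : ∀ (v : V) (j : ZMod (2*n)), G.Adj v (c j) → v ≠ c (j-1) → v ≠ c (j+1) →
      G.Adj v (c (j-1)) ∨ G.Adj v (c (j+1)) := by
    intro v j hvj hne1 hne2
    by_contra h; push_neg at h
    have hnadj : ¬ G.Adj (c (j-1)) (c (j+1)) := by
      apply hsame
      have h1 := hpar (j-1); rw [sub_add_cancel] at h1
      have h2 := hpar j
      tauto
    have hne12 : c (j-1) ≠ c (j+1) := by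
      intro he
      have := hinj he
      have h2 : ((2 : ℕ) : ZMod (2*n)) = 0 := by
        push_cast
        linear_combination -this
      exact hne0 2 (by omega) (by omega) h2
    exact hcf ⟨c j, v, c (j-1), c (j+1), hvj.symm, (hadj' j).symm, hadj j,
      hne1, hne2, hne12, h.1, h.2, hnadj⟩
  refine ⟨?_, ?_, ?_, ?_⟩
  · -- (a)
    intro v
    by_contra h
    push_neg at h
    rw [Set.two_lt_ncard_iff (Set.toFinite _)] at h
    obtain ⟨b1, b2, b3, hb1, hb2, hb3, h12, h13, h23⟩ := h
    exact hcf ⟨v, b1, b2, b3, hb1.2, hb2.2, hb3.2, h12, h13, h23,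
      hBind b1 hb1.1 b2 hb2.1, hBind b1 hb1.1 b3 hb3.1, hBind b2 hb2.1 b3 hb3.1⟩
  · -- (b)
    rintro u v huv ⟨huB, hu2⟩ ⟨hvB, hv0⟩
    rw [Set.ncard_eq_two] at hu2
    obtain ⟨b1, b2, hb12, hset⟩ := hu2
    rw [Set.ncard_eq_zero (Set.toFinite _)] at hv0
    have hb1 : b1 ∈ nbrsIn G (cycB c) u := by rw [hset]; left; rfl
    have hb2 : b2 ∈ nbrsIn G (cycB c) u := by rw [hset]; right; rfl
    have hvb1 : ¬ G.Adj v b1 := fun h => by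
      have : b1 ∈ nbrsIn G (cycB c) v := ⟨hb1.1, h⟩
      rw [hv0] at this; exact this
    have hvb2 : ¬ G.Adj v b2 := fun h => by
      have : b2 ∈ nbrsIn G (cycB c) v := ⟨hb2.1, h⟩
      rw [hv0] at this; exact this
    exact hcf ⟨u, v, b1, b2, huv, hb1.2, hb2.2,
      fun he => hvB (he ▸ hb1.1), fun he => hvB (he ▸ hb2.1), hb12,
      hvb1, hvb2, hBind b1 hb1.1 b2 hb2.1⟩
  · -- (c)
    intro v
    constructor
    · rintro ⟨⟨b, ⟨j, hj, rfl⟩, hvb⟩, hvA⟩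
      have hvB : v ∉ cycB c := by
        rintro ⟨i, hi, rfl⟩
        exact hsame i j (by tauto) hvb
      refine ⟨?_, hvB⟩
      have hne1 : v ≠ c (j-1) := fun he => hvA (he ▸ (hAmem (j-1)).mpr (by
        have h1 := hpar (j-1); rw [sub_add_cancel] at h1; tauto))
      have hne2 : v ≠ c (j+1) := fun he => hvA (he ▸ (hAmem (j+1)).mpr (by
        have h2 := hpar j; tauto))
      rcases hkey v j hvb hne1 hne2 with h | h
      · exact ⟨c (j-1), (hAmem (j-1)).mpr (by
          have h1 := hpar (j-1); rw [sub_add_cancel] at h1; tauto), h⟩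
      · exact ⟨c (j+1), (hAmem (j+1)).mpr (by have h2 := hpar j; tauto), h⟩
    · rintro ⟨⟨a, ⟨j, hj, rfl⟩, hva⟩, hvB⟩
      have hvA : v ∉ cycA c := by
        rintro ⟨i, hi, rfl⟩
        exact hsame i j (by tauto) hva
      refine ⟨?_, hvA⟩
      have hne1 : v ≠ c (j-1) := fun he => hvB (he ▸ (hBmem (j-1)).mpr (by
        have h1 := hpar (j-1); rw [sub_add_cancel] at h1; tauto))
      have hne2 : v ≠ c (j+1) := fun he => hvB (he ▸ (hBmem (j+1)).mpr (by
        have h2 := hpar j; tauto))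
      rcases hkey v j hva hne1 hne2 with h | h
      · exact ⟨c (j-1), (hBmem (j-1)).mpr (by
          have h1 := hpar (j-1); rw [sub_add_cancel] at h1; tauto), h⟩
      · exact ⟨c (j+1), (hBmem (j+1)).mpr (by have h2 := hpar j; tauto), h⟩
  · -- (d)
    ext v
    constructor
    · rintro ⟨⟨b, ⟨j, hj, rfl⟩, hvb⟩, hvI⟩
      by_contra hvA
      have hne1 : v ≠ c (j-1) := fun he => hvA (he ▸ (hAmem (j-1)).mpr (by
        have h1 := hpar (j-1); rw [sub_add_cancel] at h1; tauto))
      have hne2 : v ≠ c (j+1) := fun he => hvA (he ▸ (hAmem (j+1)).mpr (by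
        have h2 := hpar j; tauto))
      rcases hkey v j hvb hne1 hne2 with h | h
      · have haI : c (j-1) ∈ I := (hIc (j-1)).mpr (by
          have h1 := hpar (j-1); rw [sub_add_cancel] at h1; tauto)
        exact hI v hvI (c (j-1)) haI h
      · have haI : c (j+1) ∈ I := (hIc (j+1)).mpr (by have h2 := hpar j; tauto)
        exact hI v hvI (c (j+1)) haI h
    · rintro ⟨j, hj, rfl⟩
      refine ⟨⟨c (j+1), (hBmem (j+1)).mpr (by have h2 := hpar j; tauto), hadj j⟩, ?_⟩
      exact (hIc j).mpr hj
end

section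
/- Let G be a claw-free graph, I an independent set, and C an I-bad cycle with I-bipartition [A, B]. Suppose I_0, …, I_m is a TS-sequence with I_0 = I. Then this sequence contains a resolving sequence for C (i.e., for some i, G[I_i ∪ B] contains no cycle) if and only if it contains a move u → v with u ∈ N_2(B) and v ∈ N_1(B). -/
open SimpleGraph

lemma acyclic_of_grading {W : Type*} (H : SimpleGraph W) (φ : W → ℕ)
    (hinj : Function.Injective φ)
    (hadj : ∀ x y, H.Adj x y → φ x + 1 = φ y ∨ φ y + 1 = φ x) :
    H.IsAcyclic := by
  intro v p hp
  classical
  obtain ⟨x, hx⟩ : ∃ x, p.support.argmax φ = some x := by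
    cases h : p.support.argmax φ with
    | none => exact absurd (List.argmax_eq_none.mp h) p.support_ne_nil
    | some x => exact ⟨x, rfl⟩
  have hxmem : x ∈ p.support := List.argmax_mem hx
  have hxmax : ∀ a ∈ p.support, φ a ≤ φ x := fun a ha => List.le_of_mem_argmax ha hx
  -- rotate the cycle to start at x
  set p' := p.rotate x hxmem with hp'def
  have hp' : p'.IsCycle := hp.rotate hxmem
  have hmem' : ∀ a ∈ p'.support, a ∈ p.support := by
    intro a ha
    rcases List.mem_cons.mp (p'.support_eq_cons ▸ ha) with hh | hh
    · simpa [hh] using hxmem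
    · exact List.mem_of_mem_tail <|
        ((Walk.support_rotate p x hxmem).mem_iff).mp hh
  have hlt : ∀ a ∈ p'.support, H.Adj x a → φ a + 1 = φ x := by
    intro a ha hadj'
    rcases hadj x a hadj' with h | h
    · exfalso
      have h1 : φ a ≤ φ x := hxmax a (hmem' a ha)
      omega
    · exact h
  clear_value p'
  -- destructure the cycle
  cases p' with
  | nil => exact hp'.not_of_nil
  | cons h q =>
    rename_i y
    have hq : q.IsPath := ((Walk.cons_isCycle_iff q h).mp hp').1
    have hqr : q.reverse.IsPath := hq.reverse
    have hnenil : ¬ q.reverse.Nil := Walk.not_nil_of_ne h.ne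
    obtain ⟨w, hxw, q'', hq''eq⟩ := Walk.not_nil_iff.mp hnenil
    have hwy : w = y := by
      apply hinj
      have hy : φ y + 1 = φ x := by
        apply hlt y _ h
        rw [Walk.support_cons]
        exact List.mem_cons_of_mem _ q.start_mem_support
      have hw : φ w + 1 = φ x := by
        apply hlt w _ hxw
        rw [Walk.support_cons]
        apply List.mem_cons_of_mem
        have : w ∈ q.reverse.support := by
          rw [hq''eq, Walk.support_cons]
          exact List.mem_cons_of_mem _ q''.start_mem_support
        rwa [Walk.support_reverse, List.mem_reverse] at this
      omega
    subst hwy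
    have hq''path : q''.IsPath := by
      rw [hq''eq] at hqr
      exact hqr.of_cons
    have : q'' = Walk.nil := (Walk.isPath_iff_eq_nil (p := q'')).mp hq''path
    have hlen : q.reverse.length = 1 := by rw [hq''eq, this]; simp
    have hlen2 : (Walk.cons h q).length = 2 := by
      rw [Walk.length_reverse] at hlen
      simp [hlen]
    have := hp'.three_le_length
    omega

lemma not_acyclic_of_cycleFun {W : Type*} (H : SimpleGraph W) (k : ℕ) (hk : 2 ≤ k)
    (z : ZMod (2*k) → W) (hinj : Function.Injective z)
    (hadj : ∀ j, H.Adj (z j) (z (j+1))) : ¬ H.IsAcyclic := by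
  haveI : NeZero (2*k) := ⟨by omega⟩
  intro hac
  have hadj01 : H.Adj (z 0) (z 1) := by simpa using hadj 0
  have hbr := isAcyclic_iff_forall_adj_isBridge.mp hac hadj01
  rw [isBridge_iff] at hbr
  apply hbr
  apply Reachable.symm
  have key : ∀ t : ℕ, 1 ≤ t → t ≤ 2*k →
      (H \ fromEdgeSet {s(z 0, z 1)}).Reachable (z 1) (z (t : ZMod (2*k))) := by
    intro t h1 h2
    induction t with
    | zero => omega
    | succ t ih =>
      rcases Nat.eq_or_lt_of_le h1 with h | h
      · rw [← h]
        have : ((1:ℕ) : ZMod (2*k)) = 1 := Nat.cast_one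
        rw [this]
      · have h1' : 1 ≤ t := by omega
        have h2' : t ≤ 2*k := by omega
        have ht2k : t < 2*k := by omega
        refine (ih h1' h2').trans (Adj.reachable ?_)
        have hcast : ((t+1 : ℕ) : ZMod (2*k)) = (t : ZMod (2*k)) + 1 := by push_cast; ring
        rw [hcast]
        rw [sdiff_adj]
        refine ⟨hadj _, ?_⟩
        rw [fromEdgeSet_adj]
        rintro ⟨hmem, -⟩
        simp only [Set.mem_singleton_iff, Sym2.eq, Sym2.rel_iff', Prod.mk.injEq, Prod.swap_prod_mk] at hmem
        rcases hmem with ⟨ha, hb⟩ | ⟨ha, hb⟩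
        · have : (t : ZMod (2*k)) = 0 := hinj ha
          rw [ZMod.natCast_eq_zero_iff] at this
          exact absurd (Nat.le_of_dvd (by omega) this) (by omega)
        · have h1 : (t : ZMod (2*k)) = 1 := hinj ha
          have h2 : (t : ZMod (2*k)) + 1 = 0 := hinj hb
          rw [h1] at h2
          have : ((2 : ℕ) : ZMod (2*k)) = 0 := by push_cast at h2 ⊢; linear_combination h2
          rw [ZMod.natCast_eq_zero_iff] at this
          have := Nat.le_of_dvd (by omega) this
          omega
  have h2k0 : ((2*k : ℕ) : ZMod (2*k)) = 0 := ZMod.natCast_self _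
  have := key (2*k) (by omega) le_rfl
  rwa [h2k0] at this

lemma clawfree_not3 {V : Type} {G : SimpleGraph V} (hcf : ClawFree G) {x a b c : V}
    (hab : a ≠ b) (hac : a ≠ c) (hbc : b ≠ c)
    (h1 : G.Adj x a) (h2 : G.Adj x b) (h3 : G.Adj x c)
    (n1 : ¬G.Adj a b) (n2 : ¬G.Adj a c) (n3 : ¬G.Adj b c) : False :=
  hcf ⟨x, a, b, c, h1, h2, h3, hab, hac, hbc, n1, n2, n3⟩

lemma parity_succ {k : ℕ} (hk : 1 ≤ k) (j : ZMod (2*k)) :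
    Even ((j+1).val) ↔ ¬ Even j.val := by
  haveI : NeZero (2*k) := ⟨by omega⟩
  rw [ZMod.val_add, ZMod.val_one'' (by omega : 2*k ≠ 1)]
  have h2 : (2:ℕ) ∣ 2*k := ⟨k, rfl⟩
  rw [Nat.even_iff, Nat.even_iff, Nat.mod_mod_of_dvd _ h2]
  omega

lemma parity_pred {k : ℕ} (hk : 1 ≤ k) (j : ZMod (2*k)) :
    Even ((j-1).val) ↔ ¬ Even j.val := by
  have := parity_succ hk (j-1)
  simp only [sub_add_cancel] at this
  tauto

lemma zmod_cast_ne_zero {k : ℕ} (hk : 1 ≤ k) {t : ℕ} (h1 : 1 ≤ t) (h2 : t < 2*k) :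
    (t : ZMod (2*k)) ≠ 0 := by
  haveI : NeZero (2*k) := ⟨by omega⟩
  intro h
  rw [ZMod.natCast_eq_zero_iff] at h
  have := Nat.le_of_dvd (by omega) h
  omega

lemma zmod_two_ne_zero {k : ℕ} (hk : 2 ≤ k) : (2 : ZMod (2*k)) ≠ 0 := by
  have := zmod_cast_ne_zero (t := 2) (by omega : 1 ≤ k) (by omega) (by omega)
  simpa using this

lemma zmod_one_ne_zero {k : ℕ} (hk : 2 ≤ k) : (1 : ZMod (2*k)) ≠ 0 := by
  have := zmod_cast_ne_zero (t := 1) (by omega : 1 ≤ k) (by omega) (by omega)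
  simpa using this

lemma zmod_pm_ne {k : ℕ} (hk : 2 ≤ k) (j : ZMod (2*k)) : j - 1 ≠ j + 1 := by
  intro h
  apply zmod_two_ne_zero hk
  linear_combination -h

lemma zmod_succ_ne {k : ℕ} (hk : 2 ≤ k) (j : ZMod (2*k)) : j + 1 ≠ j := by
  intro h
  apply zmod_one_ne_zero hk
  linear_combination h

lemma zmod_pred_ne {k : ℕ} (hk : 2 ≤ k) (j : ZMod (2*k)) : j - 1 ≠ j := by
  intro h
  apply zmod_one_ne_zero hk
  linear_combination -h

lemma zmod_two_add_ne {k : ℕ} (hk : 2 ≤ k) (j : ZMod (2*k)) : j + 2 ≠ j := by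
  intro h
  apply zmod_two_ne_zero hk
  linear_combination h

lemma zmod_two_sub_ne {k : ℕ} (hk : 2 ≤ k) (j : ZMod (2*k)) : j - 2 ≠ j := by
  intro h
  apply zmod_two_ne_zero hk
  linear_combination -h

def SpanCycle {V : Type} (G : SimpleGraph V) (B J : Set V) : Prop :=
  ∃ k : ℕ, 2 ≤ k ∧ ∃ z : ZMod (2*k) → V, Function.Injective z ∧
    (∀ j, G.Adj (z j) (z (j+1))) ∧
    (∀ j, Even (ZMod.val j) → z j ∈ J ∧ z j ∉ B) ∧
    (∀ j, ¬ Even (ZMod.val j) → z j ∈ B) ∧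
    B ⊆ Set.range z

section DLemmas
variable {V : Type} {G : SimpleGraph V} {B J : Set V} {k : ℕ} {z : ZMod (2*k) → V}

/-- No vertex of `J` lies in `B`. -/
lemma sc_disj (hk : 2 ≤ k) (hinj : Function.Injective z)
    (hadj : ∀ j, G.Adj (z j) (z (j+1)))
    (heven : ∀ j, Even (ZMod.val j) → z j ∈ J ∧ z j ∉ B)
    (hodd : ∀ j, ¬ Even (ZMod.val j) → z j ∈ B)
    (hspan : B ⊆ Set.range z) (hJ : Indep G J) :
    ∀ x, x ∈ J → x ∈ B → False := by
  intro x hxJ hxB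
  obtain ⟨j, rfl⟩ := hspan hxB
  have hjodd : ¬ Even (ZMod.val j) := by
    intro he
    exact (heven j he).2 hxB
  have hnext : Even (ZMod.val (j+1)) := (parity_succ (by omega) j).mpr hjodd
  exact hJ _ hxJ _ (heven (j+1) hnext).1 (hadj j)

/-- vertices of `B` adjacent to an even cycle vertex are its cycle neighbours. -/
lemma sc_bnbrs (hk : 2 ≤ k) (hinj : Function.Injective z)
    (hadj : ∀ j, G.Adj (z j) (z (j+1)))
    (heven : ∀ j, Even (ZMod.val j) → z j ∈ J ∧ z j ∉ B)
    (hodd : ∀ j, ¬ Even (ZMod.val j) → z j ∈ B)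
    (hspan : B ⊆ Set.range z) (hcf : ClawFree G) (hB : Indep G B)
    (j : ZMod (2*k)) (hj : Even (ZMod.val j)) :
    ∀ b ∈ B, G.Adj (z j) b → b = z (j-1) ∨ b = z (j+1) := by
  intro b hbB hadjb
  by_contra hcon
  push_neg at hcon
  obtain ⟨hb1, hb2⟩ := hcon
  have hBm : z (j-1) ∈ B := hodd _ (by rw [parity_pred (by omega)]; simpa using hj)
  have hBp : z (j+1) ∈ B := hodd _ (by rw [parity_succ (by omega)]; simpa using hj)
  refine clawfree_not3 hcf (a := z (j-1)) (b := z (j+1)) (c := b) ?_ ?_ ?_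
    ?_ (hadj j) hadjb ?_ ?_ ?_
  · exact fun h => zmod_pm_ne hk j (hinj h)
  · exact fun h => hb1 h.symm
  · exact fun h => hb2 h.symm
  · have := hadj (j-1)
    simpa using this.symm
  · exact hB _ hBm _ hBp
  · exact hB _ hBm _ hbB
  · exact hB _ hBp _ hbB

/-- vertices of `J` adjacent to an odd cycle vertex are its cycle neighbours. -/
lemma sc_jnbrs (hk : 2 ≤ k) (hinj : Function.Injective z)
    (hadj : ∀ j, G.Adj (z j) (z (j+1)))
    (heven : ∀ j, Even (ZMod.val j) → z j ∈ J ∧ z j ∉ B)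
    (hodd : ∀ j, ¬ Even (ZMod.val j) → z j ∈ B)
    (hspan : B ⊆ Set.range z) (hcf : ClawFree G) (hB : Indep G B) (hJ : Indep G J)
    (j : ZMod (2*k)) (hj : ¬ Even (ZMod.val j)) :
    ∀ x ∈ J, G.Adj x (z j) → x = z (j-1) ∨ x = z (j+1) := by
  intro x hxJ hadjx
  by_contra hcon
  push_neg at hcon
  obtain ⟨hx1, hx2⟩ := hcon
  have hJm : z (j-1) ∈ J := (heven _ (by rw [parity_pred (by omega)]; simpa using hj)).1
  have hJp : z (j+1) ∈ J := (heven _ (by rw [parity_succ (by omega)]; simpa using hj)).1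
  refine clawfree_not3 hcf (a := z (j-1)) (b := z (j+1)) (c := x) ?_ ?_ ?_
    ?_ (hadj j) hadjx.symm ?_ ?_ ?_
  · exact fun h => zmod_pm_ne hk j (hinj h)
  · exact fun h => hx1 h.symm
  · exact fun h => hx2 h.symm
  · have := hadj (j-1)
    simpa using this.symm
  · exact hJ _ hJm _ hJp
  · exact hJ _ hJm _ hxJ
  · exact hJ _ hJp _ hxJ

/-- A `J`-vertex off the cycle has no neighbours in `B`. -/
lemma sc_offcycle (hk : 2 ≤ k) (hinj : Function.Injective z)
    (hadj : ∀ j, G.Adj (z j) (z (j+1)))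
    (heven : ∀ j, Even (ZMod.val j) → z j ∈ J ∧ z j ∉ B)
    (hodd : ∀ j, ¬ Even (ZMod.val j) → z j ∈ B)
    (hspan : B ⊆ Set.range z) (hcf : ClawFree G) (hB : Indep G B) (hJ : Indep G J)
    {x : V} (hxJ : x ∈ J) (hx : x ∉ Set.range z) :
    ∀ b ∈ B, ¬ G.Adj x b := by
  intro b hbB hadjb
  obtain ⟨j, rfl⟩ := hspan hbB
  have hjodd : ¬ Even (ZMod.val j) := fun he => (heven j he).2 hbB
  rcases sc_jnbrs hk hinj hadj heven hodd hspan hcf hB hJ j hjodd x hxJ hadjb with h | h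
  · exact hx ⟨j-1, h.symm⟩
  · exact hx ⟨j+1, h.symm⟩

/-- Even cycle vertices lie in `N₂(B)`. -/
lemma sc_even_n2 (hk : 2 ≤ k) (hinj : Function.Injective z)
    (hadj : ∀ j, G.Adj (z j) (z (j+1)))
    (heven : ∀ j, Even (ZMod.val j) → z j ∈ J ∧ z j ∉ B)
    (hodd : ∀ j, ¬ Even (ZMod.val j) → z j ∈ B)
    (hspan : B ⊆ Set.range z) (hcf : ClawFree G) (hB : Indep G B)
    (j : ZMod (2*k)) (hj : Even (ZMod.val j)) :
    z j ∈ Nset G B 2 := by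
  have hset : nbrsIn G B (z j) = {z (j-1), z (j+1)} := by
    ext b
    constructor
    · rintro ⟨hbB, hadjb⟩
      exact sc_bnbrs hk hinj hadj heven hodd hspan hcf hB j hj b hbB hadjb
    · rintro (rfl | rfl)
      · refine ⟨hodd _ (by rw [parity_pred (by omega)]; simpa using hj), ?_⟩
        have := hadj (j-1)
        simpa using this.symm
      · exact ⟨hodd _ (by rw [parity_succ (by omega)]; simpa using hj), hadj j⟩
  refine ⟨(heven j hj).2, ?_⟩
  rw [hset]
  exact Set.ncard_pair (fun h => zmod_pm_ne hk j (hinj h))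

end DLemmas

lemma spanCycle_not_acyclic {V : Type} {G : SimpleGraph V} {B J : Set V}
    (h : SpanCycle G B J) : ¬ (G.induce (J ∪ B)).IsAcyclic := by
  obtain ⟨k, hk, z, hinj, hadj, heven, hodd, hspan⟩ := h
  have hmem : ∀ j, z j ∈ J ∪ B := by
    intro j
    by_cases hj : Even (ZMod.val j)
    · exact Or.inl (heven j hj).1
    · exact Or.inr (hodd j hj)
  apply not_acyclic_of_cycleFun _ k hk (fun j => ⟨z j, hmem j⟩)
  · intro a b hab
    exact hinj (congrArg Subtype.val hab)
  · intro j
    simp only [comap_adj, Function.Embedding.coe_subtype]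
    exact hadj j

lemma badCycle_spanCycle {V : Type} {G : SimpleGraph V} {I : Set V} {n : ℕ}
    {c : ZMod (2*n) → V} (hc : IsBadCycle G I n c) : SpanCycle G (cycB c) I := by
  obtain ⟨hn, hinj, hadj, hchord, hI⟩ := hc
  refine ⟨n, hn, c, hinj, hadj, fun j hj => ⟨(hI j).mpr hj, ?_⟩,
    fun j hj => ⟨j, hj, rfl⟩, ?_⟩
  · rintro ⟨j', hj', hEq⟩
    rw [hinj hEq] at hj'
    exact hj' hj
  · rintro b ⟨j, hj, rfl⟩
    exact ⟨j, rfl⟩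

lemma badCycle_B_indep {V : Type} {G : SimpleGraph V} {I : Set V} {n : ℕ}
    {c : ZMod (2*n) → V} (hc : IsBadCycle G I n c) : Indep G (cycB c) := by
  obtain ⟨hn, hinj, hadj, hchord, hI⟩ := hc
  rintro _ ⟨j, hj, rfl⟩ _ ⟨j', hj', rfl⟩ hadj'
  simp only [Set.mem_setOf_eq] at hj hj'
  rcases hchord j j' hadj' with h | h
  · rw [h, parity_succ (by omega)] at hj'
    exact hj' hj
  · rw [h, parity_succ (by omega)] at hj
    exact hj hj'

lemma spanCycle_step {V : Type} {G : SimpleGraph V} (hcf : ClawFree G) {B J J' : Set V}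
    (hB : Indep G B) (hJ : Indep G J) (hJ' : Indep G J')
    {u v : V} (huv : G.Adj u v) (hd1 : J \ J' = {u}) (hd2 : J' \ J = {v})
    (hnr : ¬ (u ∈ Nset G B 2 ∧ v ∈ Nset G B 1))
    (hsc : SpanCycle G B J) : SpanCycle G B J' := by
  obtain ⟨k, hk, z, hinj, hadj, heven, hodd, hspan⟩ := hsc
  have huJ : u ∈ J ∧ u ∉ J' := by
    have : u ∈ J \ J' := by rw [hd1]; exact Set.mem_singleton u
    exact this
  have hvJ : v ∈ J' ∧ v ∉ J := by
    have : v ∈ J' \ J := by rw [hd2]; exact Set.mem_singleton v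
    exact this
  have hJsub : ∀ x ∈ J, x ≠ u → x ∈ J' := by
    intro x hx hne
    by_contra h
    have : x ∈ J \ J' := ⟨hx, h⟩
    rw [hd1] at this
    exact hne this
  by_cases hu : u ∈ Set.range z
  swap
  · -- u not on the cycle: it stays a cycle
    refine ⟨k, hk, z, hinj, hadj, fun j hj => ⟨hJsub _ (heven j hj).1 ?_, (heven j hj).2⟩,
      hodd, hspan⟩
    intro h
    exact hu ⟨j, h⟩
  obtain ⟨j0, hj0⟩ := hu
  have hj0even : Even (ZMod.val j0) := by
    by_contra ho
    exact sc_disj hk hinj hadj heven hodd hspan hJ u huJ.1 (hj0 ▸ hodd j0 ho)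
  have hk1 : (1:ℕ) ≤ k := by omega
  have hoddm : ¬ Even (ZMod.val (j0-1)) := fun h => ((parity_pred hk1 j0).mp h) hj0even
  have hoddp : ¬ Even (ZMod.val (j0+1)) := fun h => ((parity_succ hk1 j0).mp h) hj0even
  have hb1B : z (j0-1) ∈ B := hodd _ hoddm
  have hb2B : z (j0+1) ∈ B := hodd _ hoddp
  have hadjb1 : G.Adj (z j0) (z (j0-1)) := by
    have := hadj (j0-1)
    rw [sub_add_cancel] at this
    exact this.symm
  have hadjb2 : G.Adj (z j0) (z (j0+1)) := hadj j0
  by_cases hvB : v ∈ B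
  · -- the token moves onto B: impossible
    exfalso
    rcases sc_bnbrs hk hinj hadj heven hodd hspan hcf hB j0 hj0even v hvB (hj0 ▸ huv) with h | h
    · -- v = z (j0 - 1)
      have hweven : Even (ZMod.val (j0-1-1)) := by
        rw [parity_pred hk1]
        exact hoddm
      have hwJ : z (j0-1-1) ∈ J := (heven _ hweven).1
      have hwne : z (j0-1-1) ≠ u := by
        rw [← hj0]
        intro hh
        have h2 : j0 - 1 - 1 = j0 := hinj hh
        have : j0 - 2 = j0 := by linear_combination h2
        exact zmod_two_sub_ne hk j0 this
      have hwJ' : z (j0-1-1) ∈ J' := hJsub _ hwJ hwne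
      have hadjwv : G.Adj (z (j0-1-1)) v := by
        rw [h]
        have := hadj (j0-1-1)
        rw [sub_add_cancel] at this
        exact this
      exact hJ' _ hwJ' _ hvJ.1 hadjwv
    · -- v = z (j0 + 1)
      have hweven : Even (ZMod.val (j0+1+1)) := by
        rw [parity_succ hk1]
        exact hoddp
      have hwJ : z (j0+1+1) ∈ J := (heven _ hweven).1
      have hwne : z (j0+1+1) ≠ u := by
        rw [← hj0]
        intro hh
        have h2 : j0 + 1 + 1 = j0 := hinj hh
        have : j0 + 2 = j0 := by linear_combination h2
        exact zmod_two_add_ne hk j0 this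
      have hwJ' : z (j0+1+1) ∈ J' := hJsub _ hwJ hwne
      have hadjvw : G.Adj v (z (j0+1+1)) := by
        rw [h]
        exact hadj (j0+1)
      exact hJ' _ hvJ.1 _ hwJ' hadjvw
  -- now v ∉ B
  have hvnr : v ∉ Set.range z := by
    rintro ⟨j, hjv⟩
    by_cases hj : Even (ZMod.val j)
    · exact hvJ.2 (hjv ▸ (heven j hj).1)
    · exact hvB (hjv ▸ hodd j hj)
  have vnbrs : ∀ b ∈ B, G.Adj v b → b = z (j0-1) ∨ b = z (j0+1) := by
    intro b hbB hadjvb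
    obtain ⟨j1, rfl⟩ := hspan hbB
    have hj1odd : ¬ Even (ZMod.val j1) := fun h => (heven j1 h).2 hbB
    by_cases h1 : j1 = j0 - 1
    · exact Or.inl (by rw [h1])
    by_cases h2 : j1 = j0 + 1
    · exact Or.inr (by rw [h2])
    exfalso
    have hj1meven : Even (ZMod.val (j1-1)) := by rw [parity_pred hk1]; simpa using hj1odd
    have hj1peven : Even (ZMod.val (j1+1)) := by rw [parity_succ hk1]; simpa using hj1odd
    have hmne : z (j1-1) ≠ u := by
      rw [← hj0]
      intro hh
      apply h2
      have := hinj hh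
      linear_combination this
    have hpne : z (j1+1) ≠ u := by
      rw [← hj0]
      intro hh
      apply h1
      have := hinj hh
      linear_combination this
    have hmJ' : z (j1-1) ∈ J' := hJsub _ (heven _ hj1meven).1 hmne
    have hpJ' : z (j1+1) ∈ J' := hJsub _ (heven _ hj1peven).1 hpne
    refine clawfree_not3 hcf (x := z j1) (a := z (j1-1)) (b := z (j1+1)) (c := v)
      ?_ ?_ ?_ ?_ (hadj j1) hadjvb.symm ?_ ?_ ?_
    · exact fun h => zmod_pm_ne hk j1 (hinj h)
    · exact fun h => hvnr ⟨j1-1, h⟩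
    · exact fun h => hvnr ⟨j1+1, h⟩
    · have := hadj (j1-1)
      rw [sub_add_cancel] at this
      exact this.symm
    · exact hJ' _ hmJ' _ hpJ'
    · exact hJ' _ hmJ' _ hvJ.1
    · exact hJ' _ hpJ' _ hvJ.1
  by_cases hvb1 : G.Adj v (z (j0-1)) <;> by_cases hvb2 : G.Adj v (z (j0+1))
  · -- adjacent to both: replace u by v on the cycle
    refine ⟨k, hk, Function.update z j0 v, ?_, ?_, ?_, ?_, ?_⟩
    · intro a b hab
      by_cases ha : a = j0 <;> by_cases hb : b = j0
      · rw [ha, hb]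
      · rw [ha, Function.update_self, Function.update_of_ne hb] at hab
        exact absurd ⟨b, hab.symm⟩ hvnr
      · rw [hb, Function.update_self, Function.update_of_ne ha] at hab
        exact absurd ⟨a, hab⟩ hvnr
      · rw [Function.update_of_ne ha, Function.update_of_ne hb] at hab
        exact hinj hab
    · intro j
      by_cases hj : j = j0
      · subst hj
        rw [Function.update_self, Function.update_of_ne (zmod_succ_ne hk j)]
        exact hvb2
      by_cases hj' : j + 1 = j0
      · have hjeq : j = j0 - 1 := by linear_combination hj'
        rw [Function.update_of_ne hj, hj', Function.update_self, hjeq]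
        exact hvb1.symm
      · rw [Function.update_of_ne hj, Function.update_of_ne hj']
        exact hadj j
    · intro j hj
      by_cases hjj : j = j0
      · rw [hjj, Function.update_self]
        exact ⟨hvJ.1, hvB⟩
      · rw [Function.update_of_ne hjj]
        refine ⟨hJsub _ (heven j hj).1 ?_, (heven j hj).2⟩
        rw [← hj0]
        exact fun h => hjj (hinj h)
    · intro j hj
      have hjj : j ≠ j0 := fun h => hj (h ▸ hj0even)
      rw [Function.update_of_ne hjj]
      exact hodd j hj
    · intro b hbB
      obtain ⟨j, hjb⟩ := hspan hbB
      have hjj : j ≠ j0 := by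
        intro h
        rw [h, hj0] at hjb
        rw [← hjb] at hbB
        exact (heven j0 hj0even).2 (hj0 ▸ hbB)
      exact ⟨j, by rw [Function.update_of_ne hjj]; exact hjb⟩
  · -- v ∈ N₁ : contradiction with hnr
    exfalso
    apply hnr
    constructor
    · rw [← hj0]
      exact sc_even_n2 hk hinj hadj heven hodd hspan hcf hB j0 hj0even
    · refine ⟨hvB, ?_⟩
      have : nbrsIn G B v = {z (j0-1)} := by
        ext b
        constructor
        · rintro ⟨hbB, hadjb⟩
          rcases vnbrs b hbB hadjb with h | h
          · exact h
          · exact absurd (h ▸ hadjb) hvb2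
        · rintro rfl
          exact ⟨hb1B, hvb1⟩
      rw [this]
      exact Set.ncard_singleton _
  · -- symmetric N₁ case
    exfalso
    apply hnr
    constructor
    · rw [← hj0]
      exact sc_even_n2 hk hinj hadj heven hodd hspan hcf hB j0 hj0even
    · refine ⟨hvB, ?_⟩
      have : nbrsIn G B v = {z (j0+1)} := by
        ext b
        constructor
        · rintro ⟨hbB, hadjb⟩
          rcases vnbrs b hbB hadjb with h | h
          · exact absurd (h ▸ hadjb) hvb1
          · exact h
        · rintro rfl
          exact ⟨hb2B, hvb2⟩
      rw [this]
      exact Set.ncard_singleton _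
  · -- adjacent to neither: claw at u
    exfalso
    refine clawfree_not3 hcf (x := z j0) (a := z (j0-1)) (b := z (j0+1)) (c := v)
      ?_ ?_ ?_ hadjb1 hadjb2 (hj0 ▸ huv) ?_ ?_ ?_
    · exact fun h => zmod_pm_ne hk j0 (hinj h)
    · exact fun h => hvnr ⟨j0-1, h⟩
    · exact fun h => hvnr ⟨j0+1, h⟩
    · exact hB _ hb1B _ hb2B
    · exact fun h => hvb1 h.symm
    · exact fun h => hvb2 h.symm


lemma zmod_val_sub_one {k : ℕ} (hk : 2 ≤ k) {a : ZMod (2*k)} (h0 : a ≠ 0) (h1 : a ≠ 1) :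
    (a - 1).val = a.val - 1 ∧ 2 ≤ a.val := by
  haveI : NeZero (2*k) := ⟨by omega⟩
  have hval : a = ((a.val : ℕ) : ZMod (2*k)) := (ZMod.natCast_zmod_val a).symm
  have hlt : a.val < 2*k := ZMod.val_lt a
  have h0' : a.val ≠ 0 := fun h => h0 (by rwa [ZMod.val_eq_zero] at h)
  have h1' : a.val ≠ 1 := by
    intro h
    apply h1
    rw [hval, h, Nat.cast_one]
  have h2 : 2 ≤ a.val := by omega
  refine ⟨?_, h2⟩
  have : a - 1 = ((a.val - 1 : ℕ) : ZMod (2*k)) := by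
    rw [Nat.cast_sub (by omega : 1 ≤ a.val), Nat.cast_one, ← hval]
  rw [this, ZMod.val_cast_of_lt (by omega)]

lemma zmod_val_add_one {k : ℕ} (hk : 2 ≤ k) {a : ZMod (2*k)} (h0 : a ≠ 0) (hm : a + 1 ≠ 0) :
    (a + 1).val = a.val + 1 ∧ a.val + 1 < 2*k := by
  haveI : NeZero (2*k) := ⟨by omega⟩
  have hval : a = ((a.val : ℕ) : ZMod (2*k)) := (ZMod.natCast_zmod_val a).symm
  have hlt : a.val < 2*k := ZMod.val_lt a
  have h0' : a.val ≠ 0 := fun h => h0 (by rwa [ZMod.val_eq_zero] at h)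
  have hm' : a.val ≠ 2*k - 1 := by
    intro h
    apply hm
    rw [hval, h]
    have : ((2*k - 1 : ℕ) : ZMod (2*k)) = ((2*k : ℕ) : ZMod (2*k)) - 1 := by
      rw [Nat.cast_sub (by omega : 1 ≤ 2*k), Nat.cast_one]
    rw [this, ZMod.natCast_self]
    ring
  have hlt2 : a.val + 1 < 2*k := by omega
  refine ⟨?_, hlt2⟩
  have : a + 1 = ((a.val + 1 : ℕ) : ZMod (2*k)) := by
    rw [Nat.cast_add, Nat.cast_one, ← hval]
  rw [this, ZMod.val_cast_of_lt hlt2]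

lemma resolve_step {V : Type} [Fintype V] [DecidableEq V] {G : SimpleGraph V} (hcf : ClawFree G)
    {B J J' : Set V} (hB : Indep G B) (hJ : Indep G J) (hJ' : Indep G J')
    {u v : V} (hd1 : J \ J' = {u}) (hd2 : J' \ J = {v})
    (hu2 : u ∈ Nset G B 2) (hv1 : v ∈ Nset G B 1)
    (hsc : SpanCycle G B J) : (G.induce (J' ∪ B)).IsAcyclic := by
  classical
  obtain ⟨k, hk, z, hinj, hadj, heven, hodd, hspan⟩ := hsc
  haveI : NeZero (2*k) := ⟨by omega⟩
  have hk1 : (1:ℕ) ≤ k := by omega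
  have huJ : u ∈ J ∧ u ∉ J' := by
    have : u ∈ J \ J' := by rw [hd1]; exact Set.mem_singleton u
    exact this
  have hvJ : v ∈ J' ∧ v ∉ J := by
    have : v ∈ J' \ J := by rw [hd2]; exact Set.mem_singleton v
    exact this
  have hJsub : ∀ x ∈ J, x ≠ u → x ∈ J' := by
    intro x hx hne
    by_contra h
    have : x ∈ J \ J' := ⟨hx, h⟩
    rw [hd1] at this
    exact hne this
  have hJ'sub : ∀ x ∈ J', x ≠ v → x ∈ J := by
    intro x hx hne
    by_contra h
    have : x ∈ J' \ J := ⟨hx, h⟩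
    rw [hd2] at this
    exact hne this
  have huB : u ∉ B := hu2.1
  have hvB : v ∉ B := hv1.1
  -- u lies on the cycle
  have hu : u ∈ Set.range z := by
    by_contra h
    have hno := sc_offcycle hk hinj hadj heven hodd hspan hcf hB hJ huJ.1 h
    have hemp : nbrsIn G B u = ∅ := by
      ext b
      simp only [nbrsIn, Set.mem_setOf_eq, Set.mem_empty_iff_false, iff_false, not_and]
      exact fun hbB hadj' => hno b hbB hadj'
    have := hu2.2
    rw [hemp] at this
    simp at this
  obtain ⟨j0, hj0⟩ := hu
  have hj0even : Even (ZMod.val j0) := by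
    by_contra ho
    exact sc_disj hk hinj hadj heven hodd hspan hJ u huJ.1 (hj0 ▸ hodd j0 ho)
  have hvnr : v ∉ Set.range z := by
    rintro ⟨j, hjv⟩
    by_cases hj : Even (ZMod.val j)
    · exact hvJ.2 (hjv ▸ (heven j hj).1)
    · exact hvB (hjv ▸ hodd j hj)
  have vnbrs : ∀ b ∈ B, G.Adj v b → b = z (j0-1) ∨ b = z (j0+1) := by
    intro b hbB hadjvb
    obtain ⟨j1, rfl⟩ := hspan hbB
    have hj1odd : ¬ Even (ZMod.val j1) := fun h => (heven j1 h).2 hbB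
    by_cases h1 : j1 = j0 - 1
    · exact Or.inl (by rw [h1])
    by_cases h2 : j1 = j0 + 1
    · exact Or.inr (by rw [h2])
    exfalso
    have hj1meven : Even (ZMod.val (j1-1)) := by rw [parity_pred hk1]; simpa using hj1odd
    have hj1peven : Even (ZMod.val (j1+1)) := by rw [parity_succ hk1]; simpa using hj1odd
    have hmne : z (j1-1) ≠ u := by
      rw [← hj0]
      intro hh
      apply h2
      have := hinj hh
      linear_combination this
    have hpne : z (j1+1) ≠ u := by
      rw [← hj0]
      intro hh
      apply h1
      have := hinj hh
      linear_combination this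
    have hmJ' : z (j1-1) ∈ J' := hJsub _ (heven _ hj1meven).1 hmne
    have hpJ' : z (j1+1) ∈ J' := hJsub _ (heven _ hj1peven).1 hpne
    refine clawfree_not3 hcf (x := z j1) (a := z (j1-1)) (b := z (j1+1)) (c := v)
      ?_ ?_ ?_ ?_ (hadj j1) hadjvb.symm ?_ ?_ ?_
    · exact fun h => zmod_pm_ne hk j1 (hinj h)
    · exact fun h => hvnr ⟨j1-1, h⟩
    · exact fun h => hvnr ⟨j1+1, h⟩
    · have := hadj (j1-1)
      rw [sub_add_cancel] at this
      exact this.symm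
    · exact hJ' _ hmJ' _ hpJ'
    · exact hJ' _ hmJ' _ hvJ.1
    · exact hJ' _ hpJ' _ hvJ.1
  -- the unique B-neighbour of v
  obtain ⟨b0, hb0⟩ := Set.ncard_eq_one.mp hv1.2
  have hb0mem : b0 ∈ nbrsIn G B v := by rw [hb0]; exact rfl
  have hb0cases : b0 = z (j0-1) ∨ b0 = z (j0+1) := vnbrs b0 hb0mem.1 hb0mem.2
  have huS : u ∉ J' ∪ B := by
    rintro (h | h)
    · exact huJ.2 h
    · exact huB h
  obtain ⟨g, hg⟩ : ∃ g : V → ℕ, Function.Injective g :=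
    ⟨fun x => ((Fintype.equivFin V) x : ℕ),
      fun a b h => (Fintype.equivFin V).injective (Fin.val_injective h)⟩
  set c0 : ℕ := if b0 = z (j0+1) then 0 else 2*k with hc0
  set w : V → ZMod (2*k) := Function.invFun z with hwdef
  have hw : ∀ j, w (z j) = j := Function.leftInverse_invFun hinj
  set pos : V → ℕ := fun x =>
    if x ∈ Set.range z then ((w x - j0).val) else if x = v then c0 else 2*k + 1 + g x
    with hposdef
  have posz : ∀ j, pos (z j) = ((j - j0).val) := by
    intro j
    simp only [hposdef]
    rw [if_pos ⟨j, rfl⟩, hw]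
  have posv : pos v = c0 := by
    simp only [hposdef]
    rw [if_neg hvnr]
    simp
  have posg : ∀ x, x ∉ Set.range z → x ≠ v → pos x = 2*k + 1 + g x := by
    intro x h1 h2
    simp only [hposdef]
    rw [if_neg h1, if_neg h2]
  have hc0valid : c0 = 0 ∨ c0 = 2*k := by
    rw [hc0]
    split
    · left; rfl
    · right; rfl
  -- bounds for on-cycle vertices of the new graph
  have hrange : ∀ x ∈ J' ∪ B, ∀ j : ZMod (2*k), z j = x → j ≠ j0 ∧ 1 ≤ pos x ∧ pos x ≤ 2*k - 1 := by
    intro x hxS j hjx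
    have hjne : j ≠ j0 := by
      intro h
      rw [h, hj0] at hjx
      rw [← hjx] at hxS
      exact huS hxS
    refine ⟨hjne, ?_, ?_⟩
    · rw [← hjx, posz]
      rcases Nat.eq_zero_or_pos ((j - j0).val) with h | h
      · exfalso
        rw [ZMod.val_eq_zero] at h
        exact hjne (by linear_combination h)
      · omega
    · rw [← hjx, posz]
      have := ZMod.val_lt (j - j0)
      omega
  -- the main adjacency computation
  have main : ∀ x y : V, x ∈ J' ∪ B → y ∈ J' ∪ B → G.Adj x y → x ∈ B →
      pos y + 1 = pos x ∨ pos x + 1 = pos y := by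
    intro x y hxS hyS hadj' hxB
    have hyB : y ∉ B := fun h => hB _ hxB _ h hadj'
    have hyJ' : y ∈ J' := by
      rcases hyS with h | h
      · exact h
      · exact absurd h hyB
    obtain ⟨j1, rfl⟩ := hspan hxB
    have hj1odd : ¬ Even (ZMod.val j1) := fun h => (heven j1 h).2 hxB
    obtain ⟨hj1ne, ht1lb, ht1ub⟩ := hrange _ hxS j1 rfl
    rw [posz] at ht1lb ht1ub
    have hane : j1 - j0 ≠ 0 := fun h => hj1ne (by linear_combination h)
    by_cases hyv : y = v
    · -- y = v : x is the unique B-neighbour b0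
      rw [hyv]
      have hmem : z j1 ∈ nbrsIn G B v := ⟨hxB, by rw [← hyv]; exact hadj'.symm⟩
      rw [hb0] at hmem
      have hxb0 : z j1 = b0 := hmem
      rcases hb0cases with hcase | hcase
      · -- b0 = z (j0-1), c0 = 2*k
        have hc0val : c0 = 2*k := by
          rw [hc0, if_neg]
          intro h
          rw [hcase] at h
          exact zmod_pm_ne hk j0 (hinj h)
        have hj1val : j1 = j0 - 1 := hinj (hxb0.trans hcase)
        have ht1val : (j1 - j0).val = 2*k - 1 := by
          have harith : j1 - j0 = ((2*k - 1 : ℕ) : ZMod (2*k)) := by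
            rw [hj1val]
            have : ((2*k - 1 : ℕ) : ZMod (2*k)) = ((2*k : ℕ) : ZMod (2*k)) - 1 := by
              rw [Nat.cast_sub (by omega : 1 ≤ 2*k), Nat.cast_one]
            rw [this, ZMod.natCast_self]
            ring
          rw [harith, ZMod.val_cast_of_lt (by omega)]
        right
        rw [posv, posz, ht1val, hc0val]
        omega
      · -- b0 = z (j0+1), c0 = 0
        have hc0val : c0 = 0 := by rw [hc0, if_pos hcase]
        have hj1val : j1 = j0 + 1 := hinj (hxb0.trans hcase)
        have ht1val : (j1 - j0).val = 1 := by
          have harith : j1 - j0 = ((1 : ℕ) : ZMod (2*k)) := by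
            rw [hj1val]
            push_cast
            ring
          rw [harith, ZMod.val_cast_of_lt (by omega)]
        left
        rw [posv, posz, ht1val, hc0val]
    · -- y ∈ J, on the cycle next to x
      have hyJ : y ∈ J := hJ'sub _ hyJ' hyv
      have hyne : y ≠ u := fun h => huJ.2 (h ▸ hyJ')
      have hyr : y ∈ Set.range z := by
        by_contra h
        exact sc_offcycle hk hinj hadj heven hodd hspan hcf hB hJ hyJ h _ hxB hadj'.symm
      rcases sc_jnbrs hk hinj hadj heven hodd hspan hcf hB hJ j1 hj1odd y hyJ hadj'.symm
        with hy | hy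
      · -- y = z (j1 - 1)
        have hne0 : j1 - 1 ≠ j0 := by
          intro h
          apply hyne
          rw [hy, h, hj0]
        have hane1 : j1 - j0 ≠ 1 := by
          intro h
          apply hne0
          linear_combination h
        obtain ⟨hval, hge⟩ := zmod_val_sub_one hk hane hane1
        have harith : j1 - 1 - j0 = (j1 - j0) - 1 := by ring
        left
        rw [posz, hy, posz, harith, hval]
        omega
      · -- y = z (j1 + 1)
        have hne0 : j1 + 1 ≠ j0 := by
          intro h
          apply hyne
          rw [hy, h, hj0]
        have hane1 : (j1 - j0) + 1 ≠ 0 := by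
          intro h
          apply hne0
          linear_combination h
        obtain ⟨hval, hlt⟩ := zmod_val_add_one hk hane hane1
        have harith : j1 + 1 - j0 = (j1 - j0) + 1 := by ring
        right
        rw [posz, hy, posz, harith, hval]
  -- conclude via the grading criterion
  apply acyclic_of_grading _ (fun x : ↥(J' ∪ B) => pos ↑x)
  · rintro ⟨x1, hx1⟩ ⟨x2, hx2⟩ heq
    simp only at heq
    apply Subtype.ext
    simp only
    by_cases h1 : x1 ∈ Set.range z <;> by_cases h2 : x2 ∈ Set.range z
    · obtain ⟨j1, rfl⟩ := h1
      obtain ⟨j2, rfl⟩ := h2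
      rw [posz, posz] at heq
      have := ZMod.val_injective _ heq
      have : j1 = j2 := by linear_combination this
      rw [this]
    · exfalso
      obtain ⟨j1, rfl⟩ := h1
      obtain ⟨-, hlb, hub⟩ := hrange _ hx1 j1 rfl
      by_cases hv2 : x2 = v
      · rw [hv2, posv] at heq
        rcases hc0valid with h | h <;> omega
      · rw [posg _ h2 hv2] at heq
        omega
    · exfalso
      obtain ⟨j2, rfl⟩ := h2
      obtain ⟨-, hlb, hub⟩ := hrange _ hx2 j2 rfl
      by_cases hv1' : x1 = v
      · rw [hv1', posv] at heq
        rcases hc0valid with h | h <;> omega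
      · rw [posg _ h1 hv1'] at heq
        omega
    · by_cases hv1' : x1 = v <;> by_cases hv2 : x2 = v
      · rw [hv1', hv2]
      · exfalso
        rw [hv1', posv, posg _ h2 hv2] at heq
        rcases hc0valid with h | h <;> omega
      · exfalso
        rw [hv2, posv, posg _ h1 hv1'] at heq
        rcases hc0valid with h | h <;> omega
      · rw [posg _ h1 hv1', posg _ h2 hv2] at heq
        exact hg (by omega)
  · rintro ⟨x, hx⟩ ⟨y, hy⟩ hadj'
    have hadjG : G.Adj x y := hadj'
    simp only
    by_cases hxB : x ∈ B
    · rcases main x y hx hy hadjG hxB with h | h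
      · exact Or.inr h
      · exact Or.inl h
    · have hxJ' : x ∈ J' := by
        rcases hx with h | h
        · exact h
        · exact absurd h hxB
      by_cases hyB : y ∈ B
      · rcases main y x hy hx hadjG.symm hyB with h | h
        · exact Or.inl h
        · exact Or.inr h
      · have hyJ' : y ∈ J' := by
          rcases hy with h | h
          · exact h
          · exact absurd h hyB
        exact absurd hadjG (hJ' _ hxJ' _ hyJ')

/-- A TS-sequence starting at `I` contains a resolving sequence for an `I`-bad cycle iff
it contains a move from `N_2(B)` to `N_1(B)`. -/
theorem stmt_15 {V : Type} [Fintype V] [DecidableEq V] (G : SimpleGraph V)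
    (hcf : ClawFree G) (I : Set V) (hI : Indep G I)
    (n : ℕ) (c : ZMod (2*n) → V) (hc : IsBadCycle G I n c)
    (m : ℕ) (f : ℕ → Set V) (hf0 : f 0 = I)
    (hstep : ∀ i < m, TSStep G (f i) (f (i+1))) :
    (∃ i ≤ m, (G.induce (f i ∪ cycB c)).IsAcyclic) ↔
    (∃ i < m, ∃ u v : V, f i \ f (i+1) = {u} ∧ f (i+1) \ f i = {v} ∧
      u ∈ Nset G (cycB c) 2 ∧ v ∈ Nset G (cycB c) 1) := by
  classical
  have hBindep : Indep G (cycB c) := badCycle_B_indep hc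
  have hbase : SpanCycle G (cycB c) I := badCycle_spanCycle hc
  have key : ∀ i, i ≤ m →
      (∀ j, j < i → ¬ (∃ u v : V, f j \ f (j+1) = {u} ∧ f (j+1) \ f j = {v} ∧
        u ∈ Nset G (cycB c) 2 ∧ v ∈ Nset G (cycB c) 1)) →
      SpanCycle G (cycB c) (f i) := by
    intro i
    induction i with
    | zero =>
      intro _ _
      rw [hf0]
      exact hbase
    | succ i ih =>
      intro hi hno
      have hprev : SpanCycle G (cycB c) (f i) :=
        ih (by omega) (fun j hj => hno j (by omega))
      obtain ⟨hJ, hJ', u, v, huv, hd1, hd2⟩ := hstep i (by omega)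
      refine spanCycle_step hcf hBindep hJ hJ' huv hd1 hd2 ?_ hprev
      rintro ⟨h2, h1⟩
      exact hno i (by omega) ⟨u, v, hd1, hd2, h2, h1⟩
  constructor
  · rintro ⟨i, him, hacyc⟩
    by_contra hnone
    push_neg at hnone
    refine spanCycle_not_acyclic (key i him ?_) hacyc
    intro j hj hres
    obtain ⟨u, v, hd1, hd2, h2, h1⟩ := hres
    exact (hnone j (by omega) u v hd1 hd2 h2) h1
  · rintro ⟨i, him, u, v, hd1, hd2, hu2, hv1⟩
    have hex : ∃ j, (∃ u v : V, f j \ f (j+1) = {u} ∧ f (j+1) \ f j = {v} ∧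
        u ∈ Nset G (cycB c) 2 ∧ v ∈ Nset G (cycB c) 1) ∧ j < m :=
      ⟨i, ⟨u, v, hd1, hd2, hu2, hv1⟩, him⟩
    set i0 := Nat.find hex with hi0def
    obtain ⟨⟨u0, v0, he1, he2, he3, he4⟩, hi0m⟩ := Nat.find_spec hex
    have hmin : ∀ j, j < i0 → ¬ (∃ u v : V, f j \ f (j+1) = {u} ∧ f (j+1) \ f j = {v} ∧
        u ∈ Nset G (cycB c) 2 ∧ v ∈ Nset G (cycB c) 1) := by
      intro j hj hres
      rcases Nat.lt_or_ge j m with hjm | hjm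
      · exact (Nat.find_min hex hj) ⟨hres, hjm⟩
      · omega
    have hspan := key i0 (by omega) hmin
    obtain ⟨hJ, hJ', u1, v1, huv1, hs1, hs2⟩ := hstep i0 hi0m
    exact ⟨i0 + 1, by omega, resolve_step hcf hBindep hJ hJ' he1 he2 he3 he4 hspan⟩
end

section
/- Let G be a claw-free graph, I an independent set, and C an I-bad cycle that is resolvable with respect to I (i.e., there is a TS-sequence from I to some I' with G[I' ∪ B] acyclic, where [A,B] is the I-bipartition of C). Then there is a TS-sequence from I to I △ V(C) (the independent set obtained by 'turning' the cycle). -/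
open SimpleGraph

namespace BadCycleAux

variable {n : ℕ}

/-- parity of an element of `ZMod (2*n)` as an element of `ZMod 2`. -/
def par (x : ZMod (2*n)) : ZMod 2 := ZMod.castHom ⟨n, rfl⟩ (ZMod 2) x

lemma par_natCast (a : ℕ) : par ((a : ℕ) : ZMod (2*n)) = (a : ZMod 2) :=
  map_natCast _ a

lemma par_add (x y : ZMod (2*n)) : par (x + y) = par x + par y := map_add _ x y

lemma par_one : par (1 : ZMod (2*n)) = 1 := map_one _

lemma par_neg (x : ZMod (2*n)) : par (-x) = par x := by
  have h1 : par (-x) = - par x := map_neg _ x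
  have h2 : ∀ a : ZMod 2, -a = a := by decide
  rw [h1, h2]

lemma even_val_iff (hn : 1 ≤ n) (x : ZMod (2*n)) : Even x.val ↔ par x = 0 := by
  haveI : NeZero (2*n) := ⟨by omega⟩
  have hx : ((x.val : ℕ) : ZMod (2*n)) = x := ZMod.natCast_rightInverse x
  rw [← hx, par_natCast, ZMod.val_natCast, ZMod.natCast_eq_zero_iff,
    Nat.even_iff, Nat.mod_mod_of_dvd _ ⟨n, rfl⟩, ← Nat.even_iff, Nat.even_iff,
    Nat.dvd_iff_mod_eq_zero]

lemma par_eq_one (x : ZMod (2*n)) (h : ¬ par x = 0) : par x = 1 := by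
  have : ∀ a : ZMod 2, a ≠ 0 → a = 1 := by decide
  exact this _ h

lemma natCast_eq_natCast_iff' (hn : 1 ≤ n) {a b : ℕ} (ha : a < 2*n) (hb : b < 2*n) :
    ((a : ℕ) : ZMod (2*n)) = b ↔ a = b := by
  haveI : NeZero (2*n) := ⟨by omega⟩
  constructor
  · intro h
    have := congrArg ZMod.val h
    rwa [ZMod.val_natCast, ZMod.val_natCast, Nat.mod_eq_of_lt ha, Nat.mod_eq_of_lt hb] at this
  · rintro rfl; rfl

lemma natCast_2n : (((2*n : ℕ)) : ZMod (2*n)) = 0 := ZMod.natCast_self _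

lemma one_ne_zero' (hn : 2 ≤ n) : (1 : ZMod (2*n)) ≠ 0 := by
  have : ((1:ℕ) : ZMod (2*n)) ≠ ((0:ℕ) : ZMod (2*n)) := by
    rw [Ne, natCast_eq_natCast_iff' (by omega) (by omega) (by omega)]
    omega
  simpa using this

lemma two_ne_zero' (hn : 2 ≤ n) : (2 : ZMod (2*n)) ≠ 0 := by
  have : ((2:ℕ) : ZMod (2*n)) ≠ ((0:ℕ) : ZMod (2*n)) := by
    rw [Ne, natCast_eq_natCast_iff' (by omega) (by omega) (by omega)]
    omega
  simpa using this

lemma three_ne_zero' (hn : 2 ≤ n) : (3 : ZMod (2*n)) ≠ 0 := by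
  have : ((3:ℕ) : ZMod (2*n)) ≠ ((0:ℕ) : ZMod (2*n)) := by
    rw [Ne, natCast_eq_natCast_iff' (by omega) (by omega) (by omega)]
    omega
  simpa using this

lemma even_val_natCast (hn : 1 ≤ n) (a : ℕ) :
    Even (ZMod.val ((a : ℕ) : ZMod (2*n))) ↔ Even a := by
  haveI : NeZero (2*n) := ⟨by omega⟩
  rw [ZMod.val_natCast, Nat.even_iff, Nat.mod_mod_of_dvd _ ⟨n, rfl⟩, ← Nat.even_iff]

end BadCycleAux

namespace BadCycleAux

variable {V : Type} {G : SimpleGraph V} {I : Set V} {n : ℕ} {c : ZMod (2*n) → V}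

lemma bc_n2 (hc : IsBadCycle G I n c) : 2 ≤ n := hc.1
lemma bc_inj (hc : IsBadCycle G I n c) : Function.Injective c := hc.2.1
lemma bc_adj (hc : IsBadCycle G I n c) : ∀ j, G.Adj (c j) (c (j+1)) := hc.2.2.1
lemma bc_chord (hc : IsBadCycle G I n c) :
    ∀ i j, G.Adj (c i) (c j) → j = i + 1 ∨ i = j + 1 := hc.2.2.2.1

lemma bc_memI (hc : IsBadCycle G I n c) (j : ZMod (2*n)) :
    c j ∈ I ↔ par j = 0 := by
  rw [hc.2.2.2.2 j, even_val_iff (by have := hc.1; omega)]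

lemma mem_cycA_iff (hc : IsBadCycle G I n c) {x : V} :
    x ∈ cycA c ↔ ∃ j, par j = 0 ∧ c j = x := by
  unfold cycA
  constructor
  · rintro ⟨j, hj, rfl⟩
    exact ⟨j, (even_val_iff (by have := hc.1; omega) j).mp hj, rfl⟩
  · rintro ⟨j, hj, rfl⟩
    exact ⟨j, (even_val_iff (by have := hc.1; omega) j).mpr hj, rfl⟩

lemma mem_cycB_iff (hc : IsBadCycle G I n c) {x : V} :
    x ∈ cycB c ↔ ∃ j, par j = 1 ∧ c j = x := by
  unfold cycB
  constructor
  · rintro ⟨j, hj, rfl⟩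
    refine ⟨j, ?_, rfl⟩
    exact par_eq_one _ (fun h => hj ((even_val_iff (by have := hc.1; omega) j).mpr h))
  · rintro ⟨j, hj, rfl⟩
    refine ⟨j, ?_, rfl⟩
    intro h
    rw [even_val_iff (by have := hc.1; omega)] at h
    rw [h] at hj; exact one_ne_zero hj.symm

lemma cycA_subset (hc : IsBadCycle G I n c) : cycA c ⊆ I := by
  intro x hx
  obtain ⟨j, hj, rfl⟩ := (mem_cycA_iff hc).mp hx
  exact (bc_memI hc j).mpr hj

lemma cycB_disj (hc : IsBadCycle G I n c) : ∀ x ∈ cycB c, x ∉ I := by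
  intro x hx
  obtain ⟨j, hj, rfl⟩ := (mem_cycB_iff hc).mp hx
  rw [bc_memI hc j, hj]
  simp

lemma range_eq (hc : IsBadCycle G I n c) : Set.range c = cycA c ∪ cycB c := by
  ext x
  constructor
  · rintro ⟨j, rfl⟩
    by_cases h : par j = 0
    · exact Or.inl ((mem_cycA_iff hc).mpr ⟨j, h, rfl⟩)
    · exact Or.inr ((mem_cycB_iff hc).mpr ⟨j, par_eq_one _ h, rfl⟩)
  · rintro (h | h)
    · obtain ⟨j, _, rfl⟩ := (mem_cycA_iff hc).mp h; exact ⟨j, rfl⟩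
    · obtain ⟨j, _, rfl⟩ := (mem_cycB_iff hc).mp h; exact ⟨j, rfl⟩

lemma symmDiff_eq (hc : IsBadCycle G I n c) :
    symmDiff I (Set.range c) = (I \ cycA c) ∪ cycB c := by
  rw [Set.symmDiff_def, range_eq hc]
  ext x
  simp only [Set.mem_union, Set.mem_diff, Set.mem_union]
  constructor
  · rintro (⟨hxI, hx⟩ | ⟨(h | h), hxI⟩)
    · exact Or.inl ⟨hxI, fun h => hx (Or.inl h)⟩
    · exact absurd (cycA_subset hc h) hxI
    · exact Or.inr h
  · rintro (⟨hxI, hx⟩ | h)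
    · refine Or.inl ⟨hxI, ?_⟩
      rintro (h | h)
      · exact hx h
      · exact cycB_disj hc _ h hxI
    · exact Or.inr ⟨Or.inr h, cycB_disj hc _ h⟩

/-- distinctness helpers -/
lemma sub_ne (hc : IsBadCycle G I n c) {i j : ZMod (2*n)} (h : i - j ≠ 0) : c i ≠ c j := by
  intro he
  exact h (by rw [bc_inj hc he]; ring)

lemma one_ne_zero'' (hc : IsBadCycle G I n c) : (1 : ZMod (2*n)) ≠ 0 := one_ne_zero' (bc_n2 hc)
lemma two_ne_zero'' (hc : IsBadCycle G I n c) : (2 : ZMod (2*n)) ≠ 0 := two_ne_zero' (bc_n2 hc)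
lemma three_ne_zero'' (hc : IsBadCycle G I n c) : (3 : ZMod (2*n)) ≠ 0 := three_ne_zero' (bc_n2 hc)

/-- no chord between `c (j-1)` and `c (j+1)`. -/
lemma no_chord_two (hc : IsBadCycle G I n c) (j : ZMod (2*n)) :
    ¬ G.Adj (c (j-1)) (c (j+1)) := by
  intro h
  rcases bc_chord hc _ _ h with h' | h'
  · have : (1 : ZMod (2*n)) = 0 := by
      have := sub_eq_zero.mpr h'
      have h2 : (2 : ZMod (2*n)) ≠ 0 := two_ne_zero' (bc_n2 hc)
      -- j+1 = (j-1)+1 = j  →  1 = 0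
      have : j + 1 - (j - 1 + 1) = 0 := by rw [h']; ring
      simpa using this
    exact one_ne_zero' (bc_n2 hc) this
  · -- j - 1 = j + 2  →  3 = 0
    have h3 : j + 1 + 1 - (j - 1) = 0 := by rw [← h']; ring
    have : (3 : ZMod (2*n)) = 0 := by
      rw [show j + 1 + 1 - (j - 1) = 3 by ring] at h3; exact h3
    exact three_ne_zero' (bc_n2 hc) this


/-- claw-freeness, usable form -/
lemma claw (hcf : ClawFree G) {v a b d : V} (h1 : G.Adj v a) (h2 : G.Adj v b)
    (h3 : G.Adj v d) (hab : a ≠ b) (had : a ≠ d) (hbd : b ≠ d)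
    (nab : ¬G.Adj a b) (nad : ¬G.Adj a d) (nbd : ¬G.Adj b d) : False :=
  hcf ⟨v, a, b, d, h1, h2, h3, hab, had, hbd, nab, nad, nbd⟩

/-- A vertex of `I` off the cycle is not adjacent to any cycle vertex. -/
lemma not_adj_offcycle (hcf : ClawFree G) (hI : Indep G I) (hc : IsBadCycle G I n c)
    {x : V} (hx : x ∈ I) (hxr : x ∉ Set.range c) (j : ZMod (2*n)) : ¬ G.Adj x (c j) := by
  intro h
  by_cases hj : par j = 0
  · exact hI x hx (c j) ((bc_memI hc j).mpr hj) h
  · -- claw at c j with legs c (j-1), c (j+1), x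
    have hj1 : par (j+1) = 0 := by
      rw [par_add, par_eq_one _ hj, par_one]; decide
    have hjm : par (j-1) = 0 := by
      have : j - 1 + 1 = j := by ring
      have h2 := par_add (j-1) 1
      rw [this, par_eq_one _ hj, par_one] at h2
      have : ∀ a : ZMod 2, 1 = a + 1 → a = 0 := by decide
      exact this _ h2
    refine claw hcf (v := c j) (a := c (j-1)) (b := c (j+1)) (d := x)
      ?_ (bc_adj hc j) h.symm ?_ ?_ ?_ (no_chord_two hc j) ?_ ?_
    · have := bc_adj hc (j-1)
      rw [show j - 1 + 1 = j by ring] at this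
      exact this.symm
    · exact sub_ne hc (by
        intro h0
        have : (2 : ZMod (2*n)) = 0 := by
          rw [show (2 : ZMod (2*n)) = -(j - 1 - (j+1)) by ring, h0]; ring
        exact two_ne_zero' (bc_n2 hc) this)
    · intro he; exact hxr ⟨j-1, he⟩
    · intro he; exact hxr ⟨j+1, he⟩
    · intro ha; exact hI _ ((bc_memI hc _).mpr hjm) _ hx ha
    · intro ha; exact hI _ ((bc_memI hc _).mpr hj1) _ hx ha

lemma mem_diffA_not_range (hc : IsBadCycle G I n c) {x : V}
    (hx : x ∈ I \ cycA c) : x ∉ Set.range c := by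
  rintro ⟨j, rfl⟩
  by_cases hj : par j = 0
  · exact hx.2 ((mem_cycA_iff hc).mpr ⟨j, hj, rfl⟩)
  · exact cycB_disj hc _ ((mem_cycB_iff hc).mpr ⟨j, par_eq_one _ hj, rfl⟩) hx.1

/-- the turned set is independent -/
lemma indep_turn (hcf : ClawFree G) (hI : Indep G I) (hc : IsBadCycle G I n c) :
    Indep G ((I \ cycA c) ∪ cycB c) := by
  rintro x (hx | hx) y (hy | hy) hadj
  · exact hI x hx.1 y hy.1 hadj
  · obtain ⟨j, _, rfl⟩ := (mem_cycB_iff hc).mp hy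
    exact not_adj_offcycle hcf hI hc hx.1 (mem_diffA_not_range hc hx) j hadj
  · obtain ⟨j, _, rfl⟩ := (mem_cycB_iff hc).mp hx
    exact not_adj_offcycle hcf hI hc hy.1 (mem_diffA_not_range hc hy) j hadj.symm
  · obtain ⟨i, hi, rfl⟩ := (mem_cycB_iff hc).mp hx
    obtain ⟨j, hj, rfl⟩ := (mem_cycB_iff hc).mp hy
    rcases bc_chord hc _ _ hadj with h | h
    · rw [h, par_add, hi, par_one] at hj; exact absurd hj (by decide)
    · rw [h, par_add, hj, par_one] at hi; exact absurd hi (by decide)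

/-- decomposition of a TS step -/
lemma step_decomp {I J : Set V} {u v : V} (h1 : I \ J = {u}) (h2 : J \ I = {v}) :
    J = (I \ {u}) ∪ {v} ∧ u ∈ I ∧ u ∉ J ∧ v ∈ J ∧ v ∉ I ∧ u ≠ v := by
  have hu : u ∈ I ∧ u ∉ J := by
    have : u ∈ I \ J := h1 ▸ rfl
    exact ⟨this.1, this.2⟩
  have hv : v ∈ J ∧ v ∉ I := by
    have : v ∈ J \ I := h2 ▸ rfl
    exact ⟨this.1, this.2⟩
  refine ⟨?_, hu.1, hu.2, hv.1, hv.2, fun he => hv.2 (he ▸ hu.1)⟩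
  ext x
  simp only [Set.mem_union, Set.mem_diff, Set.mem_singleton_iff]
  constructor
  · intro hx
    by_cases hxI : x ∈ I
    · left
      refine ⟨hxI, fun he => ?_⟩
      subst he; exact hu.2 hx
    · right
      have : x ∈ J \ I := ⟨hx, hxI⟩
      rw [h2] at this; exact this
  · rintro (⟨hxI, hxu⟩ | rfl)
    · by_contra hxJ
      have : x ∈ I \ J := ⟨hxI, hxJ⟩
      rw [h1] at this; exact hxu this
    · exact hv.1

/-- `v` (the vertex a token moved to) is not on the cycle. -/
lemma v_not_range {I₁ : Set V} {u v : V} (hc : IsBadCycle G I n c)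
    (hI₁ : Indep G I₁) (hI₁eq : I₁ = (I \ {u}) ∪ {v}) (hvI : v ∉ I) :
    v ∉ Set.range c := by
  rintro ⟨j, rfl⟩
  have hvmem : c j ∈ I₁ := by rw [hI₁eq]; exact Or.inr rfl
  by_cases hj : par j = 0
  · exact hvI ((bc_memI hc j).mpr hj)
  · -- both c (j-1), c (j+1) are in I; at least one is ≠ u, hence in I₁; adjacency contradiction
    have hj1 : par (j+1) = 0 := by rw [par_add, par_eq_one _ hj, par_one]; decide
    have hjm : par (j-1) = 0 := by
      have h2 := par_add (j-1) 1
      rw [show j - 1 + 1 = j by ring, par_eq_one _ hj, par_one] at h2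
      have : ∀ a : ZMod 2, 1 = a + 1 → a = 0 := by decide
      exact this _ h2
    have hne : c (j-1) ≠ c (j+1) := sub_ne hc (by
      intro h0
      have : (2 : ZMod (2*n)) = 0 := by
        rw [show (2 : ZMod (2*n)) = -(j - 1 - (j+1)) by ring, h0]; ring
      exact two_ne_zero' (bc_n2 hc) this)
    by_cases hum : c (j-1) = u
    · -- use c (j+1)
      have hmem : c (j+1) ∈ I₁ := by
        rw [hI₁eq]
        exact Or.inl ⟨(bc_memI hc _).mpr hj1, fun he => hne (hum.trans he.symm)⟩
      exact hI₁ _ hvmem _ hmem (bc_adj hc j)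
    · have hmem : c (j-1) ∈ I₁ := by
        rw [hI₁eq]
        exact Or.inl ⟨(bc_memI hc _).mpr hjm, hum⟩
      have hadj : G.Adj (c j) (c (j-1)) := by
        have := bc_adj hc (j-1)
        rw [show j - 1 + 1 = j by ring] at this
        exact this.symm
      exact hI₁ _ hvmem _ hmem hadj

/-- the cycle-neighbors of `v` are among `c (j₀-1), c j₀, c (j₀+1)` where `u = c j₀`. -/
lemma v_nbrs (hcf : ClawFree G) {I₁ : Set V} {v : V} {j₀ : ZMod (2*n)}
    (hc : IsBadCycle G I n c) (hI₁ : Indep G I₁)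
    (hI₁eq : I₁ = (I \ {c j₀}) ∪ {v}) (hj₀ : par j₀ = 0) (hvI : v ∉ I)
    (hvr : v ∉ Set.range c) :
    ∀ j, G.Adj v (c j) → j = j₀ ∨ j = j₀ + 1 ∨ j = j₀ - 1 := by
  intro j h
  have hvmem : v ∈ I₁ := by rw [hI₁eq]; exact Or.inr rfl
  by_cases hj : par j = 0
  · left
    by_contra hne
    have : c j ∈ I₁ := by
      rw [hI₁eq]
      exact Or.inl ⟨(bc_memI hc j).mpr hj, fun he => hne (bc_inj hc he)⟩
    exact hI₁ _ hvmem _ this h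
  · right
    by_contra hne
    push_neg at hne
    obtain ⟨hne1, hnem⟩ := hne
    have hj1 : par (j+1) = 0 := by rw [par_add, par_eq_one _ hj, par_one]; decide
    have hjm : par (j-1) = 0 := by
      have h2 := par_add (j-1) 1
      rw [show j - 1 + 1 = j by ring, par_eq_one _ hj, par_one] at h2
      have : ∀ a : ZMod 2, 1 = a + 1 → a = 0 := by decide
      exact this _ h2
    have hne2 : c (j-1) ≠ c (j+1) := sub_ne hc (by
      intro h0
      have : (2 : ZMod (2*n)) = 0 := by
        rw [show (2 : ZMod (2*n)) = -(j - 1 - (j+1)) by ring, h0]; ring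
      exact two_ne_zero' (bc_n2 hc) this)
    have hm_ne : c (j-1) ≠ c j₀ := by
      intro he
      have h' := bc_inj hc he
      exact hne1 (by rw [← h']; ring)
    have h1_ne : c (j+1) ≠ c j₀ := by
      intro he
      have h' := bc_inj hc he
      exact hnem (by rw [← h']; ring)
    have hmm : c (j-1) ∈ I₁ := by
      rw [hI₁eq]; exact Or.inl ⟨(bc_memI hc _).mpr hjm, hm_ne⟩
    have hm1 : c (j+1) ∈ I₁ := by
      rw [hI₁eq]; exact Or.inl ⟨(bc_memI hc _).mpr hj1, h1_ne⟩
    have hadjm : G.Adj (c j) (c (j-1)) := by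
      have := bc_adj hc (j-1)
      rw [show j - 1 + 1 = j by ring] at this
      exact this.symm
    exact claw hcf (v := c j) (a := c (j-1)) (b := c (j+1)) (d := v)
      hadjm (bc_adj hc j) h.symm hne2
      (fun he => hvr ⟨j-1, he⟩) (fun he => hvr ⟨j+1, he⟩)
      (no_chord_two hc j)
      (fun ha => hI₁ _ hmm _ hvmem ha)
      (fun ha => hI₁ _ hm1 _ hvmem ha)


/-- rotating a bad cycle by an even amount -/
lemma rotate_badcycle (hc : IsBadCycle G I n c) {j₀ : ZMod (2*n)} (hj₀ : par j₀ = 0) :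
    IsBadCycle G I n (fun j => c (j + j₀)) ∧
    Set.range (fun j => c (j + j₀)) = Set.range c ∧
    cycB (fun j => c (j + j₀)) = cycB c := by
  have hn1 : 1 ≤ n := by have := bc_n2 hc; omega
  have hb : IsBadCycle G I n (fun j => c (j + j₀)) := by
    refine ⟨bc_n2 hc, ?_, ?_, ?_, ?_⟩
    · intro a b h
      simp only at h
      exact add_right_cancel (bc_inj hc h)
    · intro j
      have := bc_adj hc (j + j₀)
      simpa [add_right_comm] using this
    · intro i j h
      simp only at h
      rcases bc_chord hc _ _ h with h' | h'
      · left; linear_combination h'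
      · right; linear_combination h'
    · intro j
      simp only
      rw [bc_memI hc (j + j₀), par_add, hj₀, add_zero]
      exact (even_val_iff hn1 j).symm
  refine ⟨hb, ?_, ?_⟩
  · ext x
    constructor
    · rintro ⟨j, rfl⟩; exact ⟨j + j₀, rfl⟩
    · rintro ⟨j, rfl⟩; exact ⟨j - j₀, by simp [sub_add_cancel]⟩
  · ext x
    rw [mem_cycB_iff hb, mem_cycB_iff hc]
    constructor
    · rintro ⟨j, hj, rfl⟩
      exact ⟨j + j₀, by rw [par_add, hj₀, add_zero]; exact hj, rfl⟩
    · rintro ⟨j, hj, rfl⟩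
      refine ⟨j - j₀, ?_, by simp [sub_add_cancel]⟩
      show par (j - j₀) = 1
      rw [show j - j₀ = j + (-j₀) by ring, par_add, par_neg, hj₀, add_zero]
      exact hj

/-- reversing a bad cycle -/
lemma reverse_badcycle (hc : IsBadCycle G I n c) :
    IsBadCycle G I n (fun j => c (-j)) ∧
    Set.range (fun j => c (-j)) = Set.range c ∧
    cycB (fun j => c (-j)) = cycB c := by
  have hn1 : 1 ≤ n := by have := bc_n2 hc; omega
  have hb : IsBadCycle G I n (fun j => c (-j)) := by
    refine ⟨bc_n2 hc, ?_, ?_, ?_, ?_⟩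
    · intro a b h
      simp only at h
      exact neg_injective (bc_inj hc h)
    · intro j
      have := bc_adj hc (-j - 1)
      rw [show -j - 1 + 1 = -j by ring] at this
      have h2 : G.Adj (c (-j)) (c (-j-1)) := this.symm
      simpa [show -(j+1) = -j - 1 by ring] using h2
    · intro i j h
      simp only at h
      rcases bc_chord hc _ _ h with h' | h'
      · right; linear_combination h'
      · left; linear_combination h'
    · intro j
      simp only
      rw [bc_memI hc (-j), par_neg]
      exact (even_val_iff hn1 j).symm
  refine ⟨hb, ?_, ?_⟩
  · ext x
    constructor
    · rintro ⟨j, rfl⟩; exact ⟨-j, rfl⟩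
    · rintro ⟨j, rfl⟩; exact ⟨-j, by simp⟩
  · ext x
    rw [mem_cycB_iff hb, mem_cycB_iff hc]
    constructor
    · rintro ⟨j, hj, rfl⟩
      exact ⟨-j, by rw [par_neg]; exact hj, rfl⟩
    · rintro ⟨j, hj, rfl⟩
      exact ⟨-j, by rw [par_neg]; exact hj, by simp⟩


lemma par_zero : par (0 : ZMod (2*n)) = 0 := map_zero _

/-- the cycle indexed by naturals -/
def fc (c : ZMod (2*n) → V) (m : ℕ) : V := c ((m : ℕ) : ZMod (2*n))

lemma fc_zero : fc c 0 = c 0 := by simp [fc]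

lemma fc_one : fc c 1 = c 1 := by simp [fc]

lemma fc_adj (hc : IsBadCycle G I n c) (m : ℕ) : G.Adj (fc c m) (fc c (m+1)) := by
  have := bc_adj hc ((m : ℕ) : ZMod (2*n))
  unfold fc
  simpa [Nat.cast_add, Nat.cast_one] using this

lemma fc_memI (hc : IsBadCycle G I n c) (m : ℕ) : fc c m ∈ I ↔ Even m := by
  unfold fc
  rw [hc.2.2.2.2, even_val_natCast (by have := bc_n2 hc; omega)]

lemma fc_inj (hc : IsBadCycle G I n c) {a b : ℕ} (ha : a < 2*n) (hb : b < 2*n)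
    (h : fc c a = fc c b) : a = b := by
  have := bc_inj hc h
  exact (natCast_eq_natCast_iff' (by have := bc_n2 hc; omega) ha hb).mp this

lemma fc_chord (hc : IsBadCycle G I n c) {a b : ℕ} (ha : a < 2*n) (hb : b < 2*n)
    (h : G.Adj (fc c a) (fc c b)) :
    b = a + 1 ∨ a = b + 1 ∨ (b = 0 ∧ a + 1 = 2*n) ∨ (a = 0 ∧ b + 1 = 2*n) := by
  have hn1 : 1 ≤ n := by have := bc_n2 hc; omega
  rcases bc_chord hc _ _ h with h' | h'
  · have hcast : ((b : ℕ) : ZMod (2*n)) = ((a+1 : ℕ) : ZMod (2*n)) := by push_cast; exact h'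
    by_cases he : a + 1 = 2*n
    · have : ((b : ℕ) : ZMod (2*n)) = ((0 : ℕ) : ZMod (2*n)) := by
        rw [hcast, he]; simp [natCast_2n]
      have := (natCast_eq_natCast_iff' hn1 hb (by omega)).mp this
      exact Or.inr (Or.inr (Or.inl ⟨this, he⟩))
    · exact Or.inl ((natCast_eq_natCast_iff' hn1 hb (by omega)).mp hcast)
  · have hcast : ((a : ℕ) : ZMod (2*n)) = ((b+1 : ℕ) : ZMod (2*n)) := by push_cast; exact h'
    by_cases he : b + 1 = 2*n
    · have : ((a : ℕ) : ZMod (2*n)) = ((0 : ℕ) : ZMod (2*n)) := by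
        rw [hcast, he]; simp [natCast_2n]
      have := (natCast_eq_natCast_iff' hn1 ha (by omega)).mp this
      exact Or.inr (Or.inr (Or.inr ⟨this, he⟩))
    · exact Or.inr (Or.inl ((natCast_eq_natCast_iff' hn1 ha (by omega)).mp hcast))

lemma memA_rep (hc : IsBadCycle G I n c) {x : V} :
    x ∈ cycA c ↔ ∃ r, r < n ∧ x = fc c (2*r) := by
  haveI : NeZero (2*n) := ⟨by have := bc_n2 hc; omega⟩
  constructor
  · intro hx
    obtain ⟨j, hj, rfl⟩ := (mem_cycA_iff hc).mp hx
    have heven : Even j.val := (even_val_iff (by have := bc_n2 hc; omega) j).mpr hj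
    obtain ⟨r, hr⟩ := heven
    have hlt : j.val < 2*n := ZMod.val_lt j
    refine ⟨r, by omega, ?_⟩
    have hval : ((j.val : ℕ) : ZMod (2*n)) = j := ZMod.natCast_rightInverse j
    unfold fc
    rw [show 2*r = j.val by omega, hval]
  · rintro ⟨r, hr, rfl⟩
    refine (mem_cycA_iff hc).mpr ⟨_, ?_, rfl⟩
    rw [par_natCast]
    rw [show ((2*r : ℕ) : ZMod 2) = ((0:ℕ) : ZMod 2) from by
      rw [ZMod.natCast_eq_natCast_iff]; exact (by omega : (2*r) % 2 = 0 % 2)]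
    simp

lemma memB_rep (hc : IsBadCycle G I n c) {x : V} :
    x ∈ cycB c ↔ ∃ r, r < n ∧ x = fc c (2*r+1) := by
  haveI : NeZero (2*n) := ⟨by have := bc_n2 hc; omega⟩
  constructor
  · intro hx
    obtain ⟨j, hj, rfl⟩ := (mem_cycB_iff hc).mp hx
    have hodd : ¬ Even j.val := by
      intro h
      rw [even_val_iff (by have := bc_n2 hc; omega)] at h
      rw [h] at hj; exact one_ne_zero hj.symm
    have hlt : j.val < 2*n := ZMod.val_lt j
    rw [Nat.even_iff] at hodd
    obtain ⟨r, hr⟩ : ∃ r, j.val = 2*r + 1 := ⟨j.val / 2, by omega⟩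
    refine ⟨r, by omega, ?_⟩
    have hval : ((j.val : ℕ) : ZMod (2*n)) = j := ZMod.natCast_rightInverse j
    unfold fc
    rw [show 2*r+1 = j.val by omega, hval]
  · rintro ⟨r, hr, rfl⟩
    refine (mem_cycB_iff hc).mpr ⟨_, ?_, rfl⟩
    rw [par_natCast]
    rw [show ((2*r+1 : ℕ) : ZMod 2) = ((1:ℕ) : ZMod 2) from by
      rw [ZMod.natCast_eq_natCast_iff]; exact (by omega : (2*r+1) % 2 = 1 % 2)]
    simp

lemma cycB_subset_range : cycB c ⊆ Set.range c := by
  rintro x ⟨j, _, rfl⟩; exact ⟨j, rfl⟩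

lemma cycA_subset_range : cycA c ⊆ Set.range c := by
  rintro x ⟨j, _, rfl⟩; exact ⟨j, rfl⟩


set_option maxHeartbeats 1000000 in
/-- Main sliding construction: if the token on `c 0` can escape to `v` with
`v` adjacent to `c 1` but not to `c (-1)`, the cycle can be turned. -/
lemma turn_of_escape (hcf : ClawFree G) (hI : Indep G I) (hc : IsBadCycle G I n c)
    {I₁ : Set V} {v : V}
    (hI₁ : Indep G I₁) (hI₁eq : I₁ = (I \ {c 0}) ∪ {v}) (hvI : v ∉ I)
    (huv : G.Adj (c 0) v) (hv1 : G.Adj v (c 1)) (hvm : ¬ G.Adj v (c (-1))) :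
    TSReach G I ((I \ cycA c) ∪ cycB c) := by
  have hn2 := bc_n2 hc
  have hn1 : 1 ≤ n := by omega
  have hA0 : c 0 ∈ cycA c := (mem_cycA_iff hc).mpr ⟨0, par_zero, rfl⟩
  have hvr : v ∉ Set.range c := v_not_range hc hI₁ hI₁eq hvI
  have hnbrs := v_nbrs (j₀ := 0) hcf hc hI₁ (by simpa using hI₁eq) par_zero hvI hvr
  have hnbrs2 : ∀ m : ℕ, m < 2*n → G.Adj v (fc c m) → m = 0 ∨ m = 1 := by
    intro m hm h
    rcases hnbrs _ h with h0 | h1 | hm1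
    · left
      have : ((m:ℕ) : ZMod (2*n)) = ((0:ℕ) : ZMod (2*n)) := by simpa using h0
      exact (natCast_eq_natCast_iff' hn1 hm (by omega)).mp this
    · right
      have : ((m:ℕ) : ZMod (2*n)) = ((1:ℕ) : ZMod (2*n)) := by simpa using h1
      exact (natCast_eq_natCast_iff' hn1 hm (by omega)).mp this
    · exfalso
      unfold fc at h
      rw [hm1, show (0 : ZMod (2*n)) - 1 = -1 by ring] at h
      exact hvm h
  -- the intermediate token sets
  let S : ℕ → Set V := fun t => {x | (x ∈ I ∧ x ∉ cycA c) ∨ x = v ∨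
    (∃ r, 1 ≤ r ∧ r < n - t ∧ x = fc c (2*r)) ∨
    (∃ r, n - t ≤ r ∧ r < n ∧ x = fc c (2*r+1))}
  have hmemS : ∀ t x, x ∈ S t ↔ ((x ∈ I ∧ x ∉ cycA c) ∨ x = v ∨
      (∃ r, 1 ≤ r ∧ r < n - t ∧ x = fc c (2*r)) ∨
      (∃ r, n - t ≤ r ∧ r < n ∧ x = fc c (2*r+1))) := fun _ _ => Iff.rfl
  -- nonadjacency helpers
  have hIAv : ∀ x, x ∈ I ∧ x ∉ cycA c → ¬ G.Adj x v := by
    intro x hx hadj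
    have hx1 : x ∈ I₁ := by
      rw [hI₁eq]; exact Or.inl ⟨hx.1, fun he => hx.2 (by rw [he]; exact hA0)⟩
    exact hI₁ x hx1 v (by rw [hI₁eq]; exact Or.inr rfl) hadj
  have hIAc : ∀ x, x ∈ I ∧ x ∉ cycA c → ∀ m : ℕ, ¬ G.Adj x (fc c m) := by
    intro x hx m
    exact not_adj_offcycle hcf hI hc hx.1 (mem_diffA_not_range hc ⟨hx.1, hx.2⟩) _
  have hvA : ∀ r : ℕ, 1 ≤ r → r < n → ¬ G.Adj v (fc c (2*r)) := by
    intro r h1 h2 hadj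
    rcases hnbrs2 (2*r) (by omega) hadj with h | h <;> omega
  have hvB : ∀ r : ℕ, 1 ≤ r → r < n → ¬ G.Adj v (fc c (2*r+1)) := by
    intro r h1 h2 hadj
    rcases hnbrs2 (2*r+1) (by omega) hadj with h | h <;> omega
  -- independence of all intermediate sets
  have hSind : ∀ t, t ≤ n - 1 → Indep G (S t) := by
    intro t ht x hx y hy hadj
    rw [hmemS] at hx hy
    rcases hx with hx | hx | ⟨r, hr1, hr2, hx⟩ | ⟨r, hr1, hr2, hx⟩ <;>
      rcases hy with hy | hy | ⟨s, hs1, hs2, hy⟩ | ⟨s, hs1, hs2, hy⟩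
    · exact hI x hx.1 y hy.1 hadj
    · subst hy; exact hIAv x hx hadj
    · subst hy; exact hIAc x hx _ hadj
    · subst hy; exact hIAc x hx _ hadj
    · subst hx; exact hIAv y hy hadj.symm
    · subst hx; subst hy; exact hadj.ne rfl
    · subst hx; subst hy; exact hvA s hs1 (by omega) hadj
    · subst hx; subst hy; exact hvB s (by omega) hs2 hadj
    · subst hx; exact hIAc y hy _ hadj.symm
    · subst hx; subst hy; exact hvA r hr1 (by omega) hadj.symm
    · subst hx; subst hy
      rcases fc_chord hc (by omega) (by omega) hadj with h | h | ⟨h, h'⟩ | ⟨h, h'⟩ <;> omega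
    · subst hx; subst hy
      rcases fc_chord hc (by omega) (by omega) hadj with h | h | ⟨h, h'⟩ | ⟨h, h'⟩ <;> omega
    · subst hx; exact hIAc y hy _ hadj.symm
    · subst hx; subst hy; exact hvB r (by omega) hr2 hadj.symm
    · subst hx; subst hy
      rcases fc_chord hc (by omega) (by omega) hadj with h | h | ⟨h, h'⟩ | ⟨h, h'⟩ <;> omega
    · subst hx; subst hy
      rcases fc_chord hc (by omega) (by omega) hadj with h | h | ⟨h, h'⟩ | ⟨h, h'⟩ <;> omega
  -- membership facts about cycle vertices
  have hfcA : ∀ r : ℕ, r < n → fc c (2*r) ∈ cycA c := by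
    intro r hr; exact (memA_rep hc).mpr ⟨r, hr, rfl⟩
  have hfcB : ∀ r : ℕ, r < n → fc c (2*r+1) ∈ cycB c := by
    intro r hr; exact (memB_rep hc).mpr ⟨r, hr, rfl⟩
  have hfcAI : ∀ r : ℕ, fc c (2*r) ∈ I := by
    intro r; exact (fc_memI hc _).mpr ⟨r, by ring⟩
  have hfcBI : ∀ r : ℕ, fc c (2*r+1) ∉ I := by
    intro r h
    rcases (fc_memI hc _).mp h with ⟨s, hs⟩; omega
  have hfcv : ∀ m : ℕ, fc c m ≠ v := by
    intro m h; exact hvr ⟨_, h⟩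
  -- the initial step: slide the token from c 0 to v
  have hstep0 : TSStep G I (S 0) := by
    refine ⟨hI, hSind 0 (by omega), c 0, v, huv, ?_, ?_⟩
    · rw [Set.eq_singleton_iff_unique_mem]
      constructor
      · refine ⟨(bc_memI hc 0).mpr par_zero, ?_⟩
        rw [hmemS]
        rintro (⟨_, h⟩ | h | ⟨r, hr1, hr2, h⟩ | ⟨r, hr1, hr2, h⟩)
        · exact h hA0
        · exact hvr ⟨0, h⟩
        · have h' : fc c 0 = fc c (2*r) := by rw [fc_zero]; exact h
          have := fc_inj hc (by omega) (by omega) h'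
          omega
        · omega
      · rintro y ⟨hyI, hyS⟩
        rw [hmemS] at hyS
        by_cases hyA : y ∈ cycA c
        · obtain ⟨r, hr, rfl⟩ := (memA_rep hc).mp hyA
          rcases Nat.eq_zero_or_pos r with rfl | hr1
          · exact fc_zero
          · exact absurd (Or.inr (Or.inr (Or.inl ⟨r, hr1, by omega, rfl⟩))) hyS
        · exact absurd (Or.inl ⟨hyI, hyA⟩) hyS
    · rw [Set.eq_singleton_iff_unique_mem]
      refine ⟨⟨by rw [hmemS]; exact Or.inr (Or.inl rfl), hvI⟩, ?_⟩
      rintro y ⟨hyS, hyI⟩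
      rw [hmemS] at hyS
      rcases hyS with hy | hy | ⟨r, hr1, hr2, hy⟩ | ⟨r, hr1, hr2, hy⟩
      · exact absurd hy.1 hyI
      · exact hy
      · exact absurd (hy ▸ hfcAI r) hyI
      · omega
  -- intermediate steps
  have hstepT : ∀ t, t + 1 ≤ n - 1 → TSStep G (S t) (S (t+1)) := by
    intro t ht
    refine ⟨hSind t (by omega), hSind (t+1) (by omega),
      fc c (2*(n-t-1)), fc c (2*(n-t-1)+1), fc_adj hc _, ?_, ?_⟩
    · rw [Set.eq_singleton_iff_unique_mem]
      constructor
      · constructor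
        · rw [hmemS]; exact Or.inr (Or.inr (Or.inl ⟨n-t-1, by omega, by omega, rfl⟩))
        · rw [hmemS]
          rintro (⟨_, h⟩ | h | ⟨r, hr1, hr2, h⟩ | ⟨r, hr1, hr2, h⟩)
          · exact h (hfcA _ (by omega))
          · exact hfcv _ h
          · have := fc_inj hc (by omega) (by omega) h; omega
          · have := fc_inj hc (by omega) (by omega) h; omega
      · rintro y ⟨hyS, hyN⟩
        rw [hmemS] at hyS hyN
        rcases hyS with hy | hy | ⟨r, hr1, hr2, hy⟩ | ⟨r, hr1, hr2, hy⟩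
        · exact absurd (Or.inl hy) hyN
        · exact absurd (Or.inr (Or.inl hy)) hyN
        · rcases Nat.lt_or_ge r (n - t - 1) with h' | h'
          · exact absurd (Or.inr (Or.inr (Or.inl ⟨r, hr1, by omega, hy⟩))) hyN
          · have : r = n - t - 1 := by omega
            rw [hy, this]
        · exact absurd (Or.inr (Or.inr (Or.inr ⟨r, by omega, hr2, hy⟩))) hyN
    · rw [Set.eq_singleton_iff_unique_mem]
      constructor
      · constructor
        · rw [hmemS]; exact Or.inr (Or.inr (Or.inr ⟨n-t-1, by omega, by omega, rfl⟩))
        · rw [hmemS]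
          rintro (⟨h, _⟩ | h | ⟨r, hr1, hr2, h⟩ | ⟨r, hr1, hr2, h⟩)
          · exact hfcBI _ h
          · exact hfcv _ h
          · have := fc_inj hc (by omega) (by omega) h; omega
          · have := fc_inj hc (by omega) (by omega) h; omega
      · rintro y ⟨hyS, hyN⟩
        rw [hmemS] at hyS hyN
        rcases hyS with hy | hy | ⟨r, hr1, hr2, hy⟩ | ⟨r, hr1, hr2, hy⟩
        · exact absurd (Or.inl hy) hyN
        · exact absurd (Or.inr (Or.inl hy)) hyN
        · exact absurd (Or.inr (Or.inr (Or.inl ⟨r, hr1, by omega, hy⟩))) hyN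
        · rcases Nat.lt_or_ge r (n - t) with h' | h'
          · have : r = n - t - 1 := by omega
            rw [hy, this]
          · exact absurd (Or.inr (Or.inr (Or.inr ⟨r, by omega, hr2, hy⟩))) hyN
  -- final step: slide v to c 1
  have hstepF : TSStep G (S (n-1)) ((I \ cycA c) ∪ cycB c) := by
    refine ⟨hSind (n-1) le_rfl, indep_turn hcf hI hc, v, c 1, ?_, ?_, ?_⟩
    · exact hv1
    · rw [Set.eq_singleton_iff_unique_mem]
      constructor
      · constructor
        · rw [hmemS]; exact Or.inr (Or.inl rfl)
        · rintro (⟨hv', _⟩ | hv')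
          · exact hvI hv'
          · exact hvr (cycB_subset_range hv')
      · rintro y ⟨hyS, hyN⟩
        rw [hmemS] at hyS
        rcases hyS with hy | hy | ⟨r, hr1, hr2, hy⟩ | ⟨r, hr1, hr2, hy⟩
        · exact absurd (Or.inl ⟨hy.1, hy.2⟩) hyN
        · exact hy
        · omega
        · exact absurd (Or.inr (hy ▸ hfcB r hr2)) hyN
    · rw [Set.eq_singleton_iff_unique_mem]
      constructor
      · constructor
        · exact Or.inr ((mem_cycB_iff hc).mpr ⟨1, par_one, rfl⟩)
        · rw [hmemS]
          rintro (⟨h1, _⟩ | h1 | ⟨r, hr1, hr2, h1⟩ | ⟨r, hr1, hr2, h1⟩)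
          · rw [bc_memI hc 1, par_one] at h1; exact one_ne_zero h1
          · exact hvr ⟨1, h1⟩
          · have h' : fc c 1 = fc c (2*r) := by rw [fc_one]; exact h1
            have := fc_inj hc (by omega) (by omega) h'; omega
          · have h' : fc c 1 = fc c (2*r+1) := by rw [fc_one]; exact h1
            have := fc_inj hc (by omega) (by omega) h'; omega
      · rintro y ⟨hyS, hyN⟩
        rw [hmemS] at hyN
        rcases hyS with hy | hy
        · exact absurd (Or.inl ⟨hy.1, hy.2⟩) hyN
        · obtain ⟨r, hr, rfl⟩ := (memB_rep hc).mp hy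
          rcases Nat.eq_zero_or_pos r with rfl | hr1
          · exact fc_one
          · exact absurd (Or.inr (Or.inr (Or.inr ⟨r, by omega, hr, rfl⟩))) hyN
  -- assemble the chain
  have hreach : ∀ t, t ≤ n - 1 → TSReach G I (S t) := by
    intro t
    induction t with
    | zero => intro _; exact Relation.ReflTransGen.single hstep0
    | succ k ih =>
      intro h
      exact Relation.ReflTransGen.tail (ih (by omega)) (hstepT k (by omega))
  exact Relation.ReflTransGen.tail (hreach (n-1) le_rfl) hstepF


/-- Case 1: a step not touching `A` keeps the cycle bad. -/
lemma badcycle_step (hc : IsBadCycle G I n c) {I₁ : Set V} {u v : V}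
    (hI₁eq : I₁ = (I \ {u}) ∪ {v}) (huA : u ∉ cycA c) (hvr : v ∉ Set.range c) :
    IsBadCycle G I₁ n c := by
  refine ⟨bc_n2 hc, bc_inj hc, bc_adj hc, bc_chord hc, ?_⟩
  intro j
  rw [← hc.2.2.2.2 j]
  constructor
  · intro h
    rw [hI₁eq] at h
    rcases h with ⟨h, _⟩ | h
    · exact h
    · exact absurd ⟨j, h⟩ hvr
  · intro h
    rw [hI₁eq]
    left
    refine ⟨h, fun he => ?_⟩
    have : Even (ZMod.val j) := (hc.2.2.2.2 j).mp h
    exact huA ⟨j, this, he⟩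

/-- Case 1: sliding back after turning. -/
lemma step_back (hcf : ClawFree G) (hI : Indep G I) (hc : IsBadCycle G I n c)
    {I₁ : Set V} {u v : V} (hI₁ : Indep G I₁)
    (hI₁eq : I₁ = (I \ {u}) ∪ {v}) (huI : u ∈ I) (huI₁ : u ∉ I₁) (hvI : v ∉ I)
    (huv : G.Adj u v) (huA : u ∉ cycA c) (hvr : v ∉ Set.range c) :
    TSStep G ((I₁ \ cycA c) ∪ cycB c) ((I \ cycA c) ∪ cycB c) := by
  have hc₁ : IsBadCycle G I₁ n c := badcycle_step hc hI₁eq huA hvr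
  refine ⟨indep_turn hcf hI₁ hc₁, indep_turn hcf hI hc, v, u, huv.symm, ?_, ?_⟩
  · rw [Set.eq_singleton_iff_unique_mem]
    constructor
    · refine ⟨Or.inl ⟨by rw [hI₁eq]; exact Or.inr rfl, fun h => hvr (cycA_subset_range h)⟩, ?_⟩
      rintro (⟨h, _⟩ | h)
      · exact hvI h
      · exact hvr (cycB_subset_range h)
    · rintro y ⟨hyS, hyN⟩
      rcases hyS with ⟨hy1, hy2⟩ | hy
      · rw [hI₁eq] at hy1
        rcases hy1 with ⟨h, _⟩ | h
        · exact absurd (Or.inl ⟨h, hy2⟩) hyN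
        · exact h
      · exact absurd (Or.inr hy) hyN
  · rw [Set.eq_singleton_iff_unique_mem]
    constructor
    · refine ⟨Or.inl ⟨huI, huA⟩, ?_⟩
      rintro (⟨h, _⟩ | h)
      · exact huI₁ h
      · exact cycB_disj hc _ h huI
    · rintro y ⟨hyS, hyN⟩
      rcases hyS with ⟨hy1, hy2⟩ | hy
      · by_contra hne
        refine hyN (Or.inl ⟨?_, hy2⟩)
        rw [hI₁eq]
        exact Or.inl ⟨hy1, hne⟩
      · exact absurd (Or.inr hy) hyN

/-- Case 2a: replacing `c 0` by `v` gives a bad cycle for `I₁` with the same `B`. -/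
lemma update_badcycle (hcf : ClawFree G) (hI : Indep G I) (hc : IsBadCycle G I n c)
    {I₁ : Set V} {v : V}
    (hI₁ : Indep G I₁) (hI₁eq : I₁ = (I \ {c 0}) ∪ {v}) (hvI : v ∉ I)
    (hv1 : G.Adj v (c 1)) (hvm : G.Adj v (c (-1))) :
    IsBadCycle G I₁ n (Function.update c 0 v) ∧
    cycB (Function.update c 0 v) = cycB c ∧
    symmDiff I₁ (Set.range (Function.update c 0 v)) = symmDiff I (Set.range c) := by
  have hn2 := bc_n2 hc
  have hn1 : 1 ≤ n := by omega
  haveI : NeZero (2*n) := ⟨by omega⟩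
  have h10 : (1 : ZMod (2*n)) ≠ 0 := one_ne_zero' hn2
  have hm0 : (-1 : ZMod (2*n)) ≠ 0 := by
    intro h; exact h10 (by rw [← neg_neg (1 : ZMod (2*n)), h]; ring)
  have hvr : v ∉ Set.range c := v_not_range hc hI₁ hI₁eq hvI
  have hnbrs := v_nbrs (j₀ := 0) hcf hc hI₁ (by simpa using hI₁eq) par_zero hvI hvr
  have hA0 : c 0 ∈ cycA c := (mem_cycA_iff hc).mpr ⟨0, par_zero, rfl⟩
  set c' := Function.update c 0 v with hc'
  have hcne : ∀ j : ZMod (2*n), j ≠ 0 → c' j = c j := by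
    intro j hj
    rw [hc', Function.update_apply, if_neg hj]
  have hc0 : c' 0 = v := Function.update_self 0 v c
  have hb : IsBadCycle G I₁ n c' := by
    refine ⟨hn2, ?_, ?_, ?_, ?_⟩
    · intro a b h
      by_cases ha : a = 0 <;> by_cases hb' : b = 0
      · rw [ha, hb']
      · rw [ha, hc0, hcne b hb'] at h
        exact absurd ⟨b, h.symm⟩ hvr
      · rw [hb', hc0, hcne a ha] at h
        exact absurd ⟨a, h⟩ hvr
      · rw [hcne a ha, hcne b hb'] at h
        exact bc_inj hc h
    · intro j
      by_cases hj : j = 0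
      · rw [hj, hc0, show (0 : ZMod (2*n)) + 1 = 1 by ring, hcne 1 h10]
        exact hv1
      · by_cases hj1 : j + 1 = 0
        · have : j = -1 := by linear_combination hj1
          rw [hcne j hj, hj1, hc0, this]
          exact hvm.symm
        · rw [hcne j hj, hcne _ hj1]
          exact bc_adj hc j
    · intro i j h
      by_cases hi : i = 0 <;> by_cases hj : j = 0
      · rw [hi, hj] at h
        exact absurd rfl h.ne
      · rw [hi, hc0, hcne j hj] at h
        rcases hnbrs j h with h' | h' | h'
        · exact absurd h' hj
        · left; rw [hi, h']
        · right; rw [hi, h']; ring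
      · rw [hj, hc0, hcne i hi] at h
        rcases hnbrs i h.symm with h' | h' | h'
        · exact absurd h' hi
        · right; rw [hj, h']
        · left; rw [hj, h']; ring
      · rw [hcne i hi, hcne j hj] at h
        exact bc_chord hc i j h
    · intro j
      by_cases hj : j = 0
      · rw [hj, hc0]
        constructor
        · intro _
          have : (0 : ZMod (2*n)).val = 0 := ZMod.val_zero
          rw [this]; exact Even.zero
        · intro _; rw [hI₁eq]; exact Or.inr rfl
      · rw [hcne j hj]
        rw [← hc.2.2.2.2 j]
        constructor
        · intro h
          rw [hI₁eq] at h
          rcases h with ⟨h, _⟩ | h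
          · exact h
          · exact absurd ⟨j, h⟩ hvr
        · intro h
          rw [hI₁eq]
          exact Or.inl ⟨h, fun he => hj (bc_inj hc he)⟩
  refine ⟨hb, ?_, ?_⟩
  · ext x
    rw [mem_cycB_iff hb, mem_cycB_iff hc]
    constructor
    · rintro ⟨j, hj, rfl⟩
      have hj0 : j ≠ 0 := by
        intro h; rw [h, par_zero] at hj; exact one_ne_zero hj.symm
      exact ⟨j, hj, (hcne j hj0).symm⟩
    · rintro ⟨j, hj, rfl⟩
      have hj0 : j ≠ 0 := by
        intro h; rw [h, par_zero] at hj; exact one_ne_zero hj.symm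
      exact ⟨j, hj, hcne j hj0⟩
  · rw [symmDiff_eq hb, symmDiff_eq hc]
    have hBeq : cycB c' = cycB c := by
      ext x
      rw [mem_cycB_iff hb, mem_cycB_iff hc]
      constructor
      · rintro ⟨j, hj, rfl⟩
        have hj0 : j ≠ 0 := by
          intro h; rw [h, par_zero] at hj; exact one_ne_zero hj.symm
        exact ⟨j, hj, (hcne j hj0).symm⟩
      · rintro ⟨j, hj, rfl⟩
        have hj0 : j ≠ 0 := by
          intro h; rw [h, par_zero] at hj; exact one_ne_zero hj.symm
        exact ⟨j, hj, hcne j hj0⟩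
    rw [hBeq]
    have hAeq : I₁ \ cycA c' = I \ cycA c := by
      ext x
      constructor
      · rintro ⟨hx1, hx2⟩
        rw [hI₁eq] at hx1
        rcases hx1 with ⟨hxI, hxu⟩ | hxv
        · refine ⟨hxI, fun hxA => ?_⟩
          obtain ⟨j, hj, rfl⟩ := (mem_cycA_iff hc).mp hxA
          by_cases hj0 : j = 0
          · rw [hj0] at hxu; exact hxu rfl
          · exact hx2 ((mem_cycA_iff hb).mpr ⟨j, hj, hcne j hj0⟩)
        · exfalso
          exact hx2 ((mem_cycA_iff hb).mpr ⟨0, par_zero, by rw [hc0, hxv]⟩)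
      · rintro ⟨hxI, hxA⟩
        constructor
        · rw [hI₁eq]
          exact Or.inl ⟨hxI, fun he => hxA (by rw [he]; exact hA0)⟩
        · intro hxA'
          obtain ⟨j, hj, hje⟩ := (mem_cycA_iff hb).mp hxA'
          by_cases hj0 : j = 0
          · rw [hj0, hc0] at hje
            exact hvI (hje ▸ hxI)
          · rw [hcne j hj0] at hje
            exact hxA ((mem_cycA_iff hc).mpr ⟨j, hj, hje⟩)
    rw [hAeq]


/-- a descending walk along consecutive vertices -/
def cwalk {α : Type} (H : SimpleGraph α) (g : ℕ → α) (hg : ∀ m, H.Adj (g (m+1)) (g m)) :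
    (m : ℕ) → H.Walk (g m) (g 0)
  | 0 => SimpleGraph.Walk.nil
  | (m+1) => SimpleGraph.Walk.cons (hg m) (cwalk H g hg m)

lemma cwalk_support {α : Type} (H : SimpleGraph α) (g : ℕ → α)
    (hg : ∀ m, H.Adj (g (m+1)) (g m)) (m : ℕ) :
    (cwalk H g hg m).support = (List.range (m+1)).reverse.map g := by
  induction m with
  | zero => simp [cwalk, List.range_succ]
  | succ k ih =>
    rw [show cwalk H g hg (k+1) = SimpleGraph.Walk.cons (hg k) (cwalk H g hg k) from rfl,
      SimpleGraph.Walk.support_cons, ih]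
    simp [List.range_succ]

lemma cwalk_length {α : Type} (H : SimpleGraph α) (g : ℕ → α)
    (hg : ∀ m, H.Adj (g (m+1)) (g m)) (m : ℕ) :
    (cwalk H g hg m).length = m := by
  induction m with
  | zero => rfl
  | succ k ih =>
    rw [show cwalk H g hg (k+1) = SimpleGraph.Walk.cons (hg k) (cwalk H g hg k) from rfl,
      SimpleGraph.Walk.length_cons, ih]

lemma fc_inj' (hc : IsBadCycle G I n c) {a b : ℕ} (ha : a ≤ 2*n) (hb : b ≤ 2*n)
    (h : fc c a = fc c b) : a = b ∨ (a = 0 ∧ b = 2*n) ∨ (a = 2*n ∧ b = 0) := by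
  have h2n : fc c (2*n) = fc c 0 := by
    unfold fc; rw [natCast_2n]; simp
  by_cases ha' : a = 2*n <;> by_cases hb' : b = 2*n
  · left; omega
  · rw [ha', h2n] at h
    have := fc_inj hc (by have := bc_n2 hc; omega) (by omega) h
    right; right; exact ⟨ha', this.symm⟩
  · rw [hb', h2n] at h
    have := fc_inj hc (by omega) (by have := bc_n2 hc; omega) h
    right; left; exact ⟨this, hb'⟩
  · left; exact fc_inj hc (by omega) (by omega) h

/-- A bad cycle for `J` contradicts acyclicity of `G[J ∪ B]`. -/
lemma no_resolve_self {J : Set V} (hc : IsBadCycle G J n c)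
    (hacy : (G.induce (J ∪ cycB c)).IsAcyclic) : False := by
  have hn2 := bc_n2 hc
  have hn1 : 1 ≤ n := by omega
  set T : Set V := J ∪ cycB c with hT
  have hmem : ∀ m : ℕ, fc c m ∈ T := by
    intro m
    by_cases hm : Even m
    · exact Or.inl ((fc_memI hc m).mpr hm)
    · refine Or.inr ((mem_cycB_iff hc).mpr ⟨_, ?_, rfl⟩)
      rw [par_natCast]
      rw [Nat.even_iff] at hm
      rw [show ((m : ℕ) : ZMod 2) = ((1:ℕ) : ZMod 2) from by
        rw [ZMod.natCast_eq_natCast_iff]; exact (by omega : m % 2 = 1 % 2)]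
      simp
  set H := G.induce T with hH
  have hadj : ∀ a b : ℕ, G.Adj (fc c a) (fc c b) →
      H.Adj ⟨fc c a, hmem a⟩ ⟨fc c b, hmem b⟩ := by
    intro a b h
    exact SimpleGraph.comap_adj.mpr h
  set g : ℕ → T := fun m => ⟨fc c (m+1), hmem (m+1)⟩ with hg
  have hgadj : ∀ m, H.Adj (g (m+1)) (g m) := by
    intro m
    exact (hadj (m+1) (m+2) (fc_adj hc (m+1))).symm
  have he : g (2*n - 1) = (⟨fc c 0, hmem 0⟩ : T) := by
    apply Subtype.ext
    show fc c (2*n - 1 + 1) = fc c 0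
    rw [show 2*n - 1 + 1 = 2*n by omega]
    unfold fc; rw [natCast_2n]; simp
  have he2 : g 0 = (⟨fc c 1, hmem 1⟩ : T) := rfl
  let p2 : H.Walk ⟨fc c 0, hmem 0⟩ ⟨fc c 1, hmem 1⟩ :=
    (cwalk H g hgadj (2*n - 1)).copy he he2
  have hadj01 : H.Adj ⟨fc c 0, hmem 0⟩ ⟨fc c 1, hmem 1⟩ := hadj 0 1 (fc_adj hc 0)
  let p1 : H.Walk ⟨fc c 0, hmem 0⟩ ⟨fc c 1, hmem 1⟩ :=
    SimpleGraph.Walk.cons hadj01 SimpleGraph.Walk.nil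
  have hp1 : p1.IsPath := by
    apply SimpleGraph.Walk.IsPath.mk'
    show List.Nodup [_, _]
    refine List.nodup_cons.mpr ⟨?_, List.nodup_singleton _⟩
    intro hmem'
    rw [List.mem_singleton] at hmem'
    have : fc c 0 = fc c 1 := congrArg Subtype.val hmem'
    have := fc_inj hc (by omega) (by omega) this
    omega
  have hp2 : p2.IsPath := by
    apply SimpleGraph.Walk.IsPath.mk'
    rw [show p2.support = (cwalk H g hgadj (2*n - 1)).support from
      SimpleGraph.Walk.support_copy _ he he2]
    rw [cwalk_support]
    refine List.Nodup.map_on ?_ (List.nodup_reverse.mpr List.nodup_range)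
    intro a hamem b hbmem hab
    rw [List.mem_reverse, List.mem_range] at hamem hbmem
    have : fc c (a+1) = fc c (b+1) := congrArg Subtype.val hab
    rcases fc_inj' hc (by omega) (by omega) this with h | ⟨h, _⟩ | ⟨h, _⟩ <;> omega
  rw [isAcyclic_iff_path_unique] at hacy
  have := hacy ⟨p1, hp1⟩ ⟨p2, hp2⟩
  have hlen : p1.length = p2.length := congrArg (fun q => q.val.length) this
  have h1 : p1.length = 1 := rfl
  have h2 : p2.length = 2*n - 1 := by
    show ((cwalk H g hgadj (2*n - 1)).copy he he2).length = 2*n - 1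
    rw [SimpleGraph.Walk.length_copy, cwalk_length]
  omega

end BadCycleAux

open BadCycleAux in
set_option maxHeartbeats 1000000 in
/-- A resolvable `I`-bad cycle can be turned: `I △ V(C)` is TS-reachable from `I`. -/
theorem stmt_16 {V : Type} [Fintype V] [DecidableEq V] (G : SimpleGraph V)
    (hcf : ClawFree G) (I : Set V) (hI : Indep G I)
    (n : ℕ) (c : ZMod (2*n) → V) (hc : IsBadCycle G I n c)
    (hres : Resolvable G I c) :
    TSReach G I (symmDiff I (Set.range c)) := by
  classical
  obtain ⟨I', hreach, hacy⟩ := hres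
  have hreach' : Relation.ReflTransGen (TSStep G) I I' := hreach
  suffices h : ∀ (m : ℕ) (d : ZMod (2*m) → V),
      Indep G I → IsBadCycle G I m d → cycB d = cycB c →
      TSReach G I (symmDiff I (Set.range d)) from h n c hI hc rfl
  clear hI hc
  induction hreach' using Relation.ReflTransGen.head_induction_on with
  | refl =>
    intro m d hJI hbad hB
    exfalso
    apply no_resolve_self hbad
    rw [hB]
    exact hacy
  | @head J J₁ hstep htail ih =>
    intro m d hJind hbad hB
    obtain ⟨-, hJ₁ind, u, v, huv, hd1, hd2⟩ := id hstep
    obtain ⟨hJ₁eq, huJ, huJ₁, hvJ₁, hvJ, hune⟩ := step_decomp hd1 hd2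
    by_cases huA : u ∈ cycA d
    · -- Case 2 : the moved token was on the cycle
      obtain ⟨j₀, hj₀, hj₀e⟩ := (mem_cycA_iff hbad).mp huA
      obtain ⟨hbad2, hrange2, hcycB2⟩ := rotate_badcycle hbad hj₀
      set d₂ : ZMod (2*m) → V := fun j => d (j + j₀) with hd₂
      have hu0 : d₂ 0 = u := by rw [hd₂]; show d (0 + j₀) = u; rw [zero_add]; exact hj₀e
      have hJ₁eq₂ : J₁ = (J \ {d₂ 0}) ∪ {v} := by rw [hu0]; exact hJ₁eq
      have hvr : v ∉ Set.range d₂ := v_not_range hbad2 hJ₁ind hJ₁eq₂ hvJ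
      have huv₂ : G.Adj (d₂ 0) v := by rw [hu0]; exact huv
      by_cases h1 : G.Adj v (d₂ 1) <;> by_cases hm1 : G.Adj v (d₂ (-1))
      · -- Case 2a : v is adjacent to both neighbors; replace the cycle and recurse
        obtain ⟨hbad', hB', hsym⟩ :=
          update_badcycle hcf hJind hbad2 hJ₁ind hJ₁eq₂ hvJ h1 hm1
        have hIH := ih htail m (Function.update d₂ 0 v) hJ₁ind hbad' (by rw [hB', hcycB2, hB])
        rw [hsym, hrange2] at hIH
        exact Relation.ReflTransGen.head hstep hIH
      · -- Case 2b : v adjacent only to d₂ 1; explicit turning sequence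
        have := turn_of_escape hcf hJind hbad2 hJ₁ind hJ₁eq₂ hvJ huv₂ h1 hm1
        rw [← symmDiff_eq hbad2, hrange2] at this
        exact this
      · -- Case 2c : v adjacent only to d₂ (-1); reverse the cycle first
        obtain ⟨hbad3, hrange3, hcycB3⟩ := reverse_badcycle hbad2
        set d₃ : ZMod (2*m) → V := fun j => d₂ (-j) with hd₃
        have hu0₃ : d₃ 0 = u := by rw [hd₃]; show d₂ (-0) = u; rw [neg_zero]; exact hu0
        have hJ₁eq₃ : J₁ = (J \ {d₃ 0}) ∪ {v} := by rw [hu0₃]; exact hJ₁eq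
        have huv₃ : G.Adj (d₃ 0) v := by rw [hu0₃]; exact huv
        have h1' : G.Adj v (d₃ 1) := by rw [hd₃]; exact hm1
        have hm1' : ¬ G.Adj v (d₃ (-1)) := by
          rw [hd₃]; show ¬ G.Adj v (d₂ (-(-1))); rw [neg_neg]; exact h1
        have := turn_of_escape hcf hJind hbad3 hJ₁ind hJ₁eq₃ hvJ huv₃ h1' hm1'
        rw [← symmDiff_eq hbad3, hrange3, hrange2] at this
        exact this
      · -- impossible : v adjacent to neither neighbor gives a claw at u
        exfalso
        have hadj1 : G.Adj u (d₂ 1) := by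
          have := bc_adj hbad2 0
          rw [zero_add, hu0] at this
          exact this
        have hadjm : G.Adj u (d₂ (-1)) := by
          have := bc_adj hbad2 (-1)
          rw [show (-1 : ZMod (2*m)) + 1 = 0 by ring, hu0] at this
          exact this.symm
        have hnch := no_chord_two hbad2 0
        rw [zero_sub, zero_add] at hnch
        refine claw hcf (v := u) (a := v) (b := d₂ 1) (d := d₂ (-1))
          huv hadj1 hadjm ?_ ?_ ?_ h1 hm1 ?_
        · intro he; exact hvr ⟨1, he.symm⟩
        · intro he; exact hvr ⟨-1, he.symm⟩
        · exact (sub_ne hbad2 (by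
            intro h0
            exact two_ne_zero' (bc_n2 hbad2) (by linear_combination h0)))
        · intro hadj'; exact hnch hadj'.symm
    · -- Case 1 : the moved token was off the cycle
      have hvr : v ∉ Set.range d := v_not_range hbad hJ₁ind hJ₁eq hvJ
      have hbad₁ : IsBadCycle G J₁ m d := badcycle_step hbad hJ₁eq huA hvr
      have hIH := ih htail m d hJ₁ind hbad₁ hB
      rw [symmDiff_eq hbad₁] at hIH
      have hback := step_back hcf hJind hbad hJ₁ind hJ₁eq huJ huJ₁ hvJ huv huA hvr
      rw [symmDiff_eq hbad]
      exact Relation.ReflTransGen.tail (Relation.ReflTransGen.head hstep hIH) hback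
end

section
/- Let G be a claw-free graph and let I_0, …, I_m be a TS-sequence in which every token moves at most once (i.e., for all i ≤ j, if v ∈ I_j \ I_{j+1} then v ∈ I_i). Then every connected component of G[I_0 △ I_m] is a path of odd length. -/
open SimpleGraph

theorem path_components {W : Type} [Finite W] (H : SimpleGraph W)
    (isA : W → Prop) (M : W → W) (r : W → ℕ)
    (hMM : ∀ w, M (M w) = w)
    (hMadj : ∀ w, H.Adj w (M w))
    (hMside : ∀ w, isA (M w) ↔ ¬ isA w)
    (hrM : ∀ w, r (M w) = r w)
    (hbip : ∀ w w', H.Adj w w' → (isA w ↔ ¬ isA w'))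
    (hcross : ∀ a b, H.Adj a b → isA a → b ≠ M a → r a < r b)
    (hdeg : ∀ w x y, H.Adj w x → H.Adj w y → x ≠ M w → y ≠ M w → x = y)
    (c : H.ConnectedComponent) :
    ∃ t : ℕ, 1 ≤ t ∧ Nonempty ((H.induce c.supp) ≃g pathGraph (2*t)) := by
  classical
  have hMinj : Function.Injective M := Function.LeftInverse.injective hMM
  have hsupp_adj : ∀ x y : W, x ∈ c.supp → H.Adj x y → y ∈ c.supp := by
    intro x y hx hxy
    rw [ConnectedComponent.mem_supp_iff] at hx ⊢
    rw [← hx]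
    exact (ConnectedComponent.connectedComponentMk_eq_of_adj hxy).symm
  obtain ⟨w0, hw0⟩ := c.exists_rep
  have hw0supp : w0 ∈ c.supp := hw0
  set S : Set W := {x | x ∈ c.supp ∧ isA x} with hS
  have hSne : S.Nonempty := by
    rcases Classical.em (isA w0) with h | h
    · exact ⟨w0, hw0supp, h⟩
    · exact ⟨M w0, hsupp_adj _ _ hw0supp (hMadj w0), (hMside w0).mpr h⟩
  obtain ⟨a1, ha1S, ha1max⟩ := Set.exists_max_image S r (Set.toFinite S) hSne
  -- the chain of A-vertices
  have hstep : ∀ qi : W, ∃ x : W, ((∃ y, H.Adj (M qi) y ∧ y ≠ qi) → H.Adj (M qi) x ∧ x ≠ qi) ∧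
      (¬(∃ y, H.Adj (M qi) y ∧ y ≠ qi) → x = qi) := by
    intro qi
    rcases Classical.em (∃ y, H.Adj (M qi) y ∧ y ≠ qi) with h | h
    · exact ⟨h.choose, fun _ => h.choose_spec, fun hn => absurd h hn⟩
    · exact ⟨qi, fun hy => absurd hy h, fun _ => rfl⟩
  choose step hstep1 hstep2 using hstep
  let q : ℕ → W := fun n => Nat.rec a1 (fun _ qi => step qi) n
  have hq0 : q 0 = a1 := rfl
  set E : ℕ → Prop := fun i => ∃ x, H.Adj (M (q i)) x ∧ x ≠ q i with hE
  have hqE : ∀ i, E i → H.Adj (M (q i)) (q (i+1)) ∧ q (i+1) ≠ q i := by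
    intro i h
    exact hstep1 (q i) h
  have hqnE : ∀ i, ¬ E i → q (i+1) = q i := by
    intro i h
    exact hstep2 (q i) h
  have hqA : ∀ i, isA (q i) := by
    intro i
    induction i with
    | zero => exact ha1S.2
    | succ i ih =>
      rcases Classical.em (E i) with h | h
      · have h1 := (hqE i h).1
        have h2 := hbip _ _ h1
        have h3 := hMside (q i)
        by_contra hA
        exact (h3.mp (h2.mpr hA)) ih
      · rw [hqnE i h]; exact ih
  have hqsupp : ∀ i, q i ∈ c.supp := by
    intro i
    induction i with
    | zero => exact ha1S.1
    | succ i ih =>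
      rcases Classical.em (E i) with h | h
      · exact hsupp_adj _ _ (hsupp_adj _ _ ih (hMadj (q i))) (hqE i h).1
      · rw [hqnE i h]; exact ih
  have hdec : ∀ i, E i → r (q (i+1)) < r (q i) := by
    intro i h
    obtain ⟨hadj, hne⟩ := hqE i h
    have hne' : M (q i) ≠ M (q (i+1)) := fun heq => hne (hMinj heq).symm
    have := hcross (q (i+1)) (M (q i)) hadj.symm (hqA (i+1)) hne'
    rwa [hrM] at this
  have hterm : ∃ i, ¬ E i := by
    by_contra h
    push_neg at h
    have hb : ∀ i, r (q i) + i ≤ r a1 := by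
      intro i
      induction i with
      | zero => simp [hq0]
      | succ i ih =>
        have := hdec i (h i)
        omega
    have := hb (r a1 + 1)
    omega
  haveI : DecidablePred fun i => ¬ E i := fun _ => Classical.propDecidable _
  set s := Nat.find hterm with hs
  have hsE : ∀ i, i < s → E i := fun i hi => not_not.mp (Nat.find_min hterm hi)
  have hsnE : ¬ E s := Nat.find_spec hterm
  have hmono : ∀ j, j ≤ s → ∀ i, i < j → r (q j) < r (q i) := by
    intro j
    induction j with
    | zero => omega
    | succ j ih =>
      intro hj i hi
      have hd := hdec j (hsE j (by omega))
      rcases Nat.lt_or_ge i j with h | h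
      · exact lt_trans hd (ih (by omega) i h)
      · have : i = j := by omega
        subst this; exact hd
  have hqinj : ∀ i j, i ≤ s → j ≤ s → q i = q j → i = j := by
    intro i j hi hj heq
    rcases Nat.lt_trichotomy i j with h | h | h
    · have := hmono j hj i h; rw [heq] at this; omega
    · exact h
    · have := hmono i hi j h; rw [heq] at this; omega
  -- neighbor characterizations
  have hN0 : ∀ x, H.Adj (q 0) x → x = M (q 0) := by
    intro x hx
    by_contra hne
    have hxB : ¬ isA x := (hbip _ _ hx).mp (hqA 0)
    have hrx := hcross (q 0) x hx (hqA 0) hne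
    have hMxS : M x ∈ S := by
      refine ⟨hsupp_adj _ _ (hsupp_adj _ _ (hqsupp 0) hx) (hMadj x), (hMside x).mpr hxB⟩
    have := ha1max (M x) hMxS
    rw [hrM] at this
    rw [hq0] at hrx
    omega
  have hNq : ∀ i, i + 1 ≤ s → ∀ x, H.Adj (q (i+1)) x → x = M (q (i+1)) ∨ x = M (q i) := by
    intro i hi x hx
    rcases Classical.em (x = M (q (i+1))) with h1 | h1
    · exact Or.inl h1
    · obtain ⟨hadj, hne⟩ := hqE i (hsE i (by omega))
      have hy : H.Adj (q (i+1)) (M (q i)) := hadj.symm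
      have hyne : M (q i) ≠ M (q (i+1)) := fun heq => hne (hMinj heq).symm
      exact Or.inr (hdeg (q (i+1)) x (M (q i)) hx hy h1 hyne)
  have hNM : ∀ i, i < s → ∀ x, H.Adj (M (q i)) x → x = q i ∨ x = q (i+1) := by
    intro i hi x hx
    rcases Classical.em (x = q i) with h1 | h1
    · exact Or.inl h1
    · obtain ⟨hadj, hne⟩ := hqE i (hsE i hi)
      have h1' : x ≠ M (M (q i)) := by rwa [hMM]
      have hne' : q (i+1) ≠ M (M (q i)) := by rwa [hMM]
      exact Or.inr (hdeg (M (q i)) x (q (i+1)) hx hadj h1' hne')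
  have hNMs : ∀ x, H.Adj (M (q s)) x → x = q s := by
    intro x hx
    by_contra hne
    exact hsnE ⟨x, hx, hne⟩
  -- coverage
  set P : Set W := {x | ∃ i, i ≤ s ∧ (x = q i ∨ x = M (q i))} with hP
  have hclosed : ∀ x ∈ P, ∀ y, H.Adj x y → y ∈ P := by
    rintro x ⟨i, hi, hx | hx⟩ y hy <;> subst hx
    · cases i with
      | zero => exact ⟨0, by omega, Or.inr (hN0 y hy)⟩
      | succ i =>
        rcases hNq i hi y hy with h | h
        · exact ⟨i+1, hi, Or.inr h⟩
        · exact ⟨i, by omega, Or.inr h⟩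
    · rcases Nat.lt_or_ge i s with h | h
      · rcases hNM i h y hy with h' | h'
        · exact ⟨i, hi, Or.inl h'⟩
        · exact ⟨i+1, by omega, Or.inl h'⟩
      · have his : i = s := le_antisymm hi h
        subst his
        exact ⟨s, le_refl _, Or.inl (hNMs y hy)⟩
  have hwalk : ∀ (u v : W), u ∈ P → H.Walk u v → v ∈ P := by
    intro u v hu pw
    induction pw with
    | nil => exact hu
    | cons h pw ih => exact ih (hclosed _ hu _ h)
  have hcov : ∀ v ∈ c.supp, v ∈ P := by
    intro v hv
    have h1 : H.connectedComponentMk (q 0) = c := hqsupp 0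
    have h2 : H.connectedComponentMk v = c := hv
    have hreach : H.Reachable (q 0) v := ConnectedComponent.exact (h1.trans h2.symm)
    exact hwalk _ _ ⟨0, by omega, Or.inl rfl⟩ hreach.some
  -- the enumeration
  set p : ℕ → W := fun k => if Even k then q (k/2) else M (q (k/2)) with hpdef
  have hpeven : ∀ k : ℕ, Even k → p k = q (k/2) := by
    intro k h
    show (if Even k then q (k/2) else M (q (k/2))) = q (k/2)
    rw [if_pos h]
  have hpodd : ∀ k : ℕ, ¬ Even k → p k = M (q (k/2)) := by
    intro k h
    show (if Even k then q (k/2) else M (q (k/2))) = M (q (k/2))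
    rw [if_neg h]
  have hpsupp : ∀ k, p k ∈ c.supp := by
    intro k
    rcases Classical.em (Even k) with h | h
    · rw [hpeven _ h]; exact hqsupp _
    · rw [hpodd _ h]; exact hsupp_adj _ _ (hqsupp _) (hMadj _)
  refine ⟨s+1, by omega, ?_⟩
  have hfin : ∀ k : Fin (2*(s+1)), (k : ℕ)/2 ≤ s := fun k => by
    have := k.2; omega
  let g : Fin (2*(s+1)) → ↥(c.supp) := fun k => ⟨p k.1, hpsupp k.1⟩
  have hgval : ∀ k : Fin (2*(s+1)), (g k : W) = p k.1 := fun _ => rfl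
  have ginj : Function.Injective g := by
    intro k l h
    have hpp : p k.1 = p l.1 := congrArg Subtype.val h
    have hk2 := hfin k; have hl2 := hfin l
    rcases Nat.even_or_odd k.1 with hk | hk <;> rcases Nat.even_or_odd l.1 with hl | hl
    · rw [hpeven _ hk, hpeven _ hl] at hpp
      have hd := hqinj _ _ hk2 hl2 hpp
      have e1 := Nat.even_iff.mp hk; have e2 := Nat.even_iff.mp hl
      exact Fin.ext (by omega)
    · rw [hpeven _ hk, hpodd _ (Nat.not_even_iff_odd.mpr hl)] at hpp
      have h1 : isA (M (q (l.1/2))) := hpp ▸ hqA (k.1/2)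
      exact absurd (hqA _) ((hMside _).mp h1)
    · rw [hpodd _ (Nat.not_even_iff_odd.mpr hk), hpeven _ hl] at hpp
      have h1 : isA (M (q (k.1/2))) := hpp.symm ▸ hqA (l.1/2)
      exact absurd (hqA _) ((hMside _).mp h1)
    · rw [hpodd _ (Nat.not_even_iff_odd.mpr hk), hpodd _ (Nat.not_even_iff_odd.mpr hl)] at hpp
      have hd := hqinj _ _ hk2 hl2 (hMinj hpp)
      have e1 := Nat.odd_iff.mp hk; have e2 := Nat.odd_iff.mp hl
      exact Fin.ext (by omega)
  have gsurj : Function.Surjective g := by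
    rintro ⟨v, hv⟩
    obtain ⟨i, hi, h | h⟩ := hcov v hv
    · refine ⟨⟨2*i, by omega⟩, Subtype.ext ?_⟩
      show p (2*i) = v
      rw [hpeven _ ⟨i, by omega⟩]
      have h2 : (2*i)/2 = i := by omega
      rw [h2]; exact h.symm
    · refine ⟨⟨2*i+1, by omega⟩, Subtype.ext ?_⟩
      show p (2*i+1) = v
      rw [hpodd _ (by rw [Nat.even_iff]; omega)]
      have h2 : (2*i+1)/2 = i := by omega
      rw [h2]; exact h.symm
  have hfor : ∀ i j, i ≤ s → j ≤ s → H.Adj (q i) (M (q j)) → j = i ∨ i = j + 1 := by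
    intro i j hi hj hadj
    cases i with
    | zero =>
      left
      exact hqinj j 0 hj (by omega) (hMinj (hN0 _ hadj))
    | succ i =>
      rcases hNq i hi _ hadj with h | h
      · left; exact hqinj j (i+1) hj hi (hMinj h)
      · right
        have := hqinj j i hj (by omega) (hMinj h)
        omega
  have hcons : ∀ k l : Fin (2*(s+1)), (l:ℕ) = (k:ℕ) + 1 → H.Adj (p k.1) (p l.1) := by
    intro k l h
    rcases Nat.even_or_odd k.1 with hk | hk
    · have ek := Nat.even_iff.mp hk
      have hl : ¬ Even l.1 := by rw [Nat.even_iff]; omega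
      rw [hpeven _ hk, hpodd _ hl]
      have hd : l.1/2 = k.1/2 := by omega
      rw [hd]; exact hMadj _
    · have ok := Nat.odd_iff.mp hk
      have hl : Even l.1 := by rw [Nat.even_iff]; omega
      rw [hpodd _ (Nat.not_even_iff_odd.mpr hk), hpeven _ hl]
      have hi : k.1/2 < s := by have := l.2; omega
      have hd : l.1/2 = k.1/2 + 1 := by omega
      rw [hd]
      exact (hqE _ (hsE _ hi)).1
  have hadj_iff : ∀ k l : Fin (2*(s+1)),
      H.Adj (p k.1) (p l.1) ↔ ((k:ℕ) + 1 = (l:ℕ) ∨ (l:ℕ) + 1 = (k:ℕ)) := by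
    intro k l
    constructor
    · intro hadj
      rcases Nat.even_or_odd k.1 with hk | hk <;> rcases Nat.even_or_odd l.1 with hl | hl
      · rw [hpeven _ hk, hpeven _ hl] at hadj
        exact absurd (hqA _) ((hbip _ _ hadj).mp (hqA _))
      · rw [hpeven _ hk, hpodd _ (Nat.not_even_iff_odd.mpr hl)] at hadj
        have ek := Nat.even_iff.mp hk; have ol := Nat.odd_iff.mp hl
        rcases hfor _ _ (hfin k) (hfin l) hadj with h | h <;> omega
      · rw [hpodd _ (Nat.not_even_iff_odd.mpr hk), hpeven _ hl] at hadj
        have ok := Nat.odd_iff.mp hk; have el := Nat.even_iff.mp hl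
        rcases hfor _ _ (hfin l) (hfin k) hadj.symm with h | h <;> omega
      · rw [hpodd _ (Nat.not_even_iff_odd.mpr hk), hpodd _ (Nat.not_even_iff_odd.mpr hl)] at hadj
        have hx : ¬ isA (M (q (k.1/2))) := fun hA => (hMside _).mp hA (hqA _)
        have hy : ¬ isA (M (q (l.1/2))) := fun hA => (hMside _).mp hA (hqA _)
        exact absurd ((hbip _ _ hadj).mpr hy) hx
    · intro h
      rcases h with h | h
      · exact hcons k l h.symm
      · exact (hcons l k h.symm).symm
  have hbij : Function.Bijective g := ⟨ginj, gsurj⟩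
  let e := Equiv.ofBijective g hbij
  refine ⟨{ toEquiv := e.symm, map_rel_iff' := ?_ }⟩
  intro a b
  show (pathGraph (2*(s+1))).Adj (e.symm a) (e.symm b) ↔ (H.induce c.supp).Adj a b
  rw [pathGraph_adj]
  have key := hadj_iff (e.symm a) (e.symm b)
  have ha' : p ((e.symm a) : Fin (2*(s+1))).1 = (a : W) :=
    congrArg Subtype.val (e.apply_symm_apply a)
  have hb' : p ((e.symm b) : Fin (2*(s+1))).1 = (b : W) :=
    congrArg Subtype.val (e.apply_symm_apply b)
  rw [ha', hb'] at key
  exact ⟨fun hh => key.mpr hh, fun hh => key.mp hh⟩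

/-- If in a TS-sequence every token moves at most once, then every component of
`G[I_0 △ I_m]` is a path of odd length. -/
theorem stmt_19 {V : Type} [Fintype V] [DecidableEq V] (G : SimpleGraph V)
    (hcf : ClawFree G) (m : ℕ) (f : ℕ → Set V)
    (hstep : ∀ i < m, TSStep G (f i) (f (i+1)))
    (honce : ∀ i j : ℕ, i ≤ j → j < m → ∀ v : V, v ∈ f j → v ∉ f (j+1) → v ∈ f i)
    (comp : (G.induce (symmDiff (f 0) (f m))).ConnectedComponent) :
    ∃ t : ℕ, 1 ≤ t ∧
      Nonempty (((G.induce (symmDiff (f 0) (f m))).induce comp.supp) ≃g pathGraph (2*t)) := by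
  classical
  rcases Nat.eq_zero_or_pos m with hm0 | hm1
  · subst hm0
    obtain ⟨v, -⟩ := comp.exists_rep
    obtain ⟨x, hx⟩ := v
    rw [symmDiff_self] at hx
    simp at hx
  -- m ≥ 1
  revert comp
  have hind : ∀ i, i ≤ m → Indep G (f i) := by
    intro i hi
    rcases Nat.lt_or_ge i m with h | h
    · exact (hstep i h).1
    · have him : i = m := le_antisymm hi h
      have h2 := (hstep (m-1) (by omega)).2.1
      rw [show m-1+1 = m by omega] at h2
      rw [him]
      exact h2
  obtain ⟨-, -, u0, v0, -⟩ := hstep 0 hm1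
  have hsd : ∀ i, ∃ u v : V, i < m →
      (G.Adj u v ∧ f i \ f (i+1) = {u} ∧ f (i+1) \ f i = {v}) := by
    intro i
    rcases Nat.lt_or_ge i m with h | h
    · obtain ⟨-, -, u, v, h3⟩ := hstep i h
      exact ⟨u, v, fun _ => h3⟩
    · exact ⟨u0, u0, fun hh => absurd hh (by omega)⟩
  choose uu vv hsd using hsd
  have hrem : ∀ i, i < m → ∀ x, x ∈ f i → x ∉ f (i+1) → x = uu i := by
    intro i hi x h1 h2
    have h := ((hsd i hi).2.1)
    have : x ∈ ({uu i} : Set V) := h ▸ (⟨h1, h2⟩ : x ∈ f i \ f (i+1))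
    exact this
  have hadd : ∀ i, i < m → ∀ x, x ∈ f (i+1) → x ∉ f i → x = vv i := by
    intro i hi x h1 h2
    have h := ((hsd i hi).2.2)
    have : x ∈ ({vv i} : Set V) := h ▸ (⟨h1, h2⟩ : x ∈ f (i+1) \ f i)
    exact this
  have huu : ∀ i, i < m → uu i ∈ f i ∧ uu i ∉ f (i+1) := by
    intro i hi
    have h := ((hsd i hi).2.1)
    have : uu i ∈ f i \ f (i+1) := h ▸ (rfl : uu i ∈ ({uu i} : Set V))
    exact this
  have hvv : ∀ i, i < m → vv i ∈ f (i+1) ∧ vv i ∉ f i := by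
    intro i hi
    have h := ((hsd i hi).2.2)
    have : vv i ∈ f (i+1) \ f i := h ▸ (rfl : vv i ∈ ({vv i} : Set V))
    exact this
  have hadj_uv : ∀ i, i < m → G.Adj (uu i) (vv i) := fun i hi => (hsd i hi).1
  have L0 : ∀ i, i < m → ∀ x, x ∈ f i → x ∉ f (i+1) → x ∈ f 0 :=
    fun i hi x h1 h2 => honce 0 i (by omega) hi x h1 h2
  have L1 : ∀ i, i < m → ∀ x, x ∈ f (i+1) → x ∉ f i → x ∉ f 0 := by
    intro i hi x h1 h2 hx0
    have hxv : x = vv i := hadd i hi x h1 h2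
    have hu0 : uu i ∈ f 0 := L0 i hi _ (huu i hi).1 (huu i hi).2
    have hadjx : G.Adj (uu i) x := by rw [hxv]; exact hadj_uv i hi
    exact (hind 0 (by omega) _ hu0 _ hx0) hadjx
  have L2 : ∀ x, x ∉ f 0 → ∀ i, x ∈ f i → ∀ j, i ≤ j → j ≤ m → x ∈ f j := by
    intro x hx0 i hi j
    induction j with
    | zero => intro h1 _; rw [show i = 0 by omega] at hi; exact hi
    | succ j ih =>
      intro h1 h2
      rcases Nat.lt_or_ge j i with h | h
      · rw [show i = j + 1 by omega] at hi; exact hi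
      · have hj : x ∈ f j := ih h (by omega)
        by_contra hnx
        exact hx0 (L0 j (by omega) x hj hnx)
  have L3 : ∀ x, x ∈ f 0 → ∀ i, x ∉ f i → ∀ j, i ≤ j → j ≤ m → x ∉ f j := by
    intro x hx0 i hi j
    induction j with
    | zero => intro h1 _; rw [show i = 0 by omega] at hi; exact hi
    | succ j ih =>
      intro h1 h2
      rcases Nat.lt_or_ge j i with h | h
      · rw [show i = j + 1 by omega] at hi; exact hi
      · have hj : x ∉ f j := ih h (by omega)
        intro hx
        exact (L1 j (by omega) x hx hj) hx0
  -- removal time σ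
  have hsig : ∀ a : V, ∃ k, a ∈ f 0 → a ∉ f m → (k < m ∧ a ∈ f k ∧ a ∉ f (k+1)) := by
    intro a
    rcases Classical.em (a ∈ f 0 ∧ a ∉ f m) with ⟨h0, hm⟩ | h
    · haveI : DecidablePred (fun j => a ∉ f (j+1)) := fun _ => Classical.propDecidable _
      have hex : ∃ j, a ∉ f (j+1) := ⟨m-1, by rw [show m-1+1 = m by omega]; exact hm⟩
      refine ⟨Nat.find hex, fun _ _ => ⟨?_, ?_, Nat.find_spec hex⟩⟩
      · by_contra hge
        push_neg at hge
        have h2 : ¬ (a ∉ f ((m-1)+1)) := Nat.find_min hex (by omega)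
        rw [show m-1+1 = m by omega] at h2
        exact h2 hm
      · rcases Nat.eq_zero_or_pos (Nat.find hex) with h | h
        · rw [h]; exact h0
        · have h2 : ¬ (a ∉ f ((Nat.find hex - 1)+1)) := Nat.find_min hex (by omega)
          rw [show Nat.find hex - 1 + 1 = Nat.find hex by omega] at h2
          exact not_not.mp h2
    · exact ⟨0, fun h0 hm => absurd ⟨h0, hm⟩ h⟩
  choose σ hσ using hsig
  -- addition time τ
  have htau : ∀ b : V, ∃ k, b ∉ f 0 → b ∈ f m → (k < m ∧ b ∉ f k ∧ b ∈ f (k+1)) := by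
    intro b
    rcases Classical.em (b ∉ f 0 ∧ b ∈ f m) with ⟨h0, hm⟩ | h
    · haveI : DecidablePred (fun j => b ∈ f (j+1)) := fun _ => Classical.propDecidable _
      have hex : ∃ j, b ∈ f (j+1) := ⟨m-1, by rw [show m-1+1 = m by omega]; exact hm⟩
      refine ⟨Nat.find hex, fun _ _ => ⟨?_, ?_, Nat.find_spec hex⟩⟩
      · by_contra hge
        push_neg at hge
        have h2 : ¬ (b ∈ f ((m-1)+1)) := Nat.find_min hex (by omega)
        rw [show m-1+1 = m by omega] at h2
        exact h2 hm
      · rcases Nat.eq_zero_or_pos (Nat.find hex) with h | h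
        · rw [h]; exact h0
        · have h2 : ¬ (b ∈ f ((Nat.find hex - 1)+1)) := Nat.find_min hex (by omega)
          rw [show Nat.find hex - 1 + 1 = Nat.find hex by omega] at h2
          exact h2
    · exact ⟨0, fun h0 hm => absurd ⟨h0, hm⟩ h⟩
  choose τ hτ using htau
  set A : V → Prop := fun x => x ∈ f 0 ∧ x ∉ f m with hA
  set B : V → Prop := fun x => x ∈ f m ∧ x ∉ f 0 with hB
  have hA1 : ∀ a, A a → σ a < m ∧ a ∈ f (σ a) ∧ a ∉ f (σ a + 1) := fun a h => hσ a h.1 h.2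
  have hB1 : ∀ b, B b → τ b < m ∧ b ∉ f (τ b) ∧ b ∈ f (τ b + 1) := fun b h => hτ b h.2 h.1
  have hA2 : ∀ a, A a → a = uu (σ a) := by
    intro a ha
    obtain ⟨h1, h2, h3⟩ := hA1 a ha
    exact hrem (σ a) h1 a h2 h3
  have hB2 : ∀ b, B b → b = vv (τ b) := by
    intro b hb
    obtain ⟨h1, h2, h3⟩ := hB1 b hb
    exact hadd (τ b) h1 b h3 h2
  have huniq_rem : ∀ x, A x → ∀ j, j < m → x ∈ f j → x ∉ f (j+1) → j = σ x := by
    intro x hx j hj h1 h2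
    obtain ⟨hσm, hσ1, hσ2⟩ := hA1 x hx
    rcases lt_trichotomy j (σ x) with h | h | h
    · exact absurd hσ1 (L3 x hx.1 (j+1) h2 (σ x) (by omega) (by omega))
    · exact h
    · exact absurd h1 (L3 x hx.1 (σ x + 1) hσ2 j (by omega) (by omega))
  have huniq_add : ∀ x, B x → ∀ j, j < m → x ∉ f j → x ∈ f (j+1) → j = τ x := by
    intro x hx j hj h1 h2
    obtain ⟨hτm, hτ1, hτ2⟩ := hB1 x hx
    rcases lt_trichotomy j (τ x) with h | h | h
    · exact absurd (L2 x hx.2 (j+1) h2 (τ x) (by omega) (by omega)) hτ1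
    · exact h
    · exact absurd (L2 x hx.2 (τ x + 1) hτ2 j (by omega) (by omega)) h1
  have MA : ∀ a, A a → ∀ j, j ≤ m → (a ∈ f j ↔ j ≤ σ a) := by
    intro a ha j hj
    obtain ⟨hσm, hσ1, hσ2⟩ := hA1 a ha
    constructor
    · intro h
      by_contra hgt
      exact (L3 a ha.1 (σ a + 1) hσ2 j (by omega) hj) h
    · intro h
      by_contra hn
      exact (L3 a ha.1 j hn (σ a) h (by omega)) hσ1
  have MB : ∀ b, B b → ∀ j, j ≤ m → (b ∈ f j ↔ τ b < j) := by
    intro b hb j hj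
    obtain ⟨hτm, hτ1, hτ2⟩ := hB1 b hb
    constructor
    · intro h
      by_contra hle
      exact hτ1 (L2 b hb.2 j h (τ b) (by omega) (by omega))
    · intro h
      exact L2 b hb.2 (τ b + 1) hτ2 j (by omega) hj
  have hA3 : ∀ a, A a → B (vv (σ a)) ∧ G.Adj a (vv (σ a)) ∧ τ (vv (σ a)) = σ a := by
    intro a ha
    obtain ⟨hσm, hσ1, hσ2⟩ := hA1 a ha
    obtain ⟨hv1, hv2⟩ := hvv (σ a) hσm
    have hnf0 : vv (σ a) ∉ f 0 := L1 (σ a) hσm _ hv1 hv2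
    have hfm : vv (σ a) ∈ f m := L2 _ hnf0 (σ a + 1) hv1 m (by omega) (le_refl m)
    refine ⟨⟨hfm, hnf0⟩, ?_, (huniq_add _ ⟨hfm, hnf0⟩ (σ a) hσm hv2 hv1).symm⟩
    have := hadj_uv (σ a) hσm
    rwa [← hA2 a ha] at this
  have hB3 : ∀ b, B b → A (uu (τ b)) ∧ G.Adj (uu (τ b)) b ∧ σ (uu (τ b)) = τ b := by
    intro b hb
    obtain ⟨hτm, hτ1, hτ2⟩ := hB1 b hb
    obtain ⟨hu1, hu2⟩ := huu (τ b) hτm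
    have hf0 : uu (τ b) ∈ f 0 := L0 (τ b) hτm _ hu1 hu2
    have hnfm : uu (τ b) ∉ f m := L3 _ hf0 (τ b + 1) hu2 m (by omega) (le_refl m)
    refine ⟨⟨hf0, hnfm⟩, ?_, (huniq_rem _ ⟨hf0, hnfm⟩ (τ b) hτm hu1 hu2).symm⟩
    have := hadj_uv (τ b) hτm
    rwa [← hB2 b hb] at this
  have hsiginj : ∀ a a', A a → A a' → σ a = σ a' → a = a' := by
    intro a a' ha ha' h
    rw [hA2 a ha, hA2 a' ha', h]
  have hcrossV : ∀ a b, A a → B b → G.Adj a b → σ a ≤ τ b ∧ (σ a = τ b → b = vv (σ a)) := by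
    intro a b ha hb hadj
    obtain ⟨hσm, -, -⟩ := hA1 a ha
    constructor
    · by_contra hlt
      push_neg at hlt
      have hbf : b ∈ f (σ a) := (MB b hb (σ a) (by omega)).mpr hlt
      have haf : a ∈ f (σ a) := (MA a ha (σ a) (by omega)).mpr (le_refl _)
      exact (hind (σ a) (by omega) _ haf _ hbf) hadj
    · intro he
      rw [he, ← hB2 b hb]
  -- instantiate the abstract lemma
  set D : Set V := symmDiff (f 0) (f m) with hD
  have hDmem : ∀ w : ↥D, A (w : V) ∨ B (w : V) := by
    intro w
    rcases Set.mem_symmDiff.mp w.2 with h | h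
    · exact Or.inl ⟨h.1, h.2⟩
    · exact Or.inr ⟨h.1, h.2⟩
  have hABmem : ∀ x : V, (A x ∨ B x) → x ∈ D := by
    intro x h
    rcases h with h | h
    · exact Set.mem_symmDiff.mpr (Or.inl ⟨h.1, h.2⟩)
    · exact Set.mem_symmDiff.mpr (Or.inr ⟨h.1, h.2⟩)
  set H : SimpleGraph ↥D := G.induce D with hH
  have hHadj : ∀ w w' : ↥D, H.Adj w w' ↔ G.Adj (w : V) (w' : V) := fun _ _ => Iff.rfl
  set isA : ↥D → Prop := fun w => (w : V) ∈ f 0 with hisA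
  have hAiff : ∀ w : ↥D, isA w ↔ A (w : V) := by
    intro w
    constructor
    · intro h
      rcases hDmem w with h' | h'
      · exact h'
      · exact absurd h h'.2
    · exact fun h => h.1
  have hBiff : ∀ w : ↥D, ¬ isA w ↔ B (w : V) := by
    intro w
    constructor
    · intro h
      rcases hDmem w with h' | h'
      · exact absurd h'.1 h
      · exact h'
    · exact fun h => h.2
  set rr : ↥D → ℕ := fun w => if (w : V) ∈ f 0 then σ (w : V) else τ (w : V) with hrr
  have hrrA : ∀ w : ↥D, isA w → rr w = σ (w : V) := by
    intro w h
    show (if (w : V) ∈ f 0 then σ (w : V) else τ (w : V)) = σ (w : V)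
    rw [if_pos h]
  have hrrB : ∀ w : ↥D, ¬ isA w → rr w = τ (w : V) := by
    intro w h
    show (if (w : V) ∈ f 0 then σ (w : V) else τ (w : V)) = τ (w : V)
    rw [if_neg h]
  have hMex : ∀ w : ↥D, ∃ w' : ↥D, (isA w → (w' : V) = vv (σ (w : V))) ∧
      (¬ isA w → (w' : V) = uu (τ (w : V))) := by
    intro w
    rcases Classical.em (isA w) with h | h
    · have hAw := (hAiff w).mp h
      refine ⟨⟨vv (σ (w : V)), hABmem _ (Or.inr (hA3 _ hAw).1)⟩, fun _ => rfl, fun hn => absurd h hn⟩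
    · have hBw := (hBiff w).mp h
      refine ⟨⟨uu (τ (w : V)), hABmem _ (Or.inl (hB3 _ hBw).1)⟩, fun hn => absurd hn h, fun _ => rfl⟩
  choose M hM1 hM2 using hMex
  have hMB : ∀ w : ↥D, isA w → B ((M w : V)) := by
    intro w h
    rw [hM1 w h]
    exact (hA3 _ ((hAiff w).mp h)).1
  have hMA : ∀ w : ↥D, ¬ isA w → A ((M w : V)) := by
    intro w h
    rw [hM2 w h]
    exact (hB3 _ ((hBiff w).mp h)).1
  have hMside : ∀ w : ↥D, isA (M w) ↔ ¬ isA w := by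
    intro w
    rcases Classical.em (isA w) with h | h
    · constructor
      · intro hA'
        exact absurd hA' (hMB w h).2
      · intro hn
        exact absurd h hn
    · exact iff_of_true (hMA w h).1 h
  have hMM : ∀ w : ↥D, M (M w) = w := by
    intro w
    apply Subtype.ext
    rcases Classical.em (isA w) with h | h
    · have hMw : ¬ isA (M w) := fun hA' => absurd hA' (hMB w h).2
      rw [hM2 (M w) hMw, hM1 w h]
      have hAw := (hAiff w).mp h
      rw [(hA3 _ hAw).2.2]
      exact (hA2 _ hAw).symm
    · have hMw : isA (M w) := (hMA w h).1
      rw [hM1 (M w) hMw, hM2 w h]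
      have hBw := (hBiff w).mp h
      rw [(hB3 _ hBw).2.2]
      exact (hB2 _ hBw).symm
  have hMadj : ∀ w : ↥D, H.Adj w (M w) := by
    intro w
    rw [hHadj]
    rcases Classical.em (isA w) with h | h
    · rw [hM1 w h]
      exact (hA3 _ ((hAiff w).mp h)).2.1
    · rw [hM2 w h]
      exact ((hB3 _ ((hBiff w).mp h)).2.1).symm
  have hrM : ∀ w : ↥D, rr (M w) = rr w := by
    intro w
    rcases Classical.em (isA w) with h | h
    · have hMw : ¬ isA (M w) := fun hA' => absurd hA' (hMB w h).2
      rw [hrrB _ hMw, hrrA _ h, hM1 w h]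
      exact (hA3 _ ((hAiff w).mp h)).2.2
    · have hMw : isA (M w) := (hMA w h).1
      rw [hrrA _ hMw, hrrB _ h, hM2 w h]
      exact (hB3 _ ((hBiff w).mp h)).2.2
  have hbipW : ∀ w w' : ↥D, H.Adj w w' → (isA w ↔ ¬ isA w') := by
    intro w w' hadj
    rw [hHadj] at hadj
    constructor
    · intro h h'
      exact (hind 0 (by omega) _ h _ h') hadj
    · intro h
      by_contra hn
      have hBw := (hBiff w).mp hn
      have hBw' := (hBiff w').mp h
      exact (hind m (le_refl m) _ hBw.1 _ hBw'.1) hadj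
  have hcrossW : ∀ a b : ↥D, H.Adj a b → isA a → b ≠ M a → rr a < rr b := by
    intro a b hadj ha hne
    have hb : ¬ isA b := (hbipW a b hadj).mp ha
    rw [hHadj] at hadj
    have hAa := (hAiff a).mp ha
    have hBb := (hBiff b).mp hb
    rw [hrrA _ ha, hrrB _ hb]
    obtain ⟨hle, heq⟩ := hcrossV _ _ hAa hBb hadj
    rcases Nat.lt_or_ge (σ (a : V)) (τ (b : V)) with h | h
    · exact h
    · exfalso
      apply hne
      apply Subtype.ext
      rw [hM1 a ha]
      exact heq (by omega)
  have hdegW : ∀ w x y : ↥D, H.Adj w x → H.Adj w y → x ≠ M w → y ≠ M w → x = y := by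
    intro w x y hx hy hxM hyM
    by_contra hne
    rw [hHadj] at hx hy
    have hxMv : (x : V) ≠ (M w : V) := fun h => hxM (Subtype.ext h)
    have hyMv : (y : V) ≠ (M w : V) := fun h => hyM (Subtype.ext h)
    have hxyv : (x : V) ≠ (y : V) := fun h => hne (Subtype.ext h)
    have hMwadj : G.Adj (w : V) (M w : V) := (hHadj _ _).mp (hMadj w)
    rcases Classical.em (isA w) with h | h
    · -- leaves in f m
      have hxB := (hBiff x).mp ((hbipW w x ((hHadj _ _).mpr hx)).mp h)
      have hyB := (hBiff y).mp ((hbipW w y ((hHadj _ _).mpr hy)).mp h)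
      have hMB' := hMB w h
      refine hcf ⟨(w : V), (x : V), (y : V), (M w : V), hx, hy, hMwadj, hxyv, hxMv, hyMv, ?_, ?_, ?_⟩
      · exact hind m (le_refl m) _ hxB.1 _ hyB.1
      · exact hind m (le_refl m) _ hxB.1 _ hMB'.1
      · exact hind m (le_refl m) _ hyB.1 _ hMB'.1
    · -- leaves in f 0
      have hxA : isA x := not_not.mp (fun hn => h ((hbipW w x ((hHadj _ _).mpr hx)).mpr hn))
      have hyA : isA y := not_not.mp (fun hn => h ((hbipW w y ((hHadj _ _).mpr hy)).mpr hn))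
      have hMA' : isA (M w) := (hMA w h).1
      refine hcf ⟨(w : V), (x : V), (y : V), (M w : V), hx, hy, hMwadj, hxyv, hxMv, hyMv, ?_, ?_, ?_⟩
      · exact hind 0 (by omega) _ hxA _ hyA
      · exact hind 0 (by omega) _ hxA _ hMA'
      · exact hind 0 (by omega) _ hyA _ hMA'
  intro comp
  exact path_components H isA M rr hMM hMadj hMside hrM hbipW hcrossW hdegW comp
end
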